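/- arXiv:1105.0937 — 6 statements merged into one kernel-verified Lean document; each statement's English description precedes it below -/
import Mathlib

section
/- Let V : ℝ → [0,∞) be measurable and locally integrable, and let M be a finite-dimensional complex subspace of the space of smooth compactly supported functions ℝ → ℂ such that Q_V(ψ) < 0 for every nonzero ψ ∈ M. Then dim M ≤ 1 + ∫_ℝ |x| V(x) dx. -/
open MeasureTheory
open scoped ENNReal

/-- Quadratic form of the one-dimensional Schrödinger operator `H = -d²/dx² - V`. -/
noncomputable def schrodingerForm1D (V : ℝ → ℝ) (ψ : ℝ → ℂ) : ℝ :=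
  ∫ x : ℝ, (‖deriv ψ x‖ ^ 2 - V x * ‖ψ x‖ ^ 2)

namespace BargmannAux

open Complex

lemma cont_deriv {ψ : ℝ → ℂ} (h : ContDiff ℝ (⊤ : ℕ∞) ψ) : Continuous (deriv ψ) :=
  h.continuous_deriv (by exact_mod_cast le_top)

lemma diff_of_smooth {ψ : ℝ → ℂ} (h : ContDiff ℝ (⊤ : ℕ∞) ψ) : Differentiable ℝ ψ :=
  h.differentiable (by simp)

lemma integrable_deriv_mul {φ ψ : ℝ → ℂ}
    (hφ : ContDiff ℝ (⊤ : ℕ∞) φ) (hψ : ContDiff ℝ (⊤ : ℕ∞) ψ) (hcψ : HasCompactSupport ψ) :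
    Integrable (fun x => (starRingEnd ℂ) (deriv φ x) * deriv ψ x) := by
  apply Continuous.integrable_of_hasCompactSupport
  · exact (Complex.continuous_conj.comp (cont_deriv hφ)).mul (cont_deriv hψ)
  · apply HasCompactSupport.mul_left
    exact hcψ.deriv

lemma integrable_deriv_sq {ψ : ℝ → ℂ}
    (hψ : ContDiff ℝ (⊤ : ℕ∞) ψ) (hc : HasCompactSupport ψ) :
    Integrable (fun x => ‖deriv ψ x‖ ^ 2) := by
  apply Continuous.integrable_of_hasCompactSupport
  · exact ((cont_deriv hψ).norm).pow 2
  · exact hc.deriv.comp_left (g := fun z : ℂ => ‖z‖ ^ 2) (by simp)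

lemma integrable_V_mul {V : ℝ → ℝ} (hVloc : LocallyIntegrable V volume) {ψ : ℝ → ℂ}
    (hψ : Continuous ψ) (hc : HasCompactSupport ψ) :
    Integrable (fun x => V x * ‖ψ x‖ ^ 2) := by
  have := hVloc.integrable_smul_right_of_hasCompactSupport
    (g := fun x => ‖ψ x‖ ^ 2) ((hψ.norm).pow 2)
    (hc.comp_left (g := fun z : ℂ => ‖z‖ ^ 2) (by simp))
  simpa [smul_eq_mul] using this

lemma form_split {V : ℝ → ℝ} (hVloc : LocallyIntegrable V volume) {ψ : ℝ → ℂ}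
    (hψ : ContDiff ℝ (⊤ : ℕ∞) ψ) (hc : HasCompactSupport ψ) :
    schrodingerForm1D V ψ = (∫ x : ℝ, ‖deriv ψ x‖ ^ 2) - ∫ x : ℝ, V x * ‖ψ x‖ ^ 2 :=
  integral_sub (integrable_deriv_sq hψ hc) (integrable_V_mul hVloc hψ.continuous hc)

/-- Key evaluation bound: `|ψ(x)|² ≤ |x| ∫ |ψ'|²` for `ψ` vanishing at `0`. -/
lemma eval_sq_le {ψ : ℝ → ℂ} (hs : ContDiff ℝ (⊤ : ℕ∞) ψ) (hc : HasCompactSupport ψ)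
    (h0 : ψ 0 = 0) (x : ℝ) :
    ‖ψ x‖ ^ 2 ≤ |x| * ∫ y : ℝ, ‖deriv ψ y‖ ^ 2 := by
  rcases eq_or_ne x 0 with rfl | hx
  · simp [h0]
  have hdc : Continuous (deriv ψ) := cont_deriv hs
  have hftc : ψ x = ∫ t in (0 : ℝ)..x, deriv ψ t := by
    rw [intervalIntegral.integral_deriv_eq_sub
      (fun t _ => (diff_of_smooth hs) t) (hdc.intervalIntegrable 0 x), h0,
      sub_zero]
  set s : Set ℝ := Set.uIoc 0 x with hs_def
  have hvol : (volume s).toReal = |x| := by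
    rw [hs_def, Set.uIoc, Real.volume_Ioc, ENNReal.toReal_ofReal]
    · rw [max_sub_min_eq_abs, sub_zero]
    · rw [sub_nonneg]; exact min_le_max
  set g : ℝ → ℝ := fun t => ‖deriv ψ t‖ with hg_def
  have hgc : Continuous g := hdc.norm
  have hgint : Integrable g := hgc.integrable_of_hasCompactSupport hc.deriv.norm
  have hg2int : Integrable (fun t => g t ^ 2) := integrable_deriv_sq hs hc
  set I : ℝ := ∫ t in s, g t with hI_def
  set J : ℝ := ∫ t in s, g t ^ 2 with hJ_def
  have hI : ‖ψ x‖ ≤ I := by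
    rw [hftc]
    exact intervalIntegral.norm_integral_le_integral_norm_uIoc
  have hI0 : 0 ≤ I := setIntegral_nonneg measurableSet_uIoc fun t _ => norm_nonneg _
  have hJ0 : 0 ≤ J := setIntegral_nonneg measurableSet_uIoc fun t _ => sq_nonneg _
  have hJle : J ≤ ∫ y : ℝ, ‖deriv ψ y‖ ^ 2 :=
    setIntegral_le_integral hg2int (Filter.Eventually.of_forall fun t => sq_nonneg _)
  have hx0 : (0 : ℝ) < |x| := abs_pos.mpr hx
  set c : ℝ := I / |x| with hc_def
  have key : 0 ≤ J - 2 * c * I + c ^ 2 * |x| := by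
    have h1 : 0 ≤ ∫ t in s, (g t - c) ^ 2 :=
      setIntegral_nonneg measurableSet_uIoc fun t _ => sq_nonneg _
    have h2 : (∫ t in s, (g t - c) ^ 2) = J - 2 * c * I + c ^ 2 * |x| := by
      have hexp : (fun t => (g t - c) ^ 2)
          = fun t => (g t ^ 2 - (2 * c) * g t) + c ^ 2 := by
        funext t; ring
      have hA1 : IntegrableOn (fun t : ℝ => g t ^ 2) s volume := hg2int.integrableOn
      have hA2 : IntegrableOn (fun t : ℝ => 2 * c * g t) s volume := by
        exact (hgint.const_mul (2 * c)).integrableOn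
      have hA : IntegrableOn (fun t : ℝ => g t ^ 2 - 2 * c * g t) s volume := by
        exact hA1.sub hA2
      have hvolfin : volume s < ⊤ := by
        rw [hs_def, Set.uIoc, Real.volume_Ioc]; exact ENNReal.ofReal_lt_top
      have hB : IntegrableOn (fun _ : ℝ => c ^ 2) s volume :=
        integrableOn_const hvolfin.ne
      rw [hexp, integral_add hA hB, integral_sub hA1 hA2, MeasureTheory.integral_const_mul,
        setIntegral_const, smul_eq_mul, measureReal_def, hvol]
      ring
    linarith [h2 ▸ h1]
  have hcx : c * |x| = I := div_mul_cancel₀ _ hx0.ne'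
  have hCS : I ^ 2 ≤ |x| * J := by nlinarith [mul_nonneg hx0.le key, hcx]
  calc ‖ψ x‖ ^ 2 ≤ I ^ 2 := by nlinarith [hI, norm_nonneg (ψ x)]
    _ ≤ |x| * J := hCS
    _ ≤ |x| * ∫ y : ℝ, ‖deriv ψ y‖ ^ 2 := by nlinarith [hJle, hx0.le]

lemma integral_conj_mul_self (g : ℝ → ℂ) :
    (∫ x : ℝ, (starRingEnd ℂ) (g x) * g x) = ((∫ x : ℝ, ‖g x‖ ^ 2 : ℝ) : ℂ) := by
  have h1 : (fun x => (starRingEnd ℂ) (g x) * g x) = fun x => ((‖g x‖ ^ 2 : ℝ) : ℂ) := by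
    funext t
    rw [← Complex.normSq_eq_conj_mul_self]
    norm_cast
    simp [Complex.sq_norm]
  rw [h1]
  exact integral_ofReal

/-- The Dirichlet inner product `∫ conj ψ' φ'` on a space of smooth compactly supported
functions vanishing at `0`. -/
noncomputable def dirichletCore (M₀ : Submodule ℂ (ℝ → ℂ))
    (hsm : ∀ ψ : ↥M₀, ContDiff ℝ (⊤ : ℕ∞) (↑ψ : ℝ → ℂ))
    (hcs : ∀ ψ : ↥M₀, HasCompactSupport (↑ψ : ℝ → ℂ))
    (hmem0 : ∀ ψ : ↥M₀, (↑ψ : ℝ → ℂ) 0 = 0) :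
    InnerProductSpace.Core ℂ ↥M₀ := by
  -- derivative helpers
  have hdiffAt : ∀ (ψ : ↥M₀) (x : ℝ), DifferentiableAt ℝ (↑ψ : ℝ → ℂ) x :=
    fun ψ x => BargmannAux.diff_of_smooth (hsm ψ) x
  have hD_add : ∀ φ ψ : ↥M₀, deriv (↑(φ + ψ) : ℝ → ℂ) = deriv (↑φ : ℝ → ℂ) + deriv (↑ψ : ℝ → ℂ) := by
    intro φ ψ
    funext x
    have hco : (↑(φ + ψ) : ℝ → ℂ) = fun y => (↑φ : ℝ → ℂ) y + (↑ψ : ℝ → ℂ) y := rfl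
    rw [hco, deriv_fun_add (hdiffAt φ x) (hdiffAt ψ x)]
    rfl
  have hD_smul : ∀ (r : ℂ) (ψ : ↥M₀),
      deriv (↑(r • ψ) : ℝ → ℂ) = fun x => r * deriv (↑ψ : ℝ → ℂ) x := by
    intro r ψ
    funext x
    have hco : (↑(r • ψ) : ℝ → ℂ) = fun y => r • (↑ψ : ℝ → ℂ) y := rfl
    rw [hco, deriv_fun_const_smul r (hdiffAt ψ x)]
    rfl
  -- inner product structure induced by the Dirichlet form
  have hval : ∀ ψ : ↥M₀,
      (∫ x : ℝ, (starRingEnd ℂ) (deriv (↑ψ : ℝ → ℂ) x) * deriv (↑ψ : ℝ → ℂ) x)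
        = ((∫ y : ℝ, ‖deriv (↑ψ : ℝ → ℂ) y‖ ^ 2 : ℝ) : ℂ) :=
    fun ψ => integral_conj_mul_self _
  exact
  { inner := fun φ ψ => ∫ x : ℝ, (starRingEnd ℂ) (deriv (↑φ : ℝ → ℂ) x) * deriv (↑ψ : ℝ → ℂ) x
    conj_inner_symm := by
      intro φ ψ
      show (starRingEnd ℂ) (∫ x : ℝ, (starRingEnd ℂ) (deriv (↑ψ : ℝ → ℂ) x) * deriv (↑φ : ℝ → ℂ) x)
        = ∫ x : ℝ, (starRingEnd ℂ) (deriv (↑φ : ℝ → ℂ) x) * deriv (↑ψ : ℝ → ℂ) x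
      rw [← integral_conj]
      apply integral_congr_ae
      filter_upwards with t
      simp only [map_mul, RingHomCompTriple.comp_apply, RingHom.id_apply, Complex.conj_conj]
      ring
    re_inner_nonneg := by
      intro ψ
      show 0 ≤ RCLike.re (∫ x : ℝ, (starRingEnd ℂ) (deriv (↑ψ : ℝ → ℂ) x) * deriv (↑ψ : ℝ → ℂ) x)
      rw [hval ψ]
      simp only [RCLike.re_to_complex, Complex.ofReal_re]
      exact integral_nonneg fun y => sq_nonneg _
    add_left := by
      intro x y z
      have hrw : (fun t => (starRingEnd ℂ) (deriv (↑(x + y) : ℝ → ℂ) t) * deriv (↑z : ℝ → ℂ) t)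
          = fun t => (starRingEnd ℂ) (deriv (↑x : ℝ → ℂ) t) * deriv (↑z : ℝ → ℂ) t
            + (starRingEnd ℂ) (deriv (↑y : ℝ → ℂ) t) * deriv (↑z : ℝ → ℂ) t := by
        funext t
        rw [hD_add x y]
        simp only [Pi.add_apply, map_add]
        ring
      show (∫ t : ℝ, (starRingEnd ℂ) (deriv (↑(x + y) : ℝ → ℂ) t) * deriv (↑z : ℝ → ℂ) t)
        = (∫ t : ℝ, (starRingEnd ℂ) (deriv (↑x : ℝ → ℂ) t) * deriv (↑z : ℝ → ℂ) t)
          + ∫ t : ℝ, (starRingEnd ℂ) (deriv (↑y : ℝ → ℂ) t) * deriv (↑z : ℝ → ℂ) t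
      rw [hrw, integral_add
        (BargmannAux.integrable_deriv_mul (hsm x) (hsm z) (hcs z))
        (BargmannAux.integrable_deriv_mul (hsm y) (hsm z) (hcs z))]
    smul_left := by
      intro x y r
      have hrw : (fun t => (starRingEnd ℂ) (deriv (↑(r • x) : ℝ → ℂ) t) * deriv (↑y : ℝ → ℂ) t)
          = fun t => (starRingEnd ℂ) r
            * ((starRingEnd ℂ) (deriv (↑x : ℝ → ℂ) t) * deriv (↑y : ℝ → ℂ) t) := by
        funext t
        rw [hD_smul r x]
        simp only [map_mul]
        ring
      show (∫ t : ℝ, (starRingEnd ℂ) (deriv (↑(r • x) : ℝ → ℂ) t) * deriv (↑y : ℝ → ℂ) t)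
        = (starRingEnd ℂ) r
          * ∫ t : ℝ, (starRingEnd ℂ) (deriv (↑x : ℝ → ℂ) t) * deriv (↑y : ℝ → ℂ) t
      rw [hrw, MeasureTheory.integral_const_mul]
    definite := by
      intro ψ h
      have h' : (∫ x : ℝ, (starRingEnd ℂ) (deriv (↑ψ : ℝ → ℂ) x) * deriv (↑ψ : ℝ → ℂ) x)
          = 0 := h
      have h0 : (∫ y : ℝ, ‖deriv (↑ψ : ℝ → ℂ) y‖ ^ 2) = 0 := by
        have := (hval ψ).symm.trans h'
        exact_mod_cast this
      have hz : (↑ψ : ℝ → ℂ) = 0 := by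
        funext x
        have hb := BargmannAux.eval_sq_le (hsm ψ) (hcs ψ) (hmem0 ψ) x
        rw [h0, mul_zero] at hb
        have : ‖(↑ψ : ℝ → ℂ) x‖ = 0 := by nlinarith [norm_nonneg ((↑ψ : ℝ → ℂ) x), hb]
        simpa using norm_eq_zero.mp this
      exact Subtype.ext hz }

theorem dirichletCore_inner (M₀ : Submodule ℂ (ℝ → ℂ))
    (hsm : ∀ ψ : ↥M₀, ContDiff ℝ (⊤ : ℕ∞) (↑ψ : ℝ → ℂ))
    (hcs : ∀ ψ : ↥M₀, HasCompactSupport (↑ψ : ℝ → ℂ))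
    (hmem0 : ∀ ψ : ↥M₀, (↑ψ : ℝ → ℂ) 0 = 0) (φ ψ : ↥M₀) :
    (dirichletCore M₀ hsm hcs hmem0).inner φ ψ
      = ∫ x : ℝ, (starRingEnd ℂ) (deriv (↑φ : ℝ → ℂ) x) * deriv (↑ψ : ℝ → ℂ) x := rfl


end BargmannAux

/-- Bargmann estimate for the one-dimensional Schrödinger operator, in variational form:
the dimension of any subspace of `C_c^∞(ℝ)` on which the quadratic form is negative
definite is at most `1 + ∫ |x| V(x) dx`. -/
theorem bargmann_estimate_1d
    (V : ℝ → ℝ) (hV0 : ∀ x, 0 ≤ V x) (hVmeas : Measurable V)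
    (hVloc : LocallyIntegrable V volume)
    (M : Submodule ℂ (ℝ → ℂ)) (hMfin : FiniteDimensional ℂ M)
    (hMsmooth : ∀ ψ ∈ M, ContDiff ℝ (⊤ : ℕ∞) ψ ∧ HasCompactSupport ψ)
    (hMneg : ∀ ψ ∈ M, ψ ≠ 0 → schrodingerForm1D V ψ < 0) :
    (Module.finrank ℂ M : ℝ≥0∞) ≤ 1 + ∫⁻ x : ℝ, ENNReal.ofReal (|x| * V x) := by
  classical
  set f : (ℝ → ℂ) →ₗ[ℂ] ℂ := LinearMap.proj (0 : ℝ) with hf_def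
  set M₀ : Submodule ℂ (ℝ → ℂ) := M ⊓ LinearMap.ker f with hM₀_def
  have hM₀le : M₀ ≤ M := inf_le_left
  haveI : FiniteDimensional ℂ ↥M₀ := Submodule.finiteDimensional_of_le hM₀le
  have hmemM : ∀ ψ : ↥M₀, (↑ψ : ℝ → ℂ) ∈ M := fun ψ => (Submodule.mem_inf.mp ψ.2).1
  have hmem0 : ∀ ψ : ↥M₀, (↑ψ : ℝ → ℂ) 0 = 0 := fun ψ =>
    LinearMap.mem_ker.mp (Submodule.mem_inf.mp ψ.2).2
  have hsm : ∀ ψ : ↥M₀, ContDiff ℝ (⊤ : ℕ∞) (↑ψ : ℝ → ℂ) :=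
    fun ψ => (hMsmooth _ (hmemM ψ)).1
  have hcs : ∀ ψ : ↥M₀, HasCompactSupport (↑ψ : ℝ → ℂ) :=
    fun ψ => (hMsmooth _ (hmemM ψ)).2
  -- rank bound: finrank M ≤ 1 + finrank M₀
  have hrank : Module.finrank ℂ ↥M ≤ 1 + Module.finrank ℂ ↥M₀ := by
    set g : ↥M →ₗ[ℂ] ℂ := f.comp M.subtype with hg_def
    have e1 : Submodule.comap M.subtype M₀ = LinearMap.ker g := by
      ext ψ
      simp [hM₀_def, hg_def, Submodule.mem_comap, Submodule.mem_inf, LinearMap.mem_ker, ψ.2]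
    have e2 : Module.finrank ℂ ↥(LinearMap.ker g) = Module.finrank ℂ ↥M₀ := by
      set_option synthInstance.maxHeartbeats 1000000 in
      rw [← e1]
      set_option synthInstance.maxHeartbeats 1000000 in
      exact (Submodule.comapSubtypeEquivOfLe hM₀le).finrank_eq
    have e3 := LinearMap.finrank_range_add_finrank_ker g
    have e4 : Module.finrank ℂ ↥(LinearMap.range g) ≤ 1 := by
      simpa using Submodule.finrank_le (LinearMap.range g)
    omega
  letI instN : NormedAddCommGroup ↥M₀ :=
    (BargmannAux.dirichletCore M₀ hsm hcs hmem0).toNormedAddCommGroup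
  letI instIP : InnerProductSpace ℂ ↥M₀ :=
    InnerProductSpace.ofCore (BargmannAux.dirichletCore M₀ hsm hcs hmem0).toCore
  set m := Module.finrank ℂ ↥M₀ with hm_def
  let b := stdOrthonormalBasis ℂ ↥M₀
  have hinner_eq : ∀ φ ψ : ↥M₀, (inner ℂ φ ψ : ℂ)
      = ∫ x : ℝ, (starRingEnd ℂ) (deriv (↑φ : ℝ → ℂ) x) * deriv (↑ψ : ℝ → ℂ) x :=
    fun φ ψ => BargmannAux.dirichletCore_inner M₀ hsm hcs hmem0 φ ψ
  have hone : ∀ ψ : ↥M₀, (∫ y : ℝ, ‖deriv (↑ψ : ℝ → ℂ) y‖ ^ 2) = ‖ψ‖ ^ 2 := by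
    intro ψ
    have h1 : (inner ℂ ψ ψ : ℂ) = ((∫ y : ℝ, ‖deriv (↑ψ : ℝ → ℂ) y‖ ^ 2 : ℝ) : ℂ) :=
      (hinner_eq ψ ψ).trans (BargmannAux.integral_conj_mul_self _)
    have h2 : (inner ℂ ψ ψ : ℂ) = ((‖ψ‖ ^ 2 : ℝ) : ℂ) := by
      exact_mod_cast inner_self_eq_norm_sq_to_K (𝕜 := ℂ) ψ
    exact_mod_cast h1.symm.trans h2
  have hbase : ∀ i : Fin m, 1 ≤ ∫ x : ℝ, V x * ‖(↑(b i) : ℝ → ℂ) x‖ ^ 2 := by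
    intro i
    have hne : (↑(b i) : ℝ → ℂ) ≠ 0 := by
      intro h
      exact b.orthonormal.ne_zero i (Subtype.ext h)
    have hneg := hMneg _ (hmemM (b i)) hne
    rw [BargmannAux.form_split hVloc (hsm (b i)) (hcs (b i))] at hneg
    have h1 : (∫ y : ℝ, ‖deriv (↑(b i) : ℝ → ℂ) y‖ ^ 2) = 1 := by
      rw [hone (b i), b.orthonormal.1 i, one_pow]
    linarith
  set S : ℝ → ℝ := fun x => ∑ i : Fin m, ‖(↑(b i) : ℝ → ℂ) x‖ ^ 2 with hS_def
  have hSnn : ∀ x, 0 ≤ S x := fun x => Finset.sum_nonneg fun i _ => sq_nonneg _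
  have hSle : ∀ x, S x ≤ |x| := by
    intro x
    set c : Fin m → ℂ := fun i => (starRingEnd ℂ) ((↑(b i) : ℝ → ℂ) x) with hc_def
    set v : ↥M₀ := ∑ i : Fin m, c i • b i with hv_def
    have hvx : (↑v : ℝ → ℂ) x = ∑ i : Fin m, c i * (↑(b i) : ℝ → ℂ) x := by
      rw [hv_def]
      simp [Finset.sum_apply, Pi.smul_apply, smul_eq_mul]
    have hvxS : (↑v : ℝ → ℂ) x = ((S x : ℝ) : ℂ) := by
      rw [hvx, hS_def]
      push_cast
      refine Finset.sum_congr rfl fun i _ => ?_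
      rw [hc_def]
      rw [← Complex.normSq_eq_conj_mul_self]
      simp [Complex.normSq_eq_norm_sq]
    have hnormv : ‖v‖ ^ 2 = S x := by
      have h1 : (inner ℂ v v : ℂ) = ∑ i : Fin m, (starRingEnd ℂ) (c i) * c i := by
        rw [hv_def]
        exact b.orthonormal.inner_sum c c Finset.univ
      have h2 : (∑ i : Fin m, (starRingEnd ℂ) (c i) * c i) = ((S x : ℝ) : ℂ) := by
        rw [hS_def]
        push_cast
        refine Finset.sum_congr rfl fun i _ => ?_
        rw [← Complex.normSq_eq_conj_mul_self]
        simp [Complex.normSq_eq_norm_sq, hc_def]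
      have h3 : (inner ℂ v v : ℂ) = ((‖v‖ ^ 2 : ℝ) : ℂ) := by
        exact_mod_cast inner_self_eq_norm_sq_to_K (𝕜 := ℂ) v
      have := h3.symm.trans (h1.trans h2)
      exact_mod_cast this
    have hev := BargmannAux.eval_sq_le (hsm v) (hcs v) (hmem0 v) x
    rw [hone v, hnormv, hvxS] at hev
    have hev2 : S x ^ 2 ≤ |x| * S x := by
      rw [Complex.norm_real] at hev
      calc S x ^ 2 = ‖S x‖ ^ 2 := by rw [Real.norm_eq_abs, sq_abs]
        _ ≤ |x| * S x := hev
    rcases (hSnn x).eq_or_lt with h | h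
    · rw [← h]; exact abs_nonneg x
    · have h2 : S x * S x ≤ |x| * S x := by
        rw [← pow_two]
        exact hev2
      exact le_of_mul_le_mul_right h2 h
  -- summation and passage to the Lebesgue integral
  have hVb : ∀ i : Fin m, Integrable (fun x => V x * ‖(↑(b i) : ℝ → ℂ) x‖ ^ 2) :=
    fun i => BargmannAux.integrable_V_mul hVloc (hsm (b i)).continuous (hcs (b i))
  have hmulS : (fun x => V x * S x)
      = fun x => ∑ i : Fin m, V x * ‖(↑(b i) : ℝ → ℂ) x‖ ^ 2 := by
    funext x
    rw [hS_def, Finset.mul_sum]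
  have hVS_int : Integrable (fun x => V x * S x) := by
    rw [hmulS]
    exact integrable_finset_sum _ fun i _ => hVb i
  have hsum : (m : ℝ) ≤ ∫ x : ℝ, V x * S x := by
    have h1 : (∫ x : ℝ, V x * S x)
        = ∑ i : Fin m, ∫ x : ℝ, V x * ‖(↑(b i) : ℝ → ℂ) x‖ ^ 2 := by
      rw [hmulS]
      exact integral_finset_sum _ fun i _ => hVb i
    rw [h1]
    calc (m : ℝ) = ∑ _i : Fin m, (1 : ℝ) := by simp
      _ ≤ ∑ i : Fin m, ∫ x : ℝ, V x * ‖(↑(b i) : ℝ → ℂ) x‖ ^ 2 :=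
        Finset.sum_le_sum fun i _ => hbase i
  have hlin : ENNReal.ofReal (∫ x : ℝ, V x * S x) = ∫⁻ x : ℝ, ENNReal.ofReal (V x * S x) :=
    ofReal_integral_eq_lintegral_ofReal hVS_int
      (Filter.Eventually.of_forall fun x => mul_nonneg (hV0 x) (hSnn x))
  have hmono : (∫⁻ x : ℝ, ENNReal.ofReal (V x * S x)) ≤ ∫⁻ x : ℝ, ENNReal.ofReal (|x| * V x) := by
    apply lintegral_mono
    intro x
    apply ENNReal.ofReal_le_ofReal
    calc V x * S x ≤ V x * |x| := mul_le_mul_of_nonneg_left (hSle x) (hV0 x)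
      _ = |x| * V x := mul_comm _ _
  have hm_le : (m : ℝ≥0∞) ≤ ∫⁻ x : ℝ, ENNReal.ofReal (|x| * V x) := by
    calc (m : ℝ≥0∞) = ENNReal.ofReal (m : ℝ) := by
          rw [ENNReal.ofReal_natCast]
      _ ≤ ENNReal.ofReal (∫ x : ℝ, V x * S x) := ENNReal.ofReal_le_ofReal hsum
      _ = ∫⁻ x : ℝ, ENNReal.ofReal (V x * S x) := hlin
      _ ≤ ∫⁻ x : ℝ, ENNReal.ofReal (|x| * V x) := hmono
  calc (Module.finrank ℂ ↥M : ℝ≥0∞) ≤ ((1 + m : ℕ) : ℝ≥0∞) := by exact_mod_cast hrank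
    _ = 1 + (m : ℝ≥0∞) := by push_cast; ring
    _ ≤ 1 + ∫⁻ x : ℝ, ENNReal.ofReal (|x| * V x) := add_le_add_right hm_le _
end

section
/- Let V : ℤ → [0,∞) and let M be a finite-dimensional complex subspace of the space of finitely supported functions ℤ → ℂ such that Q_V(ψ) < 0 for every nonzero ψ ∈ M. Then dim M ≤ 1 + Σ_{x∈ℤ} |x| V(x). -/
open scoped ENNReal

/-- Quadratic form of the one-dimensional lattice Schrödinger operator `H = -Δ - V`
on finitely supported functions `ℤ → ℂ`. -/
noncomputable def latticeForm1D (V : ℤ → ℝ) (ψ : ℤ → ℂ) : ℝ :=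
  (∑' x : ℤ, ‖ψ (x + 1) - ψ x‖ ^ 2) - ∑' x : ℤ, V x * ‖ψ x‖ ^ 2

lemma telescope_Ico (f : ℤ → ℂ) (a : ℤ) : ∀ b : ℤ, a ≤ b →
    ∑ y ∈ Finset.Ico a b, (f (y + 1) - f y) = f b - f a := by
  refine Int.le_induction ?_ ?_
  · simp
  · intro b hb ih
    have h : Finset.Ico a (b + 1) = insert b (Finset.Ico a b) := by
      ext z; simp only [Finset.mem_Ico, Finset.mem_insert]; omega
    rw [h, Finset.sum_insert (by simp), ih]; ring


set_option maxHeartbeats 1000000 in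
set_option synthInstance.maxHeartbeats 200000 in
/-- Bargmann estimate for the one-dimensional lattice Schrödinger operator, in
variational form. -/
theorem bargmann_estimate_lattice_1d
    (V : ℤ → ℝ) (hV0 : ∀ x, 0 ≤ V x)
    (M : Submodule ℂ (ℤ → ℂ)) (hMfin : FiniteDimensional ℂ M)
    (hMsupp : ∀ ψ ∈ M, (Function.support ψ).Finite)
    (hMneg : ∀ ψ ∈ M, ψ ≠ 0 → latticeForm1D V ψ < 0) :
    (Module.finrank ℂ M : ℝ≥0∞) ≤ 1 + ∑' x : ℤ, ENNReal.ofReal (|(x : ℝ)| * V x) := by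
  classical
  -- a uniform support bound R
  obtain ⟨R, hR⟩ : ∃ R : ℕ, ∀ ψ ∈ M, ∀ x : ℤ, ψ x ≠ 0 → |x| ≤ (R : ℤ) := by
    set bb := Module.finBasis ℂ M with hbb
    set S : Set ℤ := ⋃ i, Function.support ((bb i : ℤ → ℂ)) with hS
    have hSfin : S.Finite := Set.finite_iUnion fun i => hMsupp _ (bb i).2
    have hsub : ∀ ψ ∈ M, ∀ x : ℤ, x ∉ S → ψ x = 0 := by
      intro ψ hψ x hx
      have h1 : (⟨ψ, hψ⟩ : M) = ∑ i, bb.repr ⟨ψ, hψ⟩ i • bb i := (bb.sum_repr _).symm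
      have h2 : ψ = ∑ i, bb.repr ⟨ψ, hψ⟩ i • ((bb i : ℤ → ℂ)) := by
        conv_lhs => rw [show ψ = ((⟨ψ, hψ⟩ : M) : ℤ → ℂ) from rfl, h1]
        push_cast
        rfl
      have hz : ∀ i, (bb i : ℤ → ℂ) x = 0 := by
        intro i
        by_contra h
        exact hx (Set.mem_iUnion.mpr ⟨i, h⟩)
      rw [h2]
      simp [Finset.sum_apply, Pi.smul_apply, hz]
    obtain ⟨R, hRb⟩ := (hSfin.image Int.natAbs).bddAbove
    refine ⟨R, fun ψ hψ x hx => ?_⟩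
    have hxS : x ∈ S := by
      by_contra h
      exact hx (hsub ψ hψ x h)
    have h := hRb (Set.mem_image_of_mem _ hxS)
    rw [Int.abs_eq_natAbs]
    exact_mod_cast h
  set n : ℕ := 2 * R + 2 with hn
  set c : Fin n → ℤ := fun i => (i : ℤ) - (R + 1) with hc
  have hcinj : Function.Injective c := by
    intro i j h; simp only [hc, sub_left_inj] at h; exact Fin.ext (by exact_mod_cast h)
  -- the difference map
  set T : (ℤ → ℂ) →ₗ[ℂ] EuclideanSpace ℂ (Fin n) :=
    { toFun := fun ψ => WithLp.toLp 2 (fun i => ψ (c i + 1) - ψ (c i))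
      map_add' := by intro ψ φ; ext i; simp [Pi.add_apply]; ring
      map_smul' := by intro a ψ; ext i; simp [Pi.smul_apply, smul_eq_mul]; ring } with hT
  -- evaluation at 0 on M
  set f : M →ₗ[ℂ] ℂ := (LinearMap.proj (0 : ℤ)).comp M.subtype with hf
  set N : Submodule ℂ M := LinearMap.ker f with hN
  have hrank : Module.finrank ℂ M ≤ Module.finrank ℂ N + 1 := by
    have h1 := LinearMap.finrank_range_add_finrank_ker f
    rw [← hN] at h1
    have h2 : Module.finrank ℂ (LinearMap.range f) ≤ 1 := by
      simpa using Submodule.finrank_le (LinearMap.range f)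
    omega
  set T' : M →ₗ[ℂ] EuclideanSpace ℂ (Fin n) := T.comp M.subtype with hT'
  have hinj : ∀ ψ : M, ψ ∈ N → T' ψ = 0 → ψ = 0 := by
    intro ψ hψN hψT
    set g : ℤ → ℂ := (ψ : ℤ → ℂ) with hg
    have hg0 : g 0 = 0 := hψN
    have hd : ∀ y : ℤ, g (y + 1) = g y := by
      intro y
      by_cases hy : -(R : ℤ) - 1 ≤ y ∧ y ≤ R
      · have hlt : (y + R + 1).toNat < n := by omega
        have hci : c ⟨(y + R + 1).toNat, hlt⟩ = y := by
          simp only [hc]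
          push_cast
          omega
        have := congrArg (fun v : EuclideanSpace ℂ (Fin n) => v ⟨(y + R + 1).toNat, hlt⟩) hψT
        rw [show ((0 : EuclideanSpace ℂ (Fin n)) ⟨(y + R + 1).toNat, hlt⟩) = 0 from rfl] at this
        simp only [hT', hT, LinearMap.comp_apply, LinearMap.coe_mk, AddHom.coe_mk,
          Submodule.coe_subtype] at this
        rw [hci] at this
        exact sub_eq_zero.mp this
      · have h1 : g y = 0 := by
          by_contra h
          have := hR g ψ.2 y h
          rw [abs_le] at this
          omega
        have h2 : g (y + 1) = 0 := by
          by_contra h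
          have := hR g ψ.2 (y + 1) h
          rw [abs_le] at this
          omega
        rw [h1, h2]
    have hall : ∀ x : ℤ, g x = 0 := by
      intro x
      induction x using Int.induction_on with
      | zero => exact hg0
      | succ k ih => rw [hd k]; exact ih
      | pred k ih => rw [← ih, ← hd (-(k:ℤ) - 1)]; ring_nf
    exact Subtype.ext (funext hall)
  set W : Submodule ℂ (EuclideanSpace ℂ (Fin n)) := N.map T' with hW
  have hrankW : Module.finrank ℂ N = Module.finrank ℂ W := by
    set u : N →ₗ[ℂ] EuclideanSpace ℂ (Fin n) := T'.comp N.subtype with hu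
    have hrange : LinearMap.range u = W := by
      rw [hu, LinearMap.range_comp, Submodule.range_subtype]
    have hker : LinearMap.ker u = ⊥ := by
      refine (Submodule.eq_bot_iff _).mpr fun x hx => ?_
      have hx' : T' (x : M) = 0 := hx
      exact Subtype.ext (hinj x.1 x.2 hx')
    have huinj : Function.Injective u := by
      intro a b hab
      exact sub_eq_zero.mp ((LinearMap.ker_eq_bot'.mp hker) (a - b) (by rw [LinearMap.map_sub u a b, hab, sub_self]))
    rw [← LinearMap.finrank_range_of_inj huinj, hrange]
  set m : ℕ := Module.finrank ℂ W with hm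
  set ob := stdOrthonormalBasis ℂ W with hob
  set w : Fin m → EuclideanSpace ℂ (Fin n) := fun j => (ob j : EuclideanSpace ℂ (Fin n)) with hwdef
  have hw : Orthonormal ℂ w := by
    constructor
    · intro i
      exact ob.orthonormal.1 i
    · intro i j hij
      have h := ob.orthonormal.2 hij
      simp only at h ⊢
      rwa [Submodule.coe_inner] at h
  -- pick preimages
  have hpre : ∀ j : Fin m, ∃ ψ : ℤ → ℂ, ψ ∈ M ∧ ψ 0 = 0 ∧ T ψ = w j := by
    intro j
    have hmem : w j ∈ W := (ob j).2
    rw [hW] at hmem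
    obtain ⟨ν, hνN, hνT⟩ := hmem
    exact ⟨(ν : ℤ → ℂ), ν.2, hνN, hνT⟩
  choose ψ hψM hψ0 hψT using hpre
  set F : Finset ℤ := Finset.Icc (-(R : ℤ)) R with hF
  have himage : Finset.image c Finset.univ = Finset.Icc (-(R : ℤ) - 1) R := by
    ext z
    simp only [Finset.mem_image, Finset.mem_univ, true_and, Finset.mem_Icc]
    constructor
    · rintro ⟨i, rfl⟩
      have h2 := i.2
      simp only [hc]
      omega
    · intro hz
      have hlt : (z + R + 1).toNat < n := by omega
      refine ⟨⟨(z + R + 1).toNat, hlt⟩, ?_⟩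
      simp only [hc]
      push_cast
      omega
  have hzero : ∀ φ ∈ M, ∀ x : ℤ, (x < -(R : ℤ) ∨ (R : ℤ) < x) → φ x = 0 := by
    intro φ hφ x hx
    by_contra h
    have := hR φ hφ x h
    rw [abs_le] at this
    omega
  -- the quadratic form as finite sums
  have hQ : ∀ φ ∈ M, latticeForm1D V φ =
      (∑ i : Fin n, ‖T φ i‖ ^ 2) - ∑ x ∈ F, V x * ‖φ x‖ ^ 2 := by
    intro φ hφ
    have hA : ∑' x : ℤ, ‖φ (x + 1) - φ x‖ ^ 2
        = ∑ x ∈ Finset.Icc (-(R : ℤ) - 1) R, ‖φ (x + 1) - φ x‖ ^ 2 := by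
      refine tsum_eq_sum ?_
      intro x hx
      simp only [Finset.mem_Icc] at hx
      have h1 : φ x = 0 := hzero φ hφ x (by omega)
      have h2 : φ (x + 1) = 0 := hzero φ hφ (x + 1) (by omega)
      simp [h1, h2]
    have hB : ∑ x ∈ Finset.Icc (-(R : ℤ) - 1) R, ‖φ (x + 1) - φ x‖ ^ 2
        = ∑ i : Fin n, ‖T φ i‖ ^ 2 := by
      rw [← himage, Finset.sum_image (fun a _ b _ h => hcinj h)]
      exact Finset.sum_congr rfl fun i _ => rfl
    have hC : ∑' x : ℤ, V x * ‖φ x‖ ^ 2 = ∑ x ∈ F, V x * ‖φ x‖ ^ 2 := by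
      refine tsum_eq_sum ?_
      intro x hx
      simp only [hF, Finset.mem_Icc] at hx
      have h1 : φ x = 0 := hzero φ hφ x (by omega)
      simp [h1]
    rw [latticeForm1D, hA, hB, hC]
  -- reproducing vectors
  set k : ℤ → EuclideanSpace ℂ (Fin n) := fun x => WithLp.toLp 2 (fun i =>
    if 0 ≤ c i ∧ c i < x then (1 : ℂ) else if x ≤ c i ∧ c i < 0 then -1 else 0) with hk
  have hrepr : ∀ φ ∈ M, φ 0 = 0 → ∀ x ∈ F, (φ x : ℂ) = @inner ℂ _ _ (k x) (T φ) := by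
    intro φ hφ hφ0 x hx
    rw [hF, Finset.mem_Icc] at hx
    set d : ℤ → ℂ := fun z => φ (z + 1) - φ z with hd
    have hinner : (@inner ℂ _ _ (k x) (T φ) : ℂ)
        = ∑ i : Fin n, (starRingEnd ℂ) (k x i) * (T φ) i := by
      rw [PiLp.inner_apply]
      exact Finset.sum_congr rfl fun i _ => RCLike.inner_apply' _ _
    have hterm : ∀ i : Fin n, (starRingEnd ℂ) (k x i) * (T φ) i =
        (if 0 ≤ c i ∧ c i < x then d (c i) else 0)
          - (if x ≤ c i ∧ c i < 0 then d (c i) else 0) := by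
      intro i
      have hTφ : (T φ) i = d (c i) := rfl
      rw [hTφ]
      by_cases h1 : 0 ≤ c i ∧ c i < x
      · simp [hk, h1, show ¬(x ≤ c i ∧ c i < 0) by omega]
      · by_cases h2 : x ≤ c i ∧ c i < 0
        · simp [hk, h1, h2]
        · simp [hk, h1, h2]
    rw [hinner, Finset.sum_congr rfl fun i _ => hterm i, Finset.sum_sub_distrib]
    have e1 : ∑ i : Fin n, (if 0 ≤ c i ∧ c i < x then d (c i) else 0)
        = ∑ z ∈ Finset.Ico (0 : ℤ) x, d z := by
      rw [show (Finset.Ico (0 : ℤ) x)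
          = (Finset.Icc (-(R : ℤ) - 1) R).filter (fun z => 0 ≤ z ∧ z < x) by
        ext z; simp only [Finset.mem_filter, Finset.mem_Icc, Finset.mem_Ico]; omega]
      rw [Finset.sum_filter, ← himage, Finset.sum_image (fun a _ b _ h => hcinj h)]
    have e2 : ∑ i : Fin n, (if x ≤ c i ∧ c i < 0 then d (c i) else 0)
        = ∑ z ∈ Finset.Ico x (0 : ℤ), d z := by
      rw [show (Finset.Ico x (0 : ℤ))
          = (Finset.Icc (-(R : ℤ) - 1) R).filter (fun z => x ≤ z ∧ z < 0) by
        ext z; simp only [Finset.mem_filter, Finset.mem_Icc, Finset.mem_Ico]; omega]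
      rw [Finset.sum_filter, ← himage, Finset.sum_image (fun a _ b _ h => hcinj h)]
    rw [e1, e2]
    by_cases hx0 : 0 ≤ x
    · rw [telescope_Ico φ 0 x hx0, Finset.Ico_eq_empty (by omega), Finset.sum_empty, hφ0]
      ring
    · rw [telescope_Ico φ x 0 (by omega), Finset.Ico_eq_empty (by omega), Finset.sum_empty, hφ0]
      ring
  have hknorm : ∀ x : ℤ, ‖k x‖ ^ 2 ≤ |(x : ℝ)| := by
    intro x
    have h1 : ‖k x‖ ^ 2 = ∑ i : Fin n, ‖k x i‖ ^ 2 := by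
      rw [EuclideanSpace.norm_eq, Real.sq_sqrt (Finset.sum_nonneg fun i _ => sq_nonneg _)]
    have h2 : ∀ i : Fin n, ‖k x i‖ ^ 2
        = if (0 ≤ c i ∧ c i < x) ∨ (x ≤ c i ∧ c i < 0) then (1 : ℝ) else 0 := by
      intro i
      by_cases hP : 0 ≤ c i ∧ c i < x
      · simp [hk, hP]
      · by_cases hQ2 : x ≤ c i ∧ c i < 0
        · simp [hk, hP, hQ2]
        · simp [hk, hP, hQ2]
    rw [h1, Finset.sum_congr rfl fun i _ => h2 i, Finset.sum_boole]
    have hcard : (Finset.univ.filter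
        (fun i : Fin n => (0 ≤ c i ∧ c i < x) ∨ (x ≤ c i ∧ c i < 0))).card
        ≤ x.natAbs := by
      have hmaps : ∀ i ∈ Finset.univ.filter
          (fun i : Fin n => (0 ≤ c i ∧ c i < x) ∨ (x ≤ c i ∧ c i < 0)),
          c i ∈ Finset.Ico (0 : ℤ) x ∪ Finset.Ico x (0 : ℤ) := by
        intro i hi
        simp only [Finset.mem_filter, Finset.mem_univ, true_and] at hi
        simp only [Finset.mem_union, Finset.mem_Ico]
        exact hi
      have h3 := Finset.card_le_card_of_injOn c hmaps (hcinj.injOn)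
      refine h3.trans ?_
      refine (Finset.card_union_le _ _).trans ?_
      rw [Int.card_Ico, Int.card_Ico]
      omega
    calc ((Finset.univ.filter
        (fun i : Fin n => (0 ≤ c i ∧ c i < x) ∨ (x ≤ c i ∧ c i < 0))).card : ℝ)
        ≤ (x.natAbs : ℝ) := by exact_mod_cast hcard
    _ = |(x : ℝ)| := by
        rw [Nat.cast_natAbs]
        push_cast
        ring
  -- each ψ j has V-mass > 1
  have hmass : ∀ j : Fin m, 1 ≤ ∑ x ∈ F, V x * ‖ψ j x‖ ^ 2 := by
    intro j
    have hne : ψ j ≠ 0 := by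
      intro h0
      have hwj : w j = 0 := by rw [← hψT j, h0, map_zero]
      have h1 := hw.1 j
      rw [hwj, norm_zero] at h1
      norm_num at h1
    have hQj := hMneg _ (hψM j) hne
    rw [hQ _ (hψM j)] at hQj
    have hD : ∑ i : Fin n, ‖T (ψ j) i‖ ^ 2 = 1 := by
      rw [hψT j]
      have h2 : ‖w j‖ ^ 2 = ∑ i : Fin n, ‖w j i‖ ^ 2 := by
        rw [EuclideanSpace.norm_eq, Real.sq_sqrt (Finset.sum_nonneg fun i _ => sq_nonneg _)]
      rw [← h2, hw.1 j]
      norm_num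
    rw [hD] at hQj
    linarith
  -- Bessel
  have hbessel : ∀ x ∈ F, ∑ j : Fin m, ‖ψ j x‖ ^ 2 ≤ |(x : ℝ)| := by
    intro x hx
    have hrx : ∀ j : Fin m, ‖ψ j x‖ ^ 2 = ‖(@inner ℂ _ _ (w j) (k x) : ℂ)‖ ^ 2 := by
      intro j
      rw [hrepr (ψ j) (hψM j) (hψ0 j) x hx, hψT j, norm_inner_symm]
    calc ∑ j : Fin m, ‖ψ j x‖ ^ 2
        = ∑ j : Fin m, ‖(@inner ℂ _ _ (w j) (k x) : ℂ)‖ ^ 2 :=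
          Finset.sum_congr rfl fun j _ => hrx j
    _ ≤ ‖k x‖ ^ 2 := hw.sum_inner_products_le (k x)
    _ ≤ |(x : ℝ)| := hknorm x
  -- combine
  have hmain : (m : ℝ) ≤ ∑ x ∈ F, |(x : ℝ)| * V x := by
    calc (m : ℝ) = ∑ _j : Fin m, (1 : ℝ) := by simp
    _ ≤ ∑ j : Fin m, ∑ x ∈ F, V x * ‖ψ j x‖ ^ 2 := Finset.sum_le_sum fun j _ => hmass j
    _ = ∑ x ∈ F, V x * ∑ j : Fin m, ‖ψ j x‖ ^ 2 := by
        rw [Finset.sum_comm]; exact Finset.sum_congr rfl fun x _ => (Finset.mul_sum _ _ _).symm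
    _ ≤ ∑ x ∈ F, |(x : ℝ)| * V x := by
        refine Finset.sum_le_sum fun x hx => ?_
        rw [mul_comm]
        exact mul_le_mul_of_nonneg_right (hbessel x hx) (hV0 x)
  -- conclude in ℝ≥0∞
  have h1 : (m : ℝ≥0∞) ≤ ∑' x : ℤ, ENNReal.ofReal (|(x : ℝ)| * V x) := by
    calc (m : ℝ≥0∞) = ENNReal.ofReal (m : ℝ) := by simp
    _ ≤ ENNReal.ofReal (∑ x ∈ F, |(x : ℝ)| * V x) := ENNReal.ofReal_le_ofReal hmain
    _ = ∑ x ∈ F, ENNReal.ofReal (|(x : ℝ)| * V x) := by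
        exact ENNReal.ofReal_sum_of_nonneg (fun x _ => mul_nonneg (abs_nonneg _) (hV0 x))
    _ ≤ ∑' x : ℤ, ENNReal.ofReal (|(x : ℝ)| * V x) := ENNReal.sum_le_tsum F
  have h2 : (Module.finrank ℂ M : ℝ≥0∞) ≤ (m : ℝ≥0∞) + 1 := by
    have := hrank
    rw [hrankW] at this
    exact_mod_cast Nat.cast_le.mpr this
  calc (Module.finrank ℂ M : ℝ≥0∞) ≤ (m : ℝ≥0∞) + 1 := h2
  _ ≤ (∑' x : ℤ, ENNReal.ofReal (|(x : ℝ)| * V x)) + 1 := add_le_add_left h1 _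
  _ = 1 + ∑' x : ℤ, ENNReal.ofReal (|(x : ℝ)| * V x) := add_comm _ _
end

section
/- There exists a constant C > 0 with the following property: for every V : ℤ² → [0,∞) and every finite-dimensional complex subspace M of the space of finitely supported functions ℤ² → ℂ such that Q_V(ψ) < 0 for every nonzero ψ ∈ M, one has dim M ≤ C Σ_{x∈ℤ²} ln(2+|x|) V(x) + 1. -/
open scoped ENNReal

/-- Euclidean norm of a point of the lattice `ℤ²`. -/
noncomputable def normZ2 (x : ℤ × ℤ) : ℝ :=
  Real.sqrt ((x.1 : ℝ) ^ 2 + (x.2 : ℝ) ^ 2)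

/-- Quadratic form of the two-dimensional lattice Schrödinger operator `H = -Δ - V`
on finitely supported functions `ℤ² → ℂ`. -/
noncomputable def latticeForm2D (V : ℤ × ℤ → ℝ) (ψ : ℤ × ℤ → ℂ) : ℝ :=
  (∑' x : ℤ × ℤ, (‖ψ (x.1 + 1, x.2) - ψ x‖ ^ 2 + ‖ψ (x.1, x.2 + 1) - ψ x‖ ^ 2)) -
    ∑' x : ℤ × ℤ, V x * ‖ψ x‖ ^ 2

namespace Bargmann2D

/-- local energy density -/
noncomputable def Dterm (ψ : ℤ × ℤ → ℂ) (x : ℤ × ℤ) : ℝ :=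
  ‖ψ (x.1 + 1, x.2) - ψ x‖ ^ 2 + ‖ψ (x.1, x.2 + 1) - ψ x‖ ^ 2

/-- kinetic energy -/
noncomputable def Tform (ψ : ℤ × ℤ → ℂ) : ℝ := ∑' x : ℤ × ℤ, Dterm ψ x

lemma latticeForm2D_eq (V : ℤ × ℤ → ℝ) (ψ : ℤ × ℤ → ℂ) :
    latticeForm2D V ψ = Tform ψ - ∑' x : ℤ × ℤ, V x * ‖ψ x‖ ^ 2 := rfl

lemma Dterm_nonneg (ψ : ℤ × ℤ → ℂ) (x : ℤ × ℤ) : 0 ≤ Dterm ψ x := by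
  unfold Dterm; positivity

/-- candidate support for `Dterm ψ` -/
def cand (s : Finset (ℤ × ℤ)) : Finset (ℤ × ℤ) :=
  s ∪ s.image (fun v => (v.1 - 1, v.2)) ∪ s.image (fun v => (v.1, v.2 - 1))

lemma Dterm_eq_zero {ψ : ℤ × ℤ → ℂ} {s : Finset (ℤ × ℤ)}
    (hψ : ∀ v ∉ s, ψ v = 0) {x : ℤ × ℤ} (hx : x ∉ cand s) : Dterm ψ x = 0 := by
  simp only [cand, Finset.mem_union, Finset.mem_image, not_or, not_exists, not_and] at hx
  obtain ⟨⟨h1, h2⟩, h3⟩ := hx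
  have hx0 : ψ x = 0 := hψ x h1
  have hx1 : ψ (x.1 + 1, x.2) = 0 := by
    by_contra h
    have hmem : (x.1 + 1, x.2) ∈ s := by
      by_contra hm; exact h (hψ _ hm)
    exact h2 _ hmem (by simp)
  have hx2 : ψ (x.1, x.2 + 1) = 0 := by
    by_contra h
    have hmem : (x.1, x.2 + 1) ∈ s := by
      by_contra hm; exact h (hψ _ hm)
    exact h3 _ hmem (by simp)
  simp [Dterm, hx0, hx1, hx2]

lemma summable_Dterm {ψ : ℤ × ℤ → ℂ} {s : Finset (ℤ × ℤ)}
    (hψ : ∀ v ∉ s, ψ v = 0) : Summable (Dterm ψ) :=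
  summable_of_ne_finset_zero (s := cand s) (fun _ hx => Dterm_eq_zero hψ hx)

lemma Tform_nonneg (ψ : ℤ × ℤ → ℂ) : 0 ≤ Tform ψ :=
  tsum_nonneg (Dterm_nonneg ψ)

lemma sum_Dterm_le_Tform {ψ : ℤ × ℤ → ℂ} {s : Finset (ℤ × ℤ)}
    (hψ : ∀ v ∉ s, ψ v = 0) (A : Finset (ℤ × ℤ)) :
    ∑ v ∈ A, Dterm ψ v ≤ Tform ψ :=
  Summable.sum_le_tsum A (fun v _ => Dterm_nonneg ψ v) (summable_Dterm hψ)

/-- Cauchy–Schwarz for finite sums of complex numbers. -/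
lemma sq_norm_sum_le {α : Type*} (s : Finset α) (f : α → ℂ) :
    ‖∑ i ∈ s, f i‖ ^ 2 ≤ (s.card : ℝ) * ∑ i ∈ s, ‖f i‖ ^ 2 := by
  have h1 : ‖∑ i ∈ s, f i‖ ≤ ∑ i ∈ s, ‖f i‖ := norm_sum_le s f
  have h2 : (∑ i ∈ s, ‖f i‖) ^ 2 ≤ (s.card : ℝ) * ∑ i ∈ s, ‖f i‖ ^ 2 :=
    sq_sum_le_card_mul_sum_sq
  calc ‖∑ i ∈ s, f i‖ ^ 2 ≤ (∑ i ∈ s, ‖f i‖) ^ 2 := by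
        apply pow_le_pow_left₀ (norm_nonneg _) h1
    _ ≤ _ := h2

lemma tele (f : ℤ → ℂ) {a b : ℤ} (h : a ≤ b) :
    f b - f a = ∑ x ∈ Finset.Ico a b, (f (x + 1) - f x) := by
  have hmap : Finset.Ico a b = (Finset.range (b - a).toNat).map
      (Nat.castEmbedding.trans <| addLeftEmbedding a) := Int.Ico_eq_finset_map a b
  rw [hmap, Finset.sum_map]
  have : ∀ i : ℕ, (Nat.castEmbedding.trans <| addLeftEmbedding a) i = a + (i : ℤ) := by
    intro i; rfl
  simp only [this]
  have h2 : ∑ i ∈ Finset.range (b - a).toNat, ((fun j : ℕ => f (a + (j : ℤ))) (i + 1)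
      - (fun j : ℕ => f (a + (j : ℤ))) i) = f (a + ((b - a).toNat : ℤ)) - f (a + (0 : ℕ)) := by
    rw [Finset.sum_range_sub (fun j : ℕ => f (a + (j : ℤ)))]
  simp only [Nat.cast_zero, add_zero, Nat.cast_ofNat] at h2
  have h3 : a + ((b - a).toNat : ℤ) = b := by omega
  rw [h3] at h2
  rw [← h2]
  apply Finset.sum_congr rfl
  intro i _
  push_cast
  ring_nf


/-- horizontal step estimate -/
lemma step_h (ψ : ℤ × ℤ → ℂ) (y lo hi a b : ℤ) (ha : lo ≤ a) (hah : a ≤ hi)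
    (hb : lo ≤ b) (hbh : b ≤ hi) :
    ‖ψ (b, y) - ψ (a, y)‖ ^ 2 ≤
      (hi - lo : ℝ) * ∑ x ∈ Finset.Ico lo hi, ‖ψ (x + 1, y) - ψ (x, y)‖ ^ 2 := by
  wlog hab : a ≤ b with H
  · rw [norm_sub_rev]
    exact H ψ y lo hi b a hb hbh ha hah (by omega)
  rw [tele (fun t => ψ (t, y)) hab]
  calc ‖∑ x ∈ Finset.Ico a b, (ψ (x + 1, y) - ψ (x, y))‖ ^ 2
      ≤ ((Finset.Ico a b).card : ℝ) * ∑ x ∈ Finset.Ico a b, ‖ψ (x + 1, y) - ψ (x, y)‖ ^ 2 :=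
        sq_norm_sum_le _ _
    _ ≤ (hi - lo : ℝ) * ∑ x ∈ Finset.Ico lo hi, ‖ψ (x + 1, y) - ψ (x, y)‖ ^ 2 := by
        apply mul_le_mul
        · rw [Int.card_Ico]
          exact_mod_cast (by omega : ((b - a).toNat : ℤ) ≤ hi - lo)
        · apply Finset.sum_le_sum_of_subset_of_nonneg
          · apply Finset.Ico_subset_Ico <;> omega
          · intro v _ _; positivity
        · positivity
        · exact_mod_cast (by omega : (0 : ℤ) ≤ hi - lo)

/-- vertical step estimate -/
lemma step_v (ψ : ℤ × ℤ → ℂ) (x lo hi a b : ℤ) (ha : lo ≤ a) (hah : a ≤ hi)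
    (hb : lo ≤ b) (hbh : b ≤ hi) :
    ‖ψ (x, b) - ψ (x, a)‖ ^ 2 ≤
      (hi - lo : ℝ) * ∑ y ∈ Finset.Ico lo hi, ‖ψ (x, y + 1) - ψ (x, y)‖ ^ 2 := by
  wlog hab : a ≤ b with H
  · rw [norm_sub_rev]
    exact H ψ x lo hi b a hb hbh ha hah (by omega)
  rw [tele (fun t => ψ (x, t)) hab]
  calc ‖∑ y ∈ Finset.Ico a b, (ψ (x, y + 1) - ψ (x, y))‖ ^ 2
      ≤ ((Finset.Ico a b).card : ℝ) * ∑ y ∈ Finset.Ico a b, ‖ψ (x, y + 1) - ψ (x, y)‖ ^ 2 :=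
        sq_norm_sum_le _ _
    _ ≤ (hi - lo : ℝ) * ∑ y ∈ Finset.Ico lo hi, ‖ψ (x, y + 1) - ψ (x, y)‖ ^ 2 := by
        apply mul_le_mul
        · rw [Int.card_Ico]
          exact_mod_cast (by omega : ((b - a).toNat : ℤ) ≤ hi - lo)
        · apply Finset.sum_le_sum_of_subset_of_nonneg
          · apply Finset.Ico_subset_Ico <;> omega
          · intro v _ _; positivity
        · positivity
        · exact_mod_cast (by omega : (0 : ℤ) ≤ hi - lo)

/-- integer box as a finset -/
noncomputable def box (x₁ x₂ y₁ y₂ : ℤ) : Finset (ℤ × ℤ) := Finset.Ico x₁ x₂ ×ˢ Finset.Ico y₁ y₂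

/-- energy of a box -/
noncomputable def EBox (ψ : ℤ × ℤ → ℂ) (x₁ x₂ y₁ y₂ : ℤ) : ℝ :=
  ∑ v ∈ box x₁ x₂ y₁ y₂, Dterm ψ v

lemma EBox_nonneg (ψ : ℤ × ℤ → ℂ) (x₁ x₂ y₁ y₂ : ℤ) : 0 ≤ EBox ψ x₁ x₂ y₁ y₂ :=
  Finset.sum_nonneg (fun v _ => Dterm_nonneg ψ v)

/-- average of `ψ` over a finset -/
noncomputable def avg (ψ : ℤ × ℤ → ℂ) (P : Finset (ℤ × ℤ)) : ℂ :=
  (P.card : ℂ)⁻¹ * ∑ p ∈ P, ψ p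


lemma card_IcoN (a : ℤ) (s : ℕ) : (Finset.Ico a (a + (s : ℤ))).card = s := by
  rw [Int.card_Ico]; omega

lemma card_box (x₁ x₂ y₁ y₂ : ℤ) :
    (box x₁ x₂ y₁ y₂).card = (x₂ - x₁).toNat * (y₂ - y₁).toNat := by
  rw [box, Finset.card_product, Int.card_Ico, Int.card_Ico]

set_option maxHeartbeats 2000000 in
/-- The bridge estimate between averages over two squares. -/
lemma bridge (ψ : ℤ × ℤ → ℂ) (a₁ a₂ b₁ b₂ : ℤ) (s t : ℕ) (hs : 0 < s) (ht : 0 < t) :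
    ((s : ℝ) * t) *
        ‖avg ψ (box a₁ (a₁ + s) a₂ (a₂ + s)) - avg ψ (box b₁ (b₁ + t) b₂ (b₂ + t))‖ ^ 2 ≤
      (2 * (((max (a₁ + s) (b₁ + t) : ℤ) : ℝ) - ((min a₁ b₁ : ℤ) : ℝ)) * t +
        2 * (((max (a₂ + s) (b₂ + t) : ℤ) : ℝ) - ((min a₂ b₂ : ℤ) : ℝ)) * s) *
        EBox ψ (min a₁ b₁) (max (a₁ + s) (b₁ + t)) (min a₂ b₂) (max (a₂ + s) (b₂ + t)) := by
  set lo₁ : ℤ := min a₁ b₁ with hlo₁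
  set hi₁ : ℤ := max (a₁ + s) (b₁ + t) with hhi₁
  set lo₂ : ℤ := min a₂ b₂ with hlo₂
  set hi₂ : ℤ := max (a₂ + s) (b₂ + t) with hhi₂
  set P := box a₁ (a₁ + s) a₂ (a₂ + s) with hP
  set R := box b₁ (b₁ + t) b₂ (b₂ + t) with hR
  set W : ℝ := ((hi₁ : ℝ) - (lo₁ : ℝ)) with hW
  set H : ℝ := ((hi₂ : ℝ) - (lo₂ : ℝ)) with hH
  set E : ℝ := EBox ψ lo₁ hi₁ lo₂ hi₂ with hE
  set Row : ℤ → ℝ := fun y => ∑ x ∈ Finset.Ico lo₁ hi₁, ‖ψ (x + 1, y) - ψ (x, y)‖ ^ 2 with hRow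
  set Col : ℤ → ℝ := fun x => ∑ y ∈ Finset.Ico lo₂ hi₂, ‖ψ (x, y + 1) - ψ (x, y)‖ ^ 2 with hCol
  have hcardP : P.card = s * s := by
    rw [hP, card_box]; congr 1 <;> omega
  have hcardR : R.card = t * t := by
    rw [hR, card_box]; congr 1 <;> omega
  have hW0 : (0 : ℝ) ≤ W := by
    rw [hW]; have : lo₁ ≤ hi₁ := le_trans (min_le_left _ _) (le_trans (by omega) (le_max_left _ _))
    exact_mod_cast sub_nonneg.mpr this
  have hH0 : (0 : ℝ) ≤ H := by
    rw [hH]; have : lo₂ ≤ hi₂ := le_trans (min_le_left _ _) (le_trans (by omega) (le_max_left _ _))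
    exact_mod_cast sub_nonneg.mpr this
  have hE0 : (0 : ℝ) ≤ E := EBox_nonneg ψ _ _ _ _
  -- membership bounds
  have memP : ∀ p ∈ P, lo₁ ≤ p.1 ∧ p.1 ≤ hi₁ ∧ lo₂ ≤ p.2 ∧ p.2 ≤ hi₂ := by
    intro p hp
    rw [hP, box, Finset.mem_product, Finset.mem_Ico, Finset.mem_Ico] at hp
    constructor
    · exact le_trans (min_le_left _ _) hp.1.1
    constructor
    · exact le_trans (le_of_lt hp.1.2) (le_max_left _ _)
    constructor
    · exact le_trans (min_le_left _ _) hp.2.1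
    · exact le_trans (le_of_lt hp.2.2) (le_max_left _ _)
  have memR : ∀ q ∈ R, lo₁ ≤ q.1 ∧ q.1 ≤ hi₁ ∧ lo₂ ≤ q.2 ∧ q.2 ≤ hi₂ := by
    intro q hq
    rw [hR, box, Finset.mem_product, Finset.mem_Ico, Finset.mem_Ico] at hq
    constructor
    · exact le_trans (min_le_right _ _) hq.1.1
    constructor
    · exact le_trans (le_of_lt hq.1.2) (le_max_right _ _)
    constructor
    · exact le_trans (min_le_right _ _) hq.2.1
    · exact le_trans (le_of_lt hq.2.2) (le_max_right _ _)
  -- step A : difference of averages as a double sum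
  have hPpos : 0 < P.card := by rw [hcardP]; exact Nat.mul_pos hs hs
  have hRpos : 0 < R.card := by rw [hcardR]; exact Nat.mul_pos ht ht
  have hcPne : ((P.card : ℂ)) ≠ 0 := Nat.cast_ne_zero.mpr hPpos.ne'
  have hcRne : ((R.card : ℂ)) ≠ 0 := Nat.cast_ne_zero.mpr hRpos.ne'
  have stepA : avg ψ P - avg ψ R =
      ((P.card : ℂ) * (R.card : ℂ))⁻¹ * ∑ v ∈ P ×ˢ R, (ψ v.1 - ψ v.2) := by
    have hsum : ∑ v ∈ P ×ˢ R, (ψ v.1 - ψ v.2)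
        = (R.card : ℂ) * ∑ p ∈ P, ψ p - (P.card : ℂ) * ∑ q ∈ R, ψ q := by
      rw [Finset.sum_product]
      have h1 : ∀ p ∈ P, ∑ q ∈ R, (ψ p - ψ q) = (R.card : ℂ) * ψ p - ∑ q ∈ R, ψ q := by
        intro p _
        rw [Finset.sum_sub_distrib, Finset.sum_const, nsmul_eq_mul]
      rw [Finset.sum_congr rfl h1, Finset.sum_sub_distrib, Finset.sum_const, nsmul_eq_mul,
        ← Finset.mul_sum]
    rw [hsum, avg, avg]
    field_simp
  -- step B : Cauchy-Schwarz
  have stepB : ((P.card : ℝ) * R.card) * ‖avg ψ P - avg ψ R‖ ^ 2 ≤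
      ∑ v ∈ P ×ˢ R, ‖ψ v.1 - ψ v.2‖ ^ 2 := by
    rw [stepA]
    rw [norm_mul, norm_inv, mul_pow]
    have hnc : ‖((P.card : ℂ) * (R.card : ℂ))‖ = (P.card : ℝ) * R.card := by
      rw [norm_mul]; simp
    rw [hnc]
    have hCS : ‖∑ v ∈ P ×ˢ R, (ψ v.1 - ψ v.2)‖ ^ 2 ≤
        ((P.card : ℝ) * R.card) * ∑ v ∈ P ×ˢ R, ‖ψ v.1 - ψ v.2‖ ^ 2 := by
      have := sq_norm_sum_le (P ×ˢ R) (fun v => ψ v.1 - ψ v.2)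
      rwa [Finset.card_product, Nat.cast_mul] at this
    have hpos : (0 : ℝ) < (P.card : ℝ) * R.card := by
      rw [hcardP, hcardR]; positivity
    calc ((P.card : ℝ) * R.card) * ((((P.card : ℝ) * R.card))⁻¹ ^ 2 *
            ‖∑ v ∈ P ×ˢ R, (ψ v.1 - ψ v.2)‖ ^ 2)
        ≤ ((P.card : ℝ) * R.card) * ((((P.card : ℝ) * R.card))⁻¹ ^ 2 *
            (((P.card : ℝ) * R.card) * ∑ v ∈ P ×ˢ R, ‖ψ v.1 - ψ v.2‖ ^ 2)) := by
          apply mul_le_mul_of_nonneg_left _ (le_of_lt hpos)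
          exact mul_le_mul_of_nonneg_left hCS (by positivity)
      _ = ∑ v ∈ P ×ˢ R, ‖ψ v.1 - ψ v.2‖ ^ 2 := by
          field_simp
  -- step C : pointwise estimate
  have stepC : ∀ v ∈ P ×ˢ R, ‖ψ v.1 - ψ v.2‖ ^ 2 ≤
      2 * W * Row v.1.2 + 2 * H * Col v.2.1 := by
    rintro ⟨p, q⟩ hv
    rw [Finset.mem_product] at hv
    obtain ⟨hp, hq⟩ := hv
    obtain ⟨hp1, hp2, hp3, hp4⟩ := memP p hp
    obtain ⟨hq1, hq2, hq3, hq4⟩ := memR q hq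
    have hdec : ψ p - ψ q = (ψ (p.1, p.2) - ψ (q.1, p.2)) + (ψ (q.1, p.2) - ψ (q.1, q.2)) := by
      simp
    have h1 : ‖ψ (p.1, p.2) - ψ (q.1, p.2)‖ ^ 2 ≤ W * Row p.2 :=
      step_h ψ p.2 lo₁ hi₁ q.1 p.1 hq1 hq2 hp1 hp2
    have h2 : ‖ψ (q.1, p.2) - ψ (q.1, q.2)‖ ^ 2 ≤ H * Col q.1 :=
      step_v ψ q.1 lo₂ hi₂ q.2 p.2 hq3 hq4 hp3 hp4
    have htri : ‖ψ p - ψ q‖ ^ 2 ≤ 2 * ‖ψ (p.1, p.2) - ψ (q.1, p.2)‖ ^ 2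
        + 2 * ‖ψ (q.1, p.2) - ψ (q.1, q.2)‖ ^ 2 := by
      rw [hdec]
      have h := norm_add_le (ψ (p.1, p.2) - ψ (q.1, p.2)) (ψ (q.1, p.2) - ψ (q.1, q.2))
      have h0 := norm_nonneg (ψ (p.1, p.2) - ψ (q.1, p.2) + (ψ (q.1, p.2) - ψ (q.1, q.2)))
      have h1 := norm_nonneg (ψ (p.1, p.2) - ψ (q.1, p.2))
      have h2 := norm_nonneg (ψ (q.1, p.2) - ψ (q.1, q.2))
      have hsq : ‖ψ (p.1, p.2) - ψ (q.1, p.2) + (ψ (q.1, p.2) - ψ (q.1, q.2))‖ ^ 2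
          ≤ (‖ψ (p.1, p.2) - ψ (q.1, p.2)‖ + ‖ψ (q.1, p.2) - ψ (q.1, q.2)‖) ^ 2 := by
        nlinarith
      nlinarith [sq_nonneg (‖ψ (p.1, p.2) - ψ (q.1, p.2)‖ - ‖ψ (q.1, p.2) - ψ (q.1, q.2)‖)]
    calc ‖ψ p - ψ q‖ ^ 2 ≤ 2 * ‖ψ (p.1, p.2) - ψ (q.1, p.2)‖ ^ 2
        + 2 * ‖ψ (q.1, p.2) - ψ (q.1, q.2)‖ ^ 2 := htri
      _ ≤ 2 * (W * Row p.2) + 2 * (H * Col q.1) := by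
          apply add_le_add
          · apply mul_le_mul_of_nonneg_left h1 (by norm_num)
          · apply mul_le_mul_of_nonneg_left h2 (by norm_num)
      _ = 2 * W * Row p.2 + 2 * H * Col q.1 := by ring
  -- step D : aggregated row and column sums
  have hRow0 : ∀ y, 0 ≤ Row y := by
    intro y; rw [hRow]; positivity
  have hCol0 : ∀ x, 0 ≤ Col x := by
    intro x; rw [hCol]; positivity
  have rowle : ∑ y ∈ Finset.Ico lo₂ hi₂, Row y ≤ E := by
    rw [hE, EBox, box, hRow]
    rw [Finset.sum_product]
    rw [Finset.sum_comm]
    apply Finset.sum_le_sum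
    intro y _
    apply Finset.sum_le_sum
    intro x _
    have h : (0:ℝ) ≤ ‖ψ (x, y + 1) - ψ (x, y)‖ ^ 2 := by positivity
    simp only [Dterm]
    nlinarith [h]
  have colle : ∑ x ∈ Finset.Ico lo₁ hi₁, Col x ≤ E := by
    rw [hE, EBox, box, hCol]
    rw [Finset.sum_product]
    apply Finset.sum_le_sum
    intro x _
    apply Finset.sum_le_sum
    intro y _
    have h : (0:ℝ) ≤ ‖ψ (x + 1, y) - ψ (x, y)‖ ^ 2 := by positivity
    simp only [Dterm]
    nlinarith [h]
  have stepD1 : ∑ v ∈ P ×ˢ R, Row v.1.2 ≤ (R.card : ℝ) * s * E := by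
    rw [Finset.sum_product]
    have : ∀ p ∈ P, ∑ _q ∈ R, Row p.2 = (R.card : ℝ) * Row p.2 := by
      intro p _; rw [Finset.sum_const, nsmul_eq_mul]
    rw [Finset.sum_congr rfl this]
    have hsplit : ∑ p ∈ P, (R.card : ℝ) * Row p.2 = (R.card : ℝ) * ∑ p ∈ P, Row p.2 := by
      rw [Finset.mul_sum]
    rw [hsplit]
    have hPsum : ∑ p ∈ P, Row p.2 ≤ (s : ℝ) * E := by
      rw [hP, box, Finset.sum_product]
      have : ∀ x ∈ Finset.Ico a₁ (a₁ + (s:ℤ)), ∑ y ∈ Finset.Ico a₂ (a₂ + (s:ℤ)), Row y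
          ≤ E := by
        intro x _
        calc ∑ y ∈ Finset.Ico a₂ (a₂ + (s:ℤ)), Row y
            ≤ ∑ y ∈ Finset.Ico lo₂ hi₂, Row y := by
              apply Finset.sum_le_sum_of_subset_of_nonneg
              · apply Finset.Ico_subset_Ico
                · exact min_le_left _ _
                · exact le_max_left _ _
              · intro y _ _; exact hRow0 y
          _ ≤ E := rowle
      calc ∑ x ∈ Finset.Ico a₁ (a₁ + (s:ℤ)), ∑ y ∈ Finset.Ico a₂ (a₂ + (s:ℤ)), Row y
          ≤ ∑ _x ∈ Finset.Ico a₁ (a₁ + (s:ℤ)), E := Finset.sum_le_sum this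
        _ = (s : ℝ) * E := by
            rw [Finset.sum_const, nsmul_eq_mul, card_IcoN]
    calc (R.card : ℝ) * ∑ p ∈ P, Row p.2 ≤ (R.card : ℝ) * ((s:ℝ) * E) := by
          apply mul_le_mul_of_nonneg_left hPsum (by positivity)
      _ = (R.card : ℝ) * s * E := by ring
  have stepD2 : ∑ v ∈ P ×ˢ R, Col v.2.1 ≤ (P.card : ℝ) * t * E := by
    rw [Finset.sum_product]
    have hinner : ∀ p ∈ P, ∑ q ∈ R, Col q.1 ≤ (t : ℝ) * E := by
      intro p _
      rw [hR, box, Finset.sum_product]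
      have : ∀ x ∈ Finset.Ico b₁ (b₁ + (t:ℤ)), ∑ _y ∈ Finset.Ico b₂ (b₂ + (t:ℤ)), Col x
          = (t : ℝ) * Col x := by
        intro x _
        rw [Finset.sum_const, nsmul_eq_mul, card_IcoN]
      rw [Finset.sum_congr rfl this]
      have hsub : ∑ x ∈ Finset.Ico b₁ (b₁ + (t:ℤ)), Col x ≤ E := by
        calc ∑ x ∈ Finset.Ico b₁ (b₁ + (t:ℤ)), Col x
            ≤ ∑ x ∈ Finset.Ico lo₁ hi₁, Col x := by
              apply Finset.sum_le_sum_of_subset_of_nonneg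
              · apply Finset.Ico_subset_Ico
                · exact min_le_right _ _
                · exact le_max_right _ _
              · intro x _ _; exact hCol0 x
          _ ≤ E := colle
      calc ∑ x ∈ Finset.Ico b₁ (b₁ + (t:ℤ)), (t:ℝ) * Col x
          = (t:ℝ) * ∑ x ∈ Finset.Ico b₁ (b₁ + (t:ℤ)), Col x := by rw [Finset.mul_sum]
        _ ≤ (t:ℝ) * E := mul_le_mul_of_nonneg_left hsub (by positivity)
    calc ∑ p ∈ P, ∑ q ∈ R, Col q.1 ≤ ∑ _p ∈ P, (t:ℝ) * E := Finset.sum_le_sum hinner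
      _ = (P.card : ℝ) * ((t:ℝ) * E) := by rw [Finset.sum_const, nsmul_eq_mul]
      _ = (P.card : ℝ) * t * E := by ring
  -- combine
  have main : ((P.card : ℝ) * R.card) * ‖avg ψ P - avg ψ R‖ ^ 2 ≤
      2 * W * ((R.card : ℝ) * s * E) + 2 * H * ((P.card : ℝ) * t * E) := by
    calc ((P.card : ℝ) * R.card) * ‖avg ψ P - avg ψ R‖ ^ 2
        ≤ ∑ v ∈ P ×ˢ R, ‖ψ v.1 - ψ v.2‖ ^ 2 := stepB
      _ ≤ ∑ v ∈ P ×ˢ R, (2 * W * Row v.1.2 + 2 * H * Col v.2.1) := Finset.sum_le_sum stepC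
      _ = 2 * W * ∑ v ∈ P ×ˢ R, Row v.1.2 + 2 * H * ∑ v ∈ P ×ˢ R, Col v.2.1 := by
          rw [Finset.sum_add_distrib, Finset.mul_sum, Finset.mul_sum]
      _ ≤ 2 * W * ((R.card : ℝ) * s * E) + 2 * H * ((P.card : ℝ) * t * E) := by
          apply add_le_add
          · apply mul_le_mul_of_nonneg_left stepD1 (by positivity)
          · apply mul_le_mul_of_nonneg_left stepD2 (by positivity)
  -- deduce the claim
  have hsr : (0:ℝ) < s := by exact_mod_cast hs
  have htr : (0:ℝ) < t := by exact_mod_cast ht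
  rw [hcardP, hcardR] at main
  push_cast at main
  have hnn : (0:ℝ) ≤ ‖avg ψ P - avg ψ R‖ ^ 2 := by positivity
  nlinarith [main, mul_pos hsr htr, mul_nonneg (mul_nonneg hW0 htr.le) hE0,
    mul_nonneg (mul_nonneg hH0 hsr.le) hE0]


/-- dyadic square attached to a base point -/
noncomputable def SQ (w : ℤ × ℤ) (k : ℕ) : Finset (ℤ × ℤ) :=
  box (w.1 + ((2 ^ k : ℕ) : ℤ)) (w.1 + ((2 ^ k : ℕ) : ℤ) + ((2 ^ k : ℕ) : ℤ)) w.2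
    (w.2 + ((2 ^ k : ℕ) : ℤ))

lemma avg_singleton (ψ : ℤ × ℤ → ℂ) (a b : ℤ) :
    avg ψ (box a (a + 1) b (b + 1)) = ψ (a, b) := by
  have h1 : Finset.Ico a (a + 1) = {a} := by
    ext x; simp [Finset.mem_Ico]; omega
  have h2 : Finset.Ico b (b + 1) = {b} := by
    ext x; simp [Finset.mem_Ico]; omega
  rw [avg, box, h1, h2, Finset.singleton_product_singleton]
  simp

lemma div_aux {st d c E : ℝ} (hst : 0 < st) (hE : 0 ≤ E) (hb : st * d ≤ c * E)
    (hc : c ≤ 8 * st) : d ≤ 8 * E := by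
  have h2 : st * d ≤ st * (8 * E) := by nlinarith
  exact le_of_mul_le_mul_left h2 hst

lemma minmax_aux1 {a b p d : ℤ} (hp : 0 ≤ p) (h : |b - a| ≤ d) :
    0 ≤ max (a + p + p) (b + p + p) - min (a + p) (b + p) ∧
      max (a + p + p) (b + p + p) - min (a + p) (b + p) ≤ p + d := by
  rcases abs_le.mp h with ⟨h1, h2⟩
  rcases le_total a b with h' | h'
  · rw [max_eq_right (by linarith), min_eq_left (by linarith)]
    constructor <;> linarith
  · rw [max_eq_left (by linarith), min_eq_right (by linarith)]
    constructor <;> linarith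

lemma minmax_aux2 {a b p d : ℤ} (hp : 0 ≤ p) (h : |b - a| ≤ d) :
    0 ≤ max (a + p) (b + p) - min a b ∧ max (a + p) (b + p) - min a b ≤ p + d := by
  rcases abs_le.mp h with ⟨h1, h2⟩
  rcases le_total a b with h' | h'
  · rw [max_eq_right (by linarith), min_eq_left (by linarith)]
    constructor <;> linarith
  · rw [max_eq_left (by linarith), min_eq_right (by linarith)]
    constructor <;> linarith

lemma div_aux2 {st d c E T : ℝ} (hst : 0 < st) (hb : st * d ≤ c * E) (hc0 : 0 ≤ c)
    (hc : c ≤ 8 * st) (hET : E ≤ T) (hE0 : 0 ≤ E) : d ≤ 8 * T := by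
  have h1 : c * E ≤ c * T := mul_le_mul_of_nonneg_left hET hc0
  have h2 : c * T ≤ 8 * st * T := by
    apply mul_le_mul_of_nonneg_right hc (le_trans hE0 hET)
  have h3 : st * d ≤ st * (8 * T) := by nlinarith
  exact le_of_mul_le_mul_left h3 hst

lemma EBox_le_Tform {ψ : ℤ × ℤ → ℂ} {S : Finset (ℤ × ℤ)} (hsupp : ∀ v ∉ S, ψ v = 0)
    (x₁ x₂ y₁ y₂ : ℤ) : EBox ψ x₁ x₂ y₁ y₂ ≤ Tform ψ := by
  rw [EBox]; exact sum_Dterm_le_Tform hsupp _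

lemma Int.cast_sub_le_real {X m q : ℤ} (h : X - m ≤ q) : ((X : ℝ) - (m : ℝ)) ≤ (q : ℝ) := by
  have h2 : ((X - m : ℤ) : ℝ) ≤ ((q : ℤ) : ℝ) := Int.cast_le.mpr h
  push_cast at h2
  linarith

lemma Int.cast_sub_nonneg_real {X m : ℤ} (h : 0 ≤ X - m) : (0:ℝ) ≤ (X : ℝ) - (m : ℝ) := by
  have h2 : ((0 : ℤ) : ℝ) ≤ ((X - m : ℤ) : ℝ) := Int.cast_le.mpr h
  push_cast at h2
  linarith

lemma bridge_init (ψ : ℤ × ℤ → ℂ) {S : Finset (ℤ × ℤ)} (hsupp : ∀ v ∉ S, ψ v = 0)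
    (w : ℤ × ℤ) : ‖ψ w - avg ψ (SQ w 0)‖ ^ 2 ≤ 8 * Tform ψ := by
  have hb := bridge ψ w.1 w.2 (w.1 + ((2 ^ 0 : ℕ) : ℤ)) w.2 (2 ^ 0) (2 ^ 0)
    (by positivity) (by positivity)
  have havg : avg ψ (box w.1 (w.1 + ((2 ^ 0 : ℕ) : ℤ)) w.2 (w.2 + ((2 ^ 0 : ℕ) : ℤ)))
      = ψ w := by
    norm_num [avg_singleton]
  have hbox : box (w.1 + ((2 ^ 0 : ℕ) : ℤ)) (w.1 + ((2 ^ 0 : ℕ) : ℤ) + ((2 ^ 0 : ℕ) : ℤ)) w.2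
      (w.2 + ((2 ^ 0 : ℕ) : ℤ)) = SQ w 0 := rfl
  rw [havg, hbox] at hb
  have hp : (0:ℤ) ≤ ((2 ^ 0 : ℕ) : ℤ) := by positivity
  have hx := minmax_aux2 (a := w.1) (b := w.1 + ((2 ^ 0 : ℕ) : ℤ)) (p := ((2 ^ 0 : ℕ) : ℤ))
    (d := ((2 ^ 0 : ℕ) : ℤ)) hp (by rw [add_sub_cancel_left, abs_of_nonneg hp])
  have hy := minmax_aux2 (a := w.2) (b := w.2) (p := ((2 ^ 0 : ℕ) : ℤ)) (d := 0) hp (by simp)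
  have hpr : (0:ℝ) < ((2 ^ 0 : ℕ) : ℝ) := by positivity
  have hxr := Int.cast_sub_le_real hx.2
  have hxr0 := Int.cast_sub_nonneg_real hx.1
  have hyr := Int.cast_sub_le_real hy.2
  have hyr0 := Int.cast_sub_nonneg_real hy.1
  have hxr' := le_trans hxr (by push_cast; linarith : ((((2 ^ 0 : ℕ) : ℤ) + ((2 ^ 0 : ℕ) : ℤ) : ℤ) : ℝ) ≤ 2 * ((2 ^ 0 : ℕ) : ℝ))
  have hyr' := le_trans hyr (by push_cast; linarith : ((((2 ^ 0 : ℕ) : ℤ) + 0 : ℤ) : ℝ) ≤ 2 * ((2 ^ 0 : ℕ) : ℝ))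
  refine div_aux2 (by positivity) hb ?_ ?_ (EBox_le_Tform hsupp _ _ _ _) (EBox_nonneg ψ _ _ _ _)
  · nlinarith [hxr0, hyr0, hpr]
  · nlinarith [hxr', hyr', hxr0, hyr0, hpr]

lemma bridge_top (ψ : ℤ × ℤ → ℂ) {S : Finset (ℤ × ℤ)} (hsupp : ∀ v ∉ S, ψ v = 0)
    (w z : ℤ × ℤ) (K : ℕ) (h1 : |z.1 - w.1| ≤ ((2 ^ K : ℕ) : ℤ))
    (h2 : |z.2 - w.2| ≤ ((2 ^ K : ℕ) : ℤ)) :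
    ‖avg ψ (SQ w K) - avg ψ (SQ z K)‖ ^ 2 ≤ 8 * Tform ψ := by
  have hb := bridge ψ (w.1 + ((2 ^ K : ℕ) : ℤ)) w.2 (z.1 + ((2 ^ K : ℕ) : ℤ)) z.2
    (2 ^ K) (2 ^ K) (by positivity) (by positivity)
  have hbox1 : box (w.1 + ((2 ^ K : ℕ) : ℤ)) (w.1 + ((2 ^ K : ℕ) : ℤ) + ((2 ^ K : ℕ) : ℤ)) w.2
      (w.2 + ((2 ^ K : ℕ) : ℤ)) = SQ w K := rfl
  have hbox2 : box (z.1 + ((2 ^ K : ℕ) : ℤ)) (z.1 + ((2 ^ K : ℕ) : ℤ) + ((2 ^ K : ℕ) : ℤ)) z.2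
      (z.2 + ((2 ^ K : ℕ) : ℤ)) = SQ z K := rfl
  rw [hbox1, hbox2] at hb
  have hp : (0:ℤ) ≤ ((2 ^ K : ℕ) : ℤ) := by positivity
  have habs : |z.1 + ((2 ^ K : ℕ) : ℤ) - (w.1 + ((2 ^ K : ℕ) : ℤ))| ≤ ((2 ^ K : ℕ) : ℤ) := by
    have : z.1 + ((2 ^ K : ℕ) : ℤ) - (w.1 + ((2 ^ K : ℕ) : ℤ)) = z.1 - w.1 := by ring
    rw [this]; exact h1
  have hx := minmax_aux2 (a := w.1 + ((2 ^ K : ℕ) : ℤ)) (b := z.1 + ((2 ^ K : ℕ) : ℤ))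
    (p := ((2 ^ K : ℕ) : ℤ)) (d := ((2 ^ K : ℕ) : ℤ)) hp habs
  have hy := minmax_aux2 (a := w.2) (b := z.2) (p := ((2 ^ K : ℕ) : ℤ))
    (d := ((2 ^ K : ℕ) : ℤ)) hp h2
  have hpr : (0:ℝ) < ((2 ^ K : ℕ) : ℝ) := by positivity
  have hxr := Int.cast_sub_le_real hx.2
  have hxr0 := Int.cast_sub_nonneg_real hx.1
  have hyr := Int.cast_sub_le_real hy.2
  have hyr0 := Int.cast_sub_nonneg_real hy.1
  have hxr' := le_trans hxr (by push_cast; linarith : ((((2 ^ K : ℕ) : ℤ) + ((2 ^ K : ℕ) : ℤ) : ℤ) : ℝ) ≤ 2 * ((2 ^ K : ℕ) : ℝ))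
  have hyr' := le_trans hyr (by push_cast; linarith : ((((2 ^ K : ℕ) : ℤ) + ((2 ^ K : ℕ) : ℤ) : ℤ) : ℝ) ≤ 2 * ((2 ^ K : ℕ) : ℝ))
  refine div_aux2 (by positivity) hb ?_ ?_ (EBox_le_Tform hsupp _ _ _ _) (EBox_nonneg ψ _ _ _ _)
  · nlinarith [hxr0, hyr0, hpr]
  · nlinarith [hxr', hyr', hxr0, hyr0, hpr]

lemma bridge_step (ψ : ℤ × ℤ → ℂ) (w : ℤ × ℤ) (k : ℕ) :
    ‖avg ψ (SQ w k) - avg ψ (SQ w (k + 1))‖ ^ 2 ≤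
      8 * EBox ψ (w.1 + ((2 ^ k : ℕ) : ℤ)) (w.1 + ((2 ^ (k + 2) : ℕ) : ℤ)) w.2
        (w.2 + ((2 ^ (k + 1) : ℕ) : ℤ)) := by
  have hb := bridge ψ (w.1 + ((2 ^ k : ℕ) : ℤ)) w.2 (w.1 + ((2 ^ (k + 1) : ℕ) : ℤ)) w.2
    (2 ^ k) (2 ^ (k + 1)) (by positivity) (by positivity)
  have e1 : ((2 ^ (k + 1) : ℕ) : ℤ) = 2 * ((2 ^ k : ℕ) : ℤ) := by push_cast [pow_succ]; ring
  have e2 : ((2 ^ (k + 2) : ℕ) : ℤ) = 4 * ((2 ^ k : ℕ) : ℤ) := by push_cast [pow_succ]; ring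
  have hp : (0 : ℤ) < ((2 ^ k : ℕ) : ℤ) := by positivity
  have hm1 : min (w.1 + ((2 ^ k : ℕ) : ℤ)) (w.1 + ((2 ^ (k + 1) : ℕ) : ℤ))
      = w.1 + ((2 ^ k : ℕ) : ℤ) := by
    rw [e1]; apply min_eq_left; linarith
  have hm2 : max (w.1 + ((2 ^ k : ℕ) : ℤ) + ((2 ^ k : ℕ) : ℤ))
      (w.1 + ((2 ^ (k + 1) : ℕ) : ℤ) + ((2 ^ (k + 1) : ℕ) : ℤ))
      = w.1 + ((2 ^ (k + 2) : ℕ) : ℤ) := by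
    rw [e1, e2]
    have : max (w.1 + ((2 ^ k : ℕ) : ℤ) + ((2 ^ k : ℕ) : ℤ))
        (w.1 + 2 * ((2 ^ k : ℕ) : ℤ) + 2 * ((2 ^ k : ℕ) : ℤ))
        = w.1 + 2 * ((2 ^ k : ℕ) : ℤ) + 2 * ((2 ^ k : ℕ) : ℤ) := by
      apply max_eq_right; linarith
    rw [this]; ring
  have hm3 : min w.2 w.2 = w.2 := min_self _
  have hm4 : max (w.2 + ((2 ^ k : ℕ) : ℤ)) (w.2 + ((2 ^ (k + 1) : ℕ) : ℤ))
      = w.2 + ((2 ^ (k + 1) : ℕ) : ℤ) := by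
    rw [e1]; apply max_eq_right; linarith
  rw [hm1, hm2, hm3, hm4] at hb
  have hPQ : box (w.1 + ((2 ^ k : ℕ) : ℤ)) (w.1 + ((2 ^ k : ℕ) : ℤ) + ((2 ^ k : ℕ) : ℤ)) w.2
      (w.2 + ((2 ^ k : ℕ) : ℤ)) = SQ w k := rfl
  have hRQ : box (w.1 + ((2 ^ (k + 1) : ℕ) : ℤ))
      (w.1 + ((2 ^ (k + 1) : ℕ) : ℤ) + ((2 ^ (k + 1) : ℕ) : ℤ)) w.2
      (w.2 + ((2 ^ (k + 1) : ℕ) : ℤ)) = SQ w (k + 1) := rfl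
  rw [hPQ, hRQ] at hb
  apply div_aux (st := ((2 ^ k : ℕ) : ℝ) * ((2 ^ (k + 1) : ℕ) : ℝ)) (by positivity)
    (EBox_nonneg ψ _ _ _ _) hb
  push_cast
  ring_nf
  nlinarith [pow_pos (by norm_num : (0:ℝ) < 2) k]


lemma box_disjoint_of_x {x₁ x₂ y₁ y₂ x₁' x₂' y₁' y₂' : ℤ} (h : x₂ ≤ x₁') :
    Disjoint (box x₁ x₂ y₁ y₂) (box x₁' x₂' y₁' y₂') := by
  rw [Finset.disjoint_left]
  intro a ha ha'
  rw [box, Finset.mem_product, Finset.mem_Ico, Finset.mem_Ico] at ha ha'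
  omega

/-- middle bridge box -/
noncomputable def midbox (w : ℤ × ℤ) (k : ℕ) : Finset (ℤ × ℤ) :=
  box (w.1 + ((2 ^ k : ℕ) : ℤ)) (w.1 + ((2 ^ (k + 2) : ℕ) : ℤ)) w.2
    (w.2 + ((2 ^ (k + 1) : ℕ) : ℤ))

lemma midbox_disjoint (w : ℤ × ℤ) {k k' : ℕ} (h : k + 2 ≤ k') :
    Disjoint (midbox w k) (midbox w k') := by
  apply box_disjoint_of_x
  have h1 : (2:ℕ) ^ (k + 2) ≤ 2 ^ k' := Nat.pow_le_pow_right (by norm_num) h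
  have h2 : ((2 ^ (k + 2) : ℕ) : ℤ) ≤ ((2 ^ k' : ℕ) : ℤ) := Int.ofNat_le.mpr h1
  omega

lemma sum_sum_le_Tform {ψ : ℤ × ℤ → ℂ} {S : Finset (ℤ × ℤ)} (hsupp : ∀ v ∉ S, ψ v = 0)
    {ι : Type*} [DecidableEq ι] (s : Finset ι) (A : ι → Finset (ℤ × ℤ))
    (hdisj : (s : Set ι).PairwiseDisjoint A) :
    ∑ k ∈ s, ∑ v ∈ A k, Dterm ψ v ≤ Tform ψ := by
  rw [← Finset.sum_biUnion hdisj]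
  exact sum_Dterm_le_Tform hsupp _

lemma half_chain (ψ : ℤ × ℤ → ℂ) {S : Finset (ℤ × ℤ)} (hsupp : ∀ v ∉ S, ψ v = 0)
    (w : ℤ × ℤ) (K : ℕ) :
    ‖ψ w - avg ψ (SQ w K)‖ ^ 2 ≤ 24 * ((K : ℝ) + 1) * Tform ψ := by
  classical
  set u : ℕ → ℂ := fun j => if j = 0 then ψ w else avg ψ (SQ w (j - 1)) with hu
  have hT0 : 0 ≤ Tform ψ := Tform_nonneg ψ
  have htele : avg ψ (SQ w K) - ψ w = ∑ j ∈ Finset.range (K + 1), (u (j + 1) - u j) := by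
    rw [Finset.sum_range_sub u (K + 1)]
    simp [hu]
  have hrev : ‖ψ w - avg ψ (SQ w K)‖ ^ 2
      = ‖∑ j ∈ Finset.range (K + 1), (u (j + 1) - u j)‖ ^ 2 := by
    rw [← htele, norm_sub_rev]
  have hCS : ‖∑ j ∈ Finset.range (K + 1), (u (j + 1) - u j)‖ ^ 2
      ≤ ((K : ℝ) + 1) * ∑ j ∈ Finset.range (K + 1), ‖u (j + 1) - u j‖ ^ 2 := by
    have h := sq_norm_sum_le (Finset.range (K + 1)) (fun j => u (j + 1) - u j)
    rwa [Finset.card_range, Nat.cast_add, Nat.cast_one] at h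
  have hterm : ∑ j ∈ Finset.range (K + 1), ‖u (j + 1) - u j‖ ^ 2 ≤ 24 * Tform ψ := by
    rw [Finset.sum_range_succ']
    have h0 : ‖u (0 + 1) - u 0‖ ^ 2 ≤ 8 * Tform ψ := by
      have he : u (0 + 1) - u 0 = avg ψ (SQ w 0) - ψ w := by simp [hu]
      rw [he, norm_sub_rev]
      exact bridge_init ψ hsupp w
    have hmid : ∀ j ∈ Finset.range K, ‖u (j + 1 + 1) - u (j + 1)‖ ^ 2
        ≤ 8 * ∑ v ∈ midbox w j, Dterm ψ v := by
      intro j _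
      have he : u (j + 1 + 1) - u (j + 1) = avg ψ (SQ w (j + 1)) - avg ψ (SQ w j) := by
        simp [hu]
      rw [he, norm_sub_rev]
      exact bridge_step ψ w j
    have hmidsum : ∑ j ∈ Finset.range K, ∑ v ∈ midbox w j, Dterm ψ v ≤ 2 * Tform ψ := by
      rw [← Finset.sum_filter_add_sum_filter_not (Finset.range K) (fun j => j % 2 = 0)]
      have heven : ∑ j ∈ (Finset.range K).filter (fun j => j % 2 = 0),
          ∑ v ∈ midbox w j, Dterm ψ v ≤ Tform ψ := by
        apply sum_sum_le_Tform hsupp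
        intro a ha b hb hab
        simp only [Finset.coe_filter, Set.mem_setOf_eq, Finset.mem_range] at ha hb
        rcases lt_or_gt_of_ne hab with h | h
        · exact midbox_disjoint w (by omega)
        · exact (midbox_disjoint w (by omega)).symm
      have hodd : ∑ j ∈ (Finset.range K).filter (fun j => ¬ j % 2 = 0),
          ∑ v ∈ midbox w j, Dterm ψ v ≤ Tform ψ := by
        apply sum_sum_le_Tform hsupp
        intro a ha b hb hab
        simp only [Finset.coe_filter, Set.mem_setOf_eq, Finset.mem_range] at ha hb
        rcases lt_or_gt_of_ne hab with h | h
        · exact midbox_disjoint w (by omega)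
        · exact (midbox_disjoint w (by omega)).symm
      linarith
    have hstep : ∑ j ∈ Finset.range K, ‖u (j + 1 + 1) - u (j + 1)‖ ^ 2
        ≤ 8 * (2 * Tform ψ) := by
      calc ∑ j ∈ Finset.range K, ‖u (j + 1 + 1) - u (j + 1)‖ ^ 2
          ≤ ∑ j ∈ Finset.range K, 8 * ∑ v ∈ midbox w j, Dterm ψ v :=
            Finset.sum_le_sum hmid
        _ = 8 * ∑ j ∈ Finset.range K, ∑ v ∈ midbox w j, Dterm ψ v := by
            rw [Finset.mul_sum]
        _ ≤ 8 * (2 * Tform ψ) := by linarith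
    linarith
  have hK0 : (0:ℝ) ≤ (K : ℝ) + 1 := by positivity
  calc ‖ψ w - avg ψ (SQ w K)‖ ^ 2
      ≤ ((K : ℝ) + 1) * ∑ j ∈ Finset.range (K + 1), ‖u (j + 1) - u j‖ ^ 2 := by
        rw [hrev]; exact hCS
    _ ≤ ((K : ℝ) + 1) * (24 * Tform ψ) := mul_le_mul_of_nonneg_left hterm hK0
    _ = 24 * ((K : ℝ) + 1) * Tform ψ := by ring


lemma natAbs_le_normZ2 (z : ℤ × ℤ) : ((max z.1.natAbs z.2.natAbs : ℕ) : ℝ) ≤ normZ2 z := by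
  rcases le_total z.1.natAbs z.2.natAbs with h | h
  · rw [max_eq_right h]
    have h1 : ((z.2.natAbs : ℕ) : ℝ) = |(z.2 : ℝ)| := by
      rw [Nat.cast_natAbs]; exact Int.cast_abs
    rw [h1, normZ2]
    rw [← Real.sqrt_sq_eq_abs]
    apply Real.sqrt_le_sqrt
    nlinarith [sq_nonneg ((z.1 : ℝ))]
  · rw [max_eq_left h]
    have h1 : ((z.1.natAbs : ℕ) : ℝ) = |(z.1 : ℝ)| := by
      rw [Nat.cast_natAbs]; exact Int.cast_abs
    rw [h1, normZ2]
    rw [← Real.sqrt_sq_eq_abs]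
    apply Real.sqrt_le_sqrt
    nlinarith [sq_nonneg ((z.2 : ℝ))]

lemma resist (ψ : ℤ × ℤ → ℂ) {S : Finset (ℤ × ℤ)} (hsupp : ∀ v ∉ S, ψ v = 0)
    (h0 : ψ (0, 0) = 0) (z : ℤ × ℤ) :
    ‖ψ z‖ ^ 2 ≤ 1000 * Real.log (2 + normZ2 z) * Tform ψ := by
  have hT0 := Tform_nonneg ψ
  have hN0 : 0 ≤ normZ2 z := Real.sqrt_nonneg _
  have hlogpos : 0 < Real.log (2 + normZ2 z) := Real.log_pos (by linarith)
  by_cases hz0 : z = (0, 0)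
  · have hz : ψ z = 0 := by rw [hz0]; exact h0
    rw [hz]
    simp only [norm_zero]
    have := mul_nonneg (mul_nonneg (by norm_num : (0:ℝ) ≤ 1000) hlogpos.le) hT0
    nlinarith
  -- main case
  set n : ℕ := max z.1.natAbs z.2.natAbs with hn
  have hnpos : 0 < n := by
    rw [hn]
    by_contra hcon
    push_neg at hcon
    have hmax0 : z.1.natAbs ⊔ z.2.natAbs = 0 := Nat.le_zero.mp hcon
    have h12 := Nat.max_eq_zero_iff.mp hmax0
    exact absurd (Prod.ext (Int.natAbs_eq_zero.mp h12.1) (Int.natAbs_eq_zero.mp h12.2)) hz0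
  set L : ℕ := Nat.log 2 n with hL
  set K : ℕ := L + 1 with hK
  have hnK : (n : ℤ) < ((2 ^ K : ℕ) : ℤ) := by
    exact_mod_cast Nat.lt_pow_succ_log_self (by norm_num) n
  have hz1 : |z.1| ≤ ((2 ^ K : ℕ) : ℤ) := by
    rw [Int.abs_eq_natAbs]
    have h1 : z.1.natAbs ≤ n := le_max_left _ _
    have h2 : ((z.1.natAbs : ℕ) : ℤ) ≤ ((n : ℕ) : ℤ) := Int.ofNat_le.mpr h1
    omega
  have hz2 : |z.2| ≤ ((2 ^ K : ℕ) : ℤ) := by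
    rw [Int.abs_eq_natAbs]
    have h1 : z.2.natAbs ≤ n := le_max_right _ _
    have h2 : ((z.2.natAbs : ℕ) : ℤ) ≤ ((n : ℕ) : ℤ) := Int.ofNat_le.mpr h1
    omega
  have ha := half_chain ψ hsupp (0, 0) K
  have hc := half_chain ψ hsupp z K
  have hb := bridge_top ψ hsupp (0, 0) z K (by simpa using hz1) (by simpa using hz2)
  have hiden : (ψ z - avg ψ (SQ z K)) + (avg ψ (SQ z K) - avg ψ (SQ (0, 0) K))
      + (avg ψ (SQ (0, 0) K) - ψ (0, 0)) = ψ z := by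
    rw [h0]; ring
  have htri : ‖ψ z‖ ≤ ‖ψ z - avg ψ (SQ z K)‖ + ‖avg ψ (SQ z K) - avg ψ (SQ (0, 0) K)‖
      + ‖avg ψ (SQ (0, 0) K) - ψ (0, 0)‖ := by
    calc ‖ψ z‖ = ‖(ψ z - avg ψ (SQ z K)) + (avg ψ (SQ z K) - avg ψ (SQ (0, 0) K))
        + (avg ψ (SQ (0, 0) K) - ψ (0, 0))‖ := by rw [hiden]
      _ ≤ _ := norm_add₃_le
  have hcsq : ‖ψ z - avg ψ (SQ z K)‖ ^ 2 ≤ 24 * ((K : ℝ) + 1) * Tform ψ := hc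
  have hbsq : ‖avg ψ (SQ z K) - avg ψ (SQ (0, 0) K)‖ ^ 2 ≤ 8 * Tform ψ := by
    rw [norm_sub_rev]; exact hb
  have hasq : ‖avg ψ (SQ (0, 0) K) - ψ (0, 0)‖ ^ 2 ≤ 24 * ((K : ℝ) + 1) * Tform ψ := by
    rw [norm_sub_rev]; exact ha
  have hsq : ‖ψ z‖ ^ 2 ≤ 168 * ((K : ℝ) + 1) * Tform ψ := by
    have h1 := norm_nonneg (ψ z - avg ψ (SQ z K))
    have h2 := norm_nonneg (avg ψ (SQ z K) - avg ψ (SQ (0, 0) K))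
    have h3 := norm_nonneg (avg ψ (SQ (0, 0) K) - ψ (0, 0))
    have h4 := norm_nonneg (ψ z)
    have hK1 : (1 : ℝ) ≤ (K : ℝ) + 1 := by linarith [Nat.cast_nonneg (α := ℝ) K]
    nlinarith [htri, hcsq, hbsq, hasq,
      sq_nonneg (‖ψ z - avg ψ (SQ z K)‖ - ‖avg ψ (SQ z K) - avg ψ (SQ (0, 0) K)‖),
      sq_nonneg (‖ψ z - avg ψ (SQ z K)‖ - ‖avg ψ (SQ (0, 0) K) - ψ (0, 0)‖),
      sq_nonneg (‖avg ψ (SQ z K) - avg ψ (SQ (0, 0) K)‖ - ‖avg ψ (SQ (0, 0) K) - ψ (0, 0)‖),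
      mul_le_mul_of_nonneg_right hK1 hT0]
  -- logarithmic bound on K
  set G : ℝ := Real.log (2 + normZ2 z) with hG
  have hpow : ((2 ^ L : ℕ) : ℝ) ≤ (n : ℝ) := by
    exact_mod_cast Nat.pow_log_le_self 2 hnpos.ne'
  have hlogL : (L : ℝ) * Real.log 2 ≤ Real.log n := by
    have h1 : Real.log ((2 : ℝ) ^ L) ≤ Real.log n := by
      apply Real.log_le_log (by positivity)
      calc ((2 : ℝ) ^ L) = ((2 ^ L : ℕ) : ℝ) := by push_cast; ring
        _ ≤ (n : ℝ) := hpow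
    rwa [Real.log_pow] at h1
  have hnN : (n : ℝ) ≤ normZ2 z := natAbs_le_normZ2 z
  have hlogn : Real.log n ≤ G := by
    apply Real.log_le_log (by exact_mod_cast hnpos)
    linarith
  have e1 : (L : ℝ) * Real.log 2 ≤ G := le_trans hlogL hlogn
  have e2 : Real.log 2 ≤ G := by
    apply Real.log_le_log (by norm_num)
    linarith
  have e3 : (0.6931471803 : ℝ) < Real.log 2 := Real.log_two_gt_d9
  have e4 : Real.log 2 < 0.6931471808 := Real.log_two_lt_d9
  have hKL : (K : ℝ) + 1 = (L : ℝ) + 2 := by rw [hK]; push_cast; ring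
  have hfinal : 168 * ((K : ℝ) + 1) ≤ 1000 * G := by
    rw [hKL]
    nlinarith [e1, e2, e3, e4, Nat.cast_nonneg (α := ℝ) L]
  calc ‖ψ z‖ ^ 2 ≤ 168 * ((K : ℝ) + 1) * Tform ψ := hsq
    _ ≤ 1000 * G * Tform ψ := mul_le_mul_of_nonneg_right hfinal hT0
    _ = 1000 * Real.log (2 + normZ2 z) * Tform ψ := by rw [hG]


/-! ### Dirichlet inner product -/

noncomputable def ipdT (φ ψ : ℤ × ℤ → ℂ) (x : ℤ × ℤ) : ℂ :=
  (starRingEnd ℂ) (φ (x.1 + 1, x.2) - φ x) * (ψ (x.1 + 1, x.2) - ψ x) +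
    (starRingEnd ℂ) (φ (x.1, x.2 + 1) - φ x) * (ψ (x.1, x.2 + 1) - ψ x)

noncomputable def ipd (φ ψ : ℤ × ℤ → ℂ) : ℂ := ∑' x : ℤ × ℤ, ipdT φ ψ x

lemma shifts_zero {φ : ℤ × ℤ → ℂ} {s : Finset (ℤ × ℤ)}
    (hφ : ∀ v ∉ s, φ v = 0) {x : ℤ × ℤ} (hx : x ∉ cand s) :
    φ x = 0 ∧ φ (x.1 + 1, x.2) = 0 ∧ φ (x.1, x.2 + 1) = 0 := by
  simp only [cand, Finset.mem_union, Finset.mem_image, not_or, not_exists, not_and] at hx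
  obtain ⟨⟨h1, h2⟩, h3⟩ := hx
  refine ⟨hφ x h1, ?_, ?_⟩
  · by_contra h
    have hmem : (x.1 + 1, x.2) ∈ s := by
      by_contra hm; exact h (hφ _ hm)
    exact h2 _ hmem (by simp)
  · by_contra h
    have hmem : (x.1, x.2 + 1) ∈ s := by
      by_contra hm; exact h (hφ _ hm)
    exact h3 _ hmem (by simp)

lemma ipdT_zero_left {φ ψ : ℤ × ℤ → ℂ} {s : Finset (ℤ × ℤ)}
    (hφ : ∀ v ∉ s, φ v = 0) {x : ℤ × ℤ} (hx : x ∉ cand s) : ipdT φ ψ x = 0 := by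
  obtain ⟨h1, h2, h3⟩ := shifts_zero hφ hx
  simp [ipdT, h1, h2, h3]

lemma ipd_eq_sum {φ ψ : ℤ × ℤ → ℂ} {s B : Finset (ℤ × ℤ)}
    (hφ : ∀ v ∉ s, φ v = 0) (hB : cand s ⊆ B) :
    ipd φ ψ = ∑ x ∈ B, ipdT φ ψ x := by
  apply tsum_eq_sum
  intro x hx
  exact ipdT_zero_left hφ (fun hc => hx (hB hc))

lemma summable_ipdT {φ ψ : ℤ × ℤ → ℂ} {s : Finset (ℤ × ℤ)}
    (hφ : ∀ v ∉ s, φ v = 0) : Summable (ipdT φ ψ) :=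
  summable_of_ne_finset_zero (s := cand s) (fun _ hx => ipdT_zero_left hφ hx)

lemma conj_mul_self (z : ℂ) : (starRingEnd ℂ) z * z = ((‖z‖ ^ 2 : ℝ) : ℂ) := by
  rw [mul_comm, Complex.mul_conj, ← Complex.sq_norm]

lemma ipd_self {φ : ℤ × ℤ → ℂ} {s : Finset (ℤ × ℤ)} (hφ : ∀ v ∉ s, φ v = 0) :
    ipd φ φ = ((Tform φ : ℝ) : ℂ) := by
  rw [ipd_eq_sum hφ (le_refl (cand s)), Tform,
    tsum_eq_sum (s := cand s) (fun x hx => Dterm_eq_zero hφ hx)]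
  push_cast
  apply Finset.sum_congr rfl
  intro x _
  rw [ipdT, conj_mul_self, conj_mul_self, Dterm]
  push_cast
  ring

lemma ipd_conj_symm {φ ψ : ℤ × ℤ → ℂ} {s t : Finset (ℤ × ℤ)}
    (hφ : ∀ v ∉ s, φ v = 0) (hψ : ∀ v ∉ t, ψ v = 0) :
    (starRingEnd ℂ) (ipd ψ φ) = ipd φ ψ := by
  rw [ipd_eq_sum hψ (Finset.subset_union_right (s₁ := cand s)),
    ipd_eq_sum hφ (Finset.subset_union_left (s₂ := cand t)), map_sum]
  apply Finset.sum_congr rfl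
  intro x _
  simp only [ipdT, map_add, map_mul, Complex.conj_conj]
  ring

lemma ipd_add_left {φ χ ψ : ℤ × ℤ → ℂ} {s t u : Finset (ℤ × ℤ)}
    (hφ : ∀ v ∉ s, φ v = 0) (hχ : ∀ v ∉ t, χ v = 0) (hψ : ∀ v ∉ u, ψ v = 0) :
    ipd (φ + χ) ψ = ipd φ ψ + ipd χ ψ := by
  have hsum : ∀ v ∉ s ∪ t, (φ + χ) v = 0 := by
    intro v hv
    rw [Finset.mem_union] at hv
    push_neg at hv
    simp [hφ v hv.1, hχ v hv.2]
  have hφ' : ∀ v ∉ s ∪ t, φ v = 0 := fun v hv => hφ v (fun h =>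
    hv (Finset.mem_union_left _ h))
  have hχ' : ∀ v ∉ s ∪ t, χ v = 0 := fun v hv => hχ v (fun h =>
    hv (Finset.mem_union_right _ h))
  rw [ipd_eq_sum hsum (le_refl _), ipd_eq_sum hφ' (le_refl _), ipd_eq_sum hχ' (le_refl _),
    ← Finset.sum_add_distrib]
  apply Finset.sum_congr rfl
  intro x _
  simp only [ipdT, Pi.add_apply]
  have e1 : φ (x.1 + 1, x.2) + χ (x.1 + 1, x.2) - (φ x + χ x)
      = (φ (x.1 + 1, x.2) - φ x) + (χ (x.1 + 1, x.2) - χ x) := by ring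
  have e2 : φ (x.1, x.2 + 1) + χ (x.1, x.2 + 1) - (φ x + χ x)
      = (φ (x.1, x.2 + 1) - φ x) + (χ (x.1, x.2 + 1) - χ x) := by ring
  rw [e1, e2, map_add, map_add]
  ring

lemma ipd_smul_left (c : ℂ) (φ ψ : ℤ × ℤ → ℂ) :
    ipd (c • φ) ψ = (starRingEnd ℂ) c * ipd φ ψ := by
  rw [ipd, ipd, ← tsum_mul_left]
  apply tsum_congr
  intro x
  simp only [ipdT, Pi.smul_apply, smul_eq_mul]
  have h1 : c * φ (x.1 + 1, x.2) - c * φ x = c * (φ (x.1 + 1, x.2) - φ x) := by ring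
  have h2 : c * φ (x.1, x.2 + 1) - c * φ x = c * (φ (x.1, x.2 + 1) - φ x) := by ring
  rw [h1, h2, map_mul, map_mul]
  ring

lemma const_of_grad_zero {φ : ℤ × ℤ → ℂ}
    (h1 : ∀ x : ℤ × ℤ, φ (x.1 + 1, x.2) = φ x) (h2 : ∀ x : ℤ × ℤ, φ (x.1, x.2 + 1) = φ x)
    (z : ℤ × ℤ) : φ z = φ (0, 0) := by
  have key : ∀ (g : ℤ → ℂ), (∀ t, g (t + 1) = g t) → ∀ t, g t = g 0 := by
    intro g hg t
    induction t using Int.induction_on with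
    | zero => rfl
    | succ i ih => rw [hg i]; exact ih
    | pred i ih => rw [← ih, ← hg (-i - 1)]; norm_num
  obtain ⟨a, b⟩ := z
  have hrow : φ (a, b) = φ (0, b) := key (fun t => φ (t, b)) (fun t => h1 (t, b)) a
  have hcol : φ (0, b) = φ (0, 0) := key (fun t => φ (0, t)) (fun t => h2 (0, t)) b
  rw [hrow, hcol]

lemma Tform_zero_grad {φ : ℤ × ℤ → ℂ} {s : Finset (ℤ × ℤ)} (hφ : ∀ v ∉ s, φ v = 0)
    (hT : Tform φ = 0) : ∀ z : ℤ × ℤ, φ z = φ (0, 0) := by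
  have hsum : Summable (Dterm φ) := summable_Dterm hφ
  have hzero : ∀ x, Dterm φ x = 0 := by
    intro x
    have hle : Dterm φ x ≤ Tform φ := by
      apply Summable.le_tsum hsum x
      intro y _
      exact Dterm_nonneg φ y
    have := Dterm_nonneg φ x
    linarith [hle.trans_eq hT]
  apply const_of_grad_zero
  · intro x
    have h := hzero x
    rw [Dterm] at h
    have h1 : ‖φ (x.1 + 1, x.2) - φ x‖ ^ 2 = 0 := by
      nlinarith [sq_nonneg ‖φ (x.1 + 1, x.2) - φ x‖, sq_nonneg ‖φ (x.1, x.2 + 1) - φ x‖]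
    have := pow_eq_zero_iff (n := 2) (by norm_num) |>.mp h1
    rw [norm_eq_zero] at this
    exact sub_eq_zero.mp this
  · intro x
    have h := hzero x
    rw [Dterm] at h
    have h1 : ‖φ (x.1, x.2 + 1) - φ x‖ ^ 2 = 0 := by
      nlinarith [sq_nonneg ‖φ (x.1 + 1, x.2) - φ x‖, sq_nonneg ‖φ (x.1, x.2 + 1) - φ x‖]
    have := pow_eq_zero_iff (n := 2) (by norm_num) |>.mp h1
    rw [norm_eq_zero] at this
    exact sub_eq_zero.mp this

end Bargmann2D

open Bargmann2D in
set_option maxHeartbeats 2000000 in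
/-- Bargmann-type estimate for the two-dimensional lattice Schrödinger operator
(Theorem 4.1), in variational form. -/
theorem bargmann_estimate_lattice_2d :
    ∃ C : ℝ, 0 < C ∧
      ∀ (V : ℤ × ℤ → ℝ), (∀ x, 0 ≤ V x) →
      ∀ (M : Submodule ℂ (ℤ × ℤ → ℂ)), FiniteDimensional ℂ M →
      (∀ ψ ∈ M, (Function.support ψ).Finite) →
      (∀ ψ ∈ M, ψ ≠ 0 → latticeForm2D V ψ < 0) →
      (Module.finrank ℂ M : ℝ≥0∞) ≤
        ENNReal.ofReal C * (∑' x : ℤ × ℤ, ENNReal.ofReal (Real.log (2 + normZ2 x) * V x)) + 1 := by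
  classical
  refine ⟨1000, by norm_num, ?_⟩
  intro V hV M hMfd hfin hneg
  haveI := hMfd
  -- evaluation functional at the origin
  let φ₀ : M →ₗ[ℂ] ℂ := (LinearMap.proj ((0, 0) : ℤ × ℤ) :
    (ℤ × ℤ → ℂ) →ₗ[ℂ] ℂ).comp M.subtype
  let E : Submodule ℂ M := LinearMap.ker φ₀
  let valE : E →ₗ[ℂ] (ℤ × ℤ → ℂ) := M.subtype.comp E.subtype
  have hmemM : ∀ x : E, valE x ∈ M := fun x => SetLike.coe_mem (E.subtype x)
  have hsfin : ∀ x : E, (Function.support (valE x)).Finite := fun x =>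
    hfin (valE x) (hmemM x)
  have hs : ∀ x : E, ∀ v ∉ (hsfin x).toFinset, valE x v = 0 := by
    intro x v hv
    by_contra h
    exact hv ((hsfin x).mem_toFinset.mpr h)
  have hzero : ∀ x : E, valE x (0, 0) = 0 := fun x => LinearMap.mem_ker.mp x.2
  have hinj : Function.Injective valE := by
    have h1 := Submodule.injective_subtype M
    have h2 := Submodule.injective_subtype E
    intro a b hab
    exact h2 (h1 hab)
  -- inner product space structure on E from the Dirichlet form
  let core : InnerProductSpace.Core ℂ E :=
    { inner := fun x y => ipd (valE x) (valE y)
      conj_inner_symm := fun x y => ipd_conj_symm (hs x) (hs y)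
      re_inner_nonneg := fun x => by
        have h := ipd_self (hs x)
        show 0 ≤ Complex.re (ipd (valE x) (valE x))
        rw [h, Complex.ofReal_re]
        exact Tform_nonneg _
      add_left := fun x y z => by
        show ipd (valE (x + y)) (valE z) = ipd (valE x) (valE z) + ipd (valE y) (valE z)
        rw [map_add]
        exact ipd_add_left (hs x) (hs y) (hs z)
      smul_left := fun x y c => by
        show ipd (valE (c • x)) (valE y) = (starRingEnd ℂ) c * ipd (valE x) (valE y)
        rw [map_smul]
        exact ipd_smul_left c (valE x) (valE y)
      definite := fun x hx => by
        have h1 : ((Tform (valE x) : ℝ) : ℂ) = 0 := by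
          rw [← ipd_self (hs x)]
          exact hx
        have h2 : Tform (valE x) = 0 := by exact_mod_cast h1
        have h3 := Tform_zero_grad (hs x) h2
        have h4 : valE x = 0 := funext fun z => by rw [h3 z, hzero x]; simp
        apply hinj
        rw [h4, map_zero] }
  letI : NormedAddCommGroup E := core.toNormedAddCommGroup
  letI : InnerProductSpace ℂ E := InnerProductSpace.ofCore core.toCore
  set m₀ := Module.finrank ℂ E with hm₀
  let b := stdOrthonormalBasis ℂ E
  have hip : ∀ x y : E, (inner ℂ x y : ℂ) = ipd (valE x) (valE y) := fun x y => rfl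
  -- each basis vector has unit Dirichlet energy
  have hTi : ∀ i : Fin m₀, Tform (valE (b i)) = 1 := by
    intro i
    have hn : ‖b i‖ = 1 := b.orthonormal.1 i
    have h1 : Complex.re (inner ℂ (b i) (b i) : ℂ) = ‖b i‖ ^ 2 :=
      inner_self_eq_norm_sq (𝕜 := ℂ) (b i)
    rw [hip, ipd_self (hs (b i)), Complex.ofReal_re, hn] at h1
    simpa using h1
  have hbne : ∀ i : Fin m₀, valE (b i) ≠ 0 := by
    intro i hc
    have : b i = 0 := hinj (by rw [hc, map_zero])
    have hn : ‖b i‖ = 1 := b.orthonormal.1 i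
    rw [this, norm_zero] at hn
    norm_num at hn
  -- potential sums
  have hViq : ∀ i : Fin m₀, 1 < ∑' x : ℤ × ℤ, V x * ‖valE (b i) x‖ ^ 2 := by
    intro i
    have hq := hneg (valE (b i)) (hmemM (b i)) (hbne i)
    rw [latticeForm2D_eq, hTi i] at hq
    linarith
  -- common support finset
  let F' : Finset (ℤ × ℤ) := Finset.univ.biUnion (fun i : Fin m₀ => (hsfin (b i)).toFinset)
  have hF' : ∀ i : Fin m₀, ∀ v ∉ F', valE (b i) v = 0 := by
    intro i v hv
    apply hs (b i)
    intro hmem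
    exact hv (Finset.mem_biUnion.mpr ⟨i, Finset.mem_univ i, hmem⟩)
  have hVieq : ∀ i : Fin m₀, (∑' x : ℤ × ℤ, V x * ‖valE (b i) x‖ ^ 2)
      = ∑ x ∈ F', V x * ‖valE (b i) x‖ ^ 2 := by
    intro i
    apply tsum_eq_sum
    intro x hx
    rw [hF' i x hx]
    simp
  -- the local trace function
  set κ : ℤ × ℤ → ℝ := fun x => ∑ i : Fin m₀, ‖valE (b i) x‖ ^ 2 with hκdef
  have hκ0 : ∀ x, 0 ≤ κ x := by
    intro x; rw [hκdef]; positivity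
  have hlog0 : ∀ x : ℤ × ℤ, 0 ≤ Real.log (2 + normZ2 x) := by
    intro x
    apply Real.log_nonneg
    have := Real.sqrt_nonneg ((x.1 : ℝ) ^ 2 + (x.2 : ℝ) ^ 2)
    rw [normZ2]
    linarith
  -- reproducing kernel estimate
  have hκle : ∀ x : ℤ × ℤ, κ x ≤ 1000 * Real.log (2 + normZ2 x) := by
    intro x
    set c : Fin m₀ → ℂ := fun i => valE (b i) x with hcdef
    set y : E := ∑ i : Fin m₀, (starRingEnd ℂ) (c i) • b i with hydef
    have hyy : (inner ℂ y y : ℂ) = ((κ x : ℝ) : ℂ) := by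
      rw [hydef]
      rw [b.orthonormal.inner_sum (fun i => (starRingEnd ℂ) (c i))
        (fun i => (starRingEnd ℂ) (c i)) Finset.univ]
      rw [hκdef]
      push_cast
      apply Finset.sum_congr rfl
      intro i _
      rw [Complex.conj_conj]
      rw [mul_comm, conj_mul_self]
      push_cast
      ring
    have hTy : Tform (valE y) = κ x := by
      have h1 : ((Tform (valE y) : ℝ) : ℂ) = ((κ x : ℝ) : ℂ) := by
        rw [← ipd_self (hs y), ← hip, hyy]
      exact_mod_cast h1
    have hyx : valE y x = ((κ x : ℝ) : ℂ) := by
      have h1 : valE y = ∑ i : Fin m₀, (starRingEnd ℂ) (c i) • valE (b i) := by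
        rw [hydef, map_sum]
        apply Finset.sum_congr rfl
        intro i _
        rw [map_smul]
      rw [h1, Finset.sum_apply]
      simp only [Pi.smul_apply, smul_eq_mul]
      rw [hκdef]
      push_cast
      apply Finset.sum_congr rfl
      intro i _
      rw [conj_mul_self]
      push_cast
      ring
    have hres := resist (valE y) (hs y) (hzero y) x
    rw [hyx, hTy] at hres
    have hnr : ‖((κ x : ℝ) : ℂ)‖ = |κ x| := Complex.norm_real (κ x)
    rw [hnr, abs_of_nonneg (hκ0 x)] at hres
    nlinarith [hκ0 x, hlog0 x, hres]
  -- counting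
  have hcount : (m₀ : ℝ) ≤ ∑ x ∈ F', V x * κ x := by
    have h1 : (m₀ : ℝ) = ∑ _i : Fin m₀, (1 : ℝ) := by
      rw [Finset.sum_const, Finset.card_univ, Fintype.card_fin, nsmul_eq_mul, mul_one]
    rw [h1]
    have h2 : ∑ _i : Fin m₀, (1 : ℝ) ≤ ∑ i : Fin m₀, ∑ x ∈ F', V x * ‖valE (b i) x‖ ^ 2 := by
      apply Finset.sum_le_sum
      intro i _
      rw [← hVieq i]
      exact (hViq i).le
    have h3 : ∑ i : Fin m₀, ∑ x ∈ F', V x * ‖valE (b i) x‖ ^ 2 = ∑ x ∈ F', V x * κ x := by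
      rw [Finset.sum_comm]
      apply Finset.sum_congr rfl
      intro x _
      rw [hκdef, Finset.mul_sum]
    linarith
  have hreal : (m₀ : ℝ) ≤ 1000 * ∑ x ∈ F', Real.log (2 + normZ2 x) * V x := by
    have h1 : ∑ x ∈ F', V x * κ x ≤ ∑ x ∈ F', V x * (1000 * Real.log (2 + normZ2 x)) := by
      apply Finset.sum_le_sum
      intro x _
      exact mul_le_mul_of_nonneg_left (hκle x) (hV x)
    have h2 : ∑ x ∈ F', V x * (1000 * Real.log (2 + normZ2 x))
        = 1000 * ∑ x ∈ F', Real.log (2 + normZ2 x) * V x := by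
      rw [Finset.mul_sum]
      apply Finset.sum_congr rfl
      intro x _
      ring
    linarith
  -- rank bound
  have hrank : Module.finrank ℂ M ≤ m₀ + 1 := by
    have h1 := LinearMap.finrank_range_add_finrank_ker φ₀
    have h2 : Module.finrank ℂ (LinearMap.range φ₀) ≤ 1 := by
      have := Submodule.finrank_le (LinearMap.range φ₀)
      simpa [Module.finrank_self] using this
    have h3 : Module.finrank ℂ (LinearMap.ker φ₀) = m₀ := rfl
    omega
  -- pass to extended nonnegative reals
  have hcast1 : (Module.finrank ℂ M : ℝ≥0∞) ≤ (m₀ : ℝ≥0∞) + 1 := by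
    calc (Module.finrank ℂ M : ℝ≥0∞) ≤ ((m₀ + 1 : ℕ) : ℝ≥0∞) := Nat.cast_le.mpr hrank
      _ = (m₀ : ℝ≥0∞) + 1 := by push_cast; ring
  have hcast2 : (m₀ : ℝ≥0∞) ≤
      ENNReal.ofReal 1000 * ∑' x : ℤ × ℤ, ENNReal.ofReal (Real.log (2 + normZ2 x) * V x) := by
    calc (m₀ : ℝ≥0∞) = ENNReal.ofReal (m₀ : ℝ) := (ENNReal.ofReal_natCast m₀).symm
      _ ≤ ENNReal.ofReal (1000 * ∑ x ∈ F', Real.log (2 + normZ2 x) * V x) :=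
          ENNReal.ofReal_le_ofReal hreal
      _ = ENNReal.ofReal 1000 * ENNReal.ofReal (∑ x ∈ F', Real.log (2 + normZ2 x) * V x) :=
          ENNReal.ofReal_mul (by norm_num)
      _ = ENNReal.ofReal 1000 * ∑ x ∈ F', ENNReal.ofReal (Real.log (2 + normZ2 x) * V x) := by
          rw [ENNReal.ofReal_sum_of_nonneg]
          intro x _
          exact mul_nonneg (hlog0 x) (hV x)
      _ ≤ ENNReal.ofReal 1000 * ∑' x : ℤ × ℤ, ENNReal.ofReal (Real.log (2 + normZ2 x) * V x) :=
          mul_le_mul_right (ENNReal.sum_le_tsum F') _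
  calc (Module.finrank ℂ M : ℝ≥0∞) ≤ (m₀ : ℝ≥0∞) + 1 := hcast1
    _ ≤ ENNReal.ofReal 1000 * (∑' x : ℤ × ℤ, ENNReal.ofReal (Real.log (2 + normZ2 x) * V x)) + 1 :=
        add_le_add_left hcast2 1
end

section
/- There exists a constant C > 0 such that for every x ∈ ℤ², (1/(2π)²) ∫_{[−π,π]²} (1 − cos(x·φ)) / (4 sin²(φ₁/2) + 4 sin²(φ₂/2)) dφ ≤ C ln(2+|x|). -/
open MeasureTheory

namespace LatticeResolventAux

open Real

/-- 1D inner integral bound: `∫_{-π}^{π} (y² + b²)⁻¹ dy ≤ π / b` for `b > 0`. -/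
lemma inner_integral_le {b : ℝ} (hb : 0 < b) :
    ∫ y in Set.Icc (-π) π, (y ^ 2 + b ^ 2)⁻¹ ≤ π / b := by
  have hcont : Continuous fun y : ℝ => (y ^ 2 + b ^ 2)⁻¹ := by
    apply Continuous.inv₀ (by continuity)
    intro y; positivity
  have hderiv : ∀ y ∈ Set.uIcc (-π) π,
      HasDerivAt (fun y : ℝ => b⁻¹ * arctan (y / b)) ((y ^ 2 + b ^ 2)⁻¹) y := by
    intro y _
    have h1 : HasDerivAt (fun y : ℝ => arctan (y / b))
        ((1 / (1 + (y / b) ^ 2)) * (1 / b)) y := by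
      exact (Real.hasDerivAt_arctan (y / b)).comp y ((hasDerivAt_id y).div_const b)
    have h2 := h1.const_mul b⁻¹
    refine h2.congr_deriv ?_
    have hb0 : b ≠ 0 := hb.ne'
    field_simp
    ring
  have hval : ∫ y in (-π)..π, (y ^ 2 + b ^ 2)⁻¹
      = b⁻¹ * arctan (π / b) - b⁻¹ * arctan (-π / b) := by
    exact intervalIntegral.integral_eq_sub_of_hasDerivAt hderiv
      (hcont.intervalIntegrable _ _)
  have hIcc : ∫ y in Set.Icc (-π) π, (y ^ 2 + b ^ 2)⁻¹
      = ∫ y in (-π)..π, (y ^ 2 + b ^ 2)⁻¹ := by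
    rw [MeasureTheory.integral_Icc_eq_integral_Ioc,
      intervalIntegral.integral_of_le (by linarith [Real.pi_pos])]
  rw [hIcc, hval]
  have harctan : arctan (π / b) < π / 2 := Real.arctan_lt_pi_div_two _
  have hneg : arctan (-π / b) = - arctan (π / b) := by
    rw [neg_div, Real.arctan_neg]
  rw [hneg]
  have hb' : 0 < b⁻¹ := by positivity
  have : b⁻¹ * arctan (π / b) - b⁻¹ * (-arctan (π / b))
      = 2 * b⁻¹ * arctan (π / b) := by ring
  rw [this]
  calc 2 * b⁻¹ * arctan (π / b) ≤ 2 * b⁻¹ * (π / 2) := by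
        apply mul_le_mul_of_nonneg_left harctan.le (by positivity)
    _ = π / b := by field_simp
/-- Outer integral: `∫_{-π}^{π} π³ / √(x² + c²) dx = 2π³ arsinh(π/c)` for `c > 0`. -/
lemma outer_integral_eq {c : ℝ} (hc : 0 < c) :
    ∫ x in Set.Icc (-π) π, π ^ 3 * (Real.sqrt (x ^ 2 + c ^ 2))⁻¹
      = 2 * π ^ 3 * arsinh (π / c) := by
  have hsqrt : ∀ x : ℝ, Real.sqrt (x ^ 2 + c ^ 2) = c * Real.sqrt (1 + (x / c) ^ 2) := by
    intro x
    rw [← Real.sqrt_sq hc.le, ← Real.sqrt_mul (sq_nonneg c)]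
    congr 1
    field_simp
    rw [Real.sqrt_sq hc.le]
    ring
  have hpos : ∀ x : ℝ, 0 < Real.sqrt (x ^ 2 + c ^ 2) := by
    intro x; apply Real.sqrt_pos.2; positivity
  have hcont : Continuous fun x : ℝ => π ^ 3 * (Real.sqrt (x ^ 2 + c ^ 2))⁻¹ := by
    apply Continuous.mul continuous_const
    apply Continuous.inv₀
    · exact (Real.continuous_sqrt.comp (by continuity))
    · intro x; exact (hpos x).ne'
  have hderiv : ∀ x ∈ Set.uIcc (-π) π,
      HasDerivAt (fun x : ℝ => π ^ 3 * arsinh (x / c))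
        (π ^ 3 * (Real.sqrt (x ^ 2 + c ^ 2))⁻¹) x := by
    intro x _
    have h1 : HasDerivAt (fun x : ℝ => arsinh (x / c))
        ((Real.sqrt (1 + (x / c) ^ 2))⁻¹ * (1 / c)) x := by
      have := (Real.hasDerivAt_arsinh (x / c)).comp x ((hasDerivAt_id x).div_const c)
      exact this
    have h2 := h1.const_mul (π ^ 3)
    refine h2.congr_deriv ?_
    rw [hsqrt x, mul_inv]
    field_simp
  have hval : ∫ x in (-π)..π, π ^ 3 * (Real.sqrt (x ^ 2 + c ^ 2))⁻¹
      = π ^ 3 * arsinh (π / c) - π ^ 3 * arsinh (-π / c) := by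
    exact intervalIntegral.integral_eq_sub_of_hasDerivAt hderiv
      (hcont.intervalIntegrable _ _)
  have hIcc : ∫ x in Set.Icc (-π) π, π ^ 3 * (Real.sqrt (x ^ 2 + c ^ 2))⁻¹
      = ∫ x in (-π)..π, π ^ 3 * (Real.sqrt (x ^ 2 + c ^ 2))⁻¹ := by
    rw [MeasureTheory.integral_Icc_eq_integral_Ioc,
      intervalIntegral.integral_of_le (by linarith [Real.pi_pos])]
  rw [hIcc, hval, neg_div, Real.arsinh_neg]
  ring

/-- `arsinh t ≤ log (1 + 2t)` for `t ≥ 0`. -/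
lemma arsinh_le_log {t : ℝ} (ht : 0 ≤ t) : arsinh t ≤ Real.log (1 + 2 * t) := by
  rw [Real.arsinh]
  apply Real.log_le_log (by positivity)
  have : Real.sqrt (1 + t ^ 2) ≤ 1 + t := by
    rw [show (1 : ℝ) + t = Real.sqrt ((1 + t) ^ 2) by rw [Real.sqrt_sq (by linarith)]]
    apply Real.sqrt_le_sqrt
    nlinarith
  linarith

end LatticeResolventAux

open LatticeResolventAux Real

set_option maxHeartbeats 1000000 in
/-- The key resolvent estimate for the two-dimensional lattice Laplacian with
Dirichlet condition at the origin:
`(1/(2π)²) ∫_{[-π,π]²} (1 - cos(x·φ)) / (4sin²(φ₁/2) + 4sin²(φ₂/2)) dφ ≤ C ln(2+|x|)`. -/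
theorem lattice_resolvent_log_bound :
    ∃ C : ℝ, 0 < C ∧
      ∀ x : ℤ × ℤ,
        (1 / (2 * Real.pi) ^ 2) *
            ∫ φ : ℝ × ℝ in Set.Icc (-Real.pi) Real.pi ×ˢ Set.Icc (-Real.pi) Real.pi,
              (1 - Real.cos ((x.1 : ℝ) * φ.1 + (x.2 : ℝ) * φ.2)) /
                (4 * Real.sin (φ.1 / 2) ^ 2 + 4 * Real.sin (φ.2 / 2) ^ 2) ≤
          C * Real.log (2 + normZ2 x) := by
  refine ⟨4, by norm_num, fun x => ?_⟩
  have hπ : 0 < π := Real.pi_pos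
  set N : ℝ := normZ2 x with hN
  have hN0 : 0 ≤ N := Real.sqrt_nonneg _
  have hlog : 0 ≤ Real.log (2 + N) := Real.log_nonneg (by linarith)
  set S : Set (ℝ × ℝ) := Set.Icc (-π) π ×ˢ Set.Icc (-π) π with hS
  set F : ℝ × ℝ → ℝ := fun φ =>
    (1 - Real.cos ((x.1 : ℝ) * φ.1 + (x.2 : ℝ) * φ.2)) /
      (4 * Real.sin (φ.1 / 2) ^ 2 + 4 * Real.sin (φ.2 / 2) ^ 2) with hF
  have hF0 : ∀ φ, 0 ≤ F φ := by
    intro φ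
    apply div_nonneg
    · linarith [Real.cos_le_one ((x.1 : ℝ) * φ.1 + (x.2 : ℝ) * φ.2)]
    · positivity
  by_cases hx : x = (0, 0)
  · have hFz : ∀ φ : ℝ × ℝ, F φ = 0 := by
      intro φ
      simp [hF, hx]
    have : ∫ φ in S, F φ = 0 := by
      rw [MeasureTheory.integral_congr_ae (Filter.Eventually.of_forall hFz)]
      simp
    rw [this]
    rw [mul_zero]
    positivity
  -- main case : x ≠ 0
  have hNsq : (1 : ℝ) ≤ (x.1 : ℝ) ^ 2 + (x.2 : ℝ) ^ 2 := by
    have h1 : x.1 ≠ 0 ∨ x.2 ≠ 0 := by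
      by_contra h
      push_neg at h
      exact hx (Prod.ext h.1 h.2)
    have : (1 : ℤ) ≤ x.1 ^ 2 + x.2 ^ 2 := by
      rcases h1 with h | h
      · nlinarith [Int.one_le_abs h, sq_abs x.1, sq_nonneg x.2]
      · nlinarith [Int.one_le_abs h, sq_abs x.2, sq_nonneg x.1]
    exact_mod_cast this
  have hN1 : 1 ≤ N := Real.one_le_sqrt.2 hNsq
  have hNpos : 0 < N := lt_of_lt_of_le one_pos hN1
  have hNsqN : N ^ 2 = (x.1 : ℝ) ^ 2 + (x.2 : ℝ) ^ 2 :=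
    Real.sq_sqrt (by linarith)
  set c : ℝ := 2 / N with hc
  have hcpos : 0 < c := by positivity
  set G : ℝ × ℝ → ℝ := fun φ => π ^ 2 / (φ.1 ^ 2 + φ.2 ^ 2 + c ^ 2) with hG
  -- Pointwise bound F ≤ G on S
  have hFG : ∀ φ ∈ S, F φ ≤ G φ := by
    rintro ⟨u, v⟩ ⟨hu, hv⟩
    simp only [Set.mem_Icc] at hu hv
    have hGpos : 0 < π ^ 2 / (u ^ 2 + v ^ 2 + c ^ 2) := by positivity
    show (1 - Real.cos ((x.1 : ℝ) * u + (x.2 : ℝ) * v)) /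
        (4 * Real.sin (u / 2) ^ 2 + 4 * Real.sin (v / 2) ^ 2)
      ≤ π ^ 2 / (u ^ 2 + v ^ 2 + c ^ 2)
    clear_value N c
    set D : ℝ := 4 * Real.sin (u / 2) ^ 2 + 4 * Real.sin (v / 2) ^ 2 with hD
    set t : ℝ := (x.1 : ℝ) * u + (x.2 : ℝ) * v with ht
    clear_value D t
    have hDlow : 4 * (u ^ 2 + v ^ 2) ≤ π ^ 2 * D := by
      have h1 : Real.cos u ≤ 1 - 2 / π ^ 2 * u ^ 2 :=
        Real.cos_le_one_sub_mul_cos_sq (abs_le.2 ⟨hu.1, hu.2⟩)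
      have h2 : Real.cos v ≤ 1 - 2 / π ^ 2 * v ^ 2 :=
        Real.cos_le_one_sub_mul_cos_sq (abs_le.2 ⟨hv.1, hv.2⟩)
      have e1 : Real.sin (u / 2) ^ 2 = 1 / 2 - Real.cos u / 2 := by
        rw [Real.sin_sq_eq_half_sub, show 2 * (u / 2) = u from by ring]
      have e2 : Real.sin (v / 2) ^ 2 = 1 / 2 - Real.cos v / 2 := by
        rw [Real.sin_sq_eq_half_sub, show 2 * (v / 2) = v from by ring]
      have hu2 : π ^ 2 * (2 / π ^ 2 * u ^ 2) = 2 * u ^ 2 := by field_simp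
      have hv2 : π ^ 2 * (2 / π ^ 2 * v ^ 2) = 2 * v ^ 2 := by field_simp
      have h1' := mul_le_mul_of_nonneg_left h1 (sq_nonneg π)
      have h2' := mul_le_mul_of_nonneg_left h2 (sq_nonneg π)
      rw [hD, e1, e2]
      nlinarith [h1', h2', hu2, hv2, sq_nonneg π]
    rcases eq_or_lt_of_le (show (0:ℝ) ≤ D by rw [hD]; positivity) with hD0 | hDpos
    · rw [← hD0, div_zero]
      exact hGpos.le
    · -- D > 0, so u² + v² > 0
      have hr2 : 0 < u ^ 2 + v ^ 2 := by
        by_contra h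
        push_neg at h
        have hu2 : u ^ 2 = 0 := le_antisymm (by nlinarith [sq_nonneg v]) (sq_nonneg u)
        have hv2 : v ^ 2 = 0 := le_antisymm (by nlinarith [sq_nonneg u]) (sq_nonneg v)
        have hu0 : u = 0 := by
          have := sq_eq_zero_iff.1 hu2; exact this
        have hv0 : v = 0 := by
          have := sq_eq_zero_iff.1 hv2; exact this
        rw [hD] at hDpos
        rw [hu0, hv0] at hDpos
        simp at hDpos
      have hCS : t ^ 2 ≤ ((x.1 : ℝ) ^ 2 + (x.2 : ℝ) ^ 2) * (u ^ 2 + v ^ 2) := by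
        rw [ht]
        nlinarith [sq_nonneg ((x.1 : ℝ) * v - (x.2 : ℝ) * u)]
      have hn2 : 1 - Real.cos t ≤ 2 := by
        linarith [Real.neg_one_le_cos t]
      have hnt : 1 - Real.cos t ≤ t ^ 2 / 2 := by
        linarith [Real.one_sub_sq_div_two_le_cos (x := t)]
      rw [div_le_div_iff₀ hDpos (by positivity)]
      have hn0 : 0 ≤ 1 - Real.cos t := by linarith [Real.cos_le_one t]
      have key : (1 - Real.cos t) * (u ^ 2 + v ^ 2 + c ^ 2) ≤ 4 * (u ^ 2 + v ^ 2) := by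
        have hc2 : c ^ 2 * N ^ 2 = 4 := by
          rw [hc]; field_simp; norm_num
        rcases le_total (u ^ 2 + v ^ 2) (c ^ 2) with hcase | hcase
        · have ht2 : t ^ 2 ≤ N ^ 2 * (u ^ 2 + v ^ 2) := by rw [hNsqN]; linarith [hCS]
          have h5 : (1 - Real.cos t) * (u ^ 2 + v ^ 2 + c ^ 2)
              ≤ (1 - Real.cos t) * (2 * c ^ 2) :=
            mul_le_mul_of_nonneg_left (by linarith) hn0
          have h9 : 1 - Real.cos t ≤ N ^ 2 * (u ^ 2 + v ^ 2) / 2 := by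
            linarith [hnt, ht2]
          have h6 : (1 - Real.cos t) * (2 * c ^ 2)
              ≤ (N ^ 2 * (u ^ 2 + v ^ 2) / 2) * (2 * c ^ 2) :=
            mul_le_mul_of_nonneg_right h9 (by positivity)
          have h7 : (N ^ 2 * (u ^ 2 + v ^ 2) / 2) * (2 * c ^ 2)
              = (c ^ 2 * N ^ 2) * (u ^ 2 + v ^ 2) := by ring
          rw [h7, hc2] at h6
          linarith
        · have h8 : (1 - Real.cos t) * (u ^ 2 + v ^ 2 + c ^ 2)
              ≤ 2 * (u ^ 2 + v ^ 2 + c ^ 2) :=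
            mul_le_mul_of_nonneg_right hn2 (by positivity)
          linarith
      linarith
  -- Integrability of G on S
  have hGcont : Continuous G := by
    apply Continuous.div continuous_const (by continuity)
    intro φ
    positivity
  have hGint : IntegrableOn G S := by
    rw [hS, Set.Icc_prod_Icc]
    exact hGcont.integrableOn_Icc
  have hSmeas : MeasurableSet S := (measurableSet_Icc.prod measurableSet_Icc)
  -- Step: ∫_S F ≤ ∫_S G
  have step1 : ∫ φ in S, F φ ≤ ∫ φ in S, G φ := by
    apply MeasureTheory.integral_mono_of_nonneg
    · exact Filter.Eventually.of_forall hF0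
    · exact hGint
    · exact (MeasureTheory.ae_restrict_iff' hSmeas).2 (Filter.Eventually.of_forall hFG)
  -- Fubini
  have step2 : ∫ φ in S, G φ
      = ∫ a in Set.Icc (-π) π, ∫ b in Set.Icc (-π) π, G (a, b) := by
    rw [hS, MeasureTheory.Measure.volume_eq_prod]
    apply MeasureTheory.setIntegral_prod
    rw [← MeasureTheory.Measure.volume_eq_prod]
    exact hGint
  -- Inner bound
  have inner : ∀ a : ℝ, ∫ b in Set.Icc (-π) π, G (a, b)
      ≤ π ^ 3 * (Real.sqrt (a ^ 2 + c ^ 2))⁻¹ := by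
    intro a
    set b0 : ℝ := Real.sqrt (a ^ 2 + c ^ 2) with hb0
    have hb0pos : 0 < b0 := Real.sqrt_pos.2 (by positivity)
    have hb0sq : b0 ^ 2 = a ^ 2 + c ^ 2 := Real.sq_sqrt (by positivity)
    have hGval : ∀ b : ℝ, G (a, b) = π ^ 2 * (b ^ 2 + b0 ^ 2)⁻¹ := by
      intro b
      rw [hG]
      simp only
      rw [hb0sq, div_eq_mul_inv]
      ring_nf
    calc ∫ b in Set.Icc (-π) π, G (a, b)
        = π ^ 2 * ∫ b in Set.Icc (-π) π, (b ^ 2 + b0 ^ 2)⁻¹ := by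
          rw [← MeasureTheory.integral_const_mul]
          exact MeasureTheory.integral_congr_ae (Filter.Eventually.of_forall fun b => hGval b)
      _ ≤ π ^ 2 * (π / b0) := by
          apply mul_le_mul_of_nonneg_left (inner_integral_le hb0pos) (sq_nonneg π)
      _ = π ^ 3 * b0⁻¹ := by
          field_simp
  -- Outer bound
  have step3 : ∫ a in Set.Icc (-π) π, ∫ b in Set.Icc (-π) π, G (a, b)
      ≤ 2 * π ^ 3 * Real.arsinh (π / c) := by
    rw [← outer_integral_eq hcpos]
    apply MeasureTheory.integral_mono_of_nonneg
    · apply Filter.Eventually.of_forall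
      intro a
      apply MeasureTheory.integral_nonneg
      intro b
      rw [hG]
      positivity
    · have : Continuous fun a : ℝ => π ^ 3 * (Real.sqrt (a ^ 2 + c ^ 2))⁻¹ := by
        apply Continuous.mul continuous_const
        apply Continuous.inv₀ (Real.continuous_sqrt.comp (by continuity))
        intro a
        exact (Real.sqrt_pos.2 (by positivity)).ne'
      rw [show Set.Icc (-π) π = Set.Icc (-π) π from rfl]
      exact (this.integrableOn_Icc)
    · exact Filter.Eventually.of_forall fun a => inner a
  -- arsinh bound
  have step4 : Real.arsinh (π / c) ≤ 2 * Real.log (2 + N) := by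
    have h1 : Real.arsinh (π / c) ≤ Real.log (1 + 2 * (π / c)) :=
      arsinh_le_log (by positivity)
    have h2 : 2 * (π / c) = π * N := by
      rw [hc]; field_simp
    have h3 : 1 + π * N ≤ (2 + N) ^ 2 := by
      nlinarith [Real.pi_le_four, hN1]
    calc Real.arsinh (π / c) ≤ Real.log (1 + 2 * (π / c)) := h1
      _ = Real.log (1 + π * N) := by rw [h2]
      _ ≤ Real.log ((2 + N) ^ 2) := Real.log_le_log (by positivity) h3
      _ = 2 * Real.log (2 + N) := by
          rw [Real.log_pow]; push_cast; ring
  -- Combine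
  have total : ∫ φ in S, F φ ≤ 4 * π ^ 3 * Real.log (2 + N) := by
    calc ∫ φ in S, F φ ≤ ∫ φ in S, G φ := step1
      _ = ∫ a in Set.Icc (-π) π, ∫ b in Set.Icc (-π) π, G (a, b) := step2
      _ ≤ 2 * π ^ 3 * Real.arsinh (π / c) := step3
      _ ≤ 2 * π ^ 3 * (2 * Real.log (2 + N)) := by
          apply mul_le_mul_of_nonneg_left step4 (by positivity)
      _ = 4 * π ^ 3 * Real.log (2 + N) := by ring
  have hfactor : (0:ℝ) < 1 / (2 * π) ^ 2 := by positivity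
  calc (1 / (2 * π) ^ 2) * ∫ φ in S, F φ
      ≤ (1 / (2 * π) ^ 2) * (4 * π ^ 3 * Real.log (2 + N)) :=
        mul_le_mul_of_nonneg_left total hfactor.le
    _ = π * Real.log (2 + N) := by
        field_simp; ring
    _ ≤ 4 * Real.log (2 + N) := by
        apply mul_le_mul_of_nonneg_right Real.pi_le_four hlog
end

section
/- Let V : ℤ → [0,∞) and ε > 0, and suppose that the series Σ_{x∈ℤ, |x|≥1} |x| V(x) / (ln(1+|x|))^{1+ε} diverges (is not summable). Then there exists a sequence (ψ_n)_{n≥1} of nonzero finitely supported functions ℤ → ℂ with pairwise disjoint supports such that Q_V(ψ_n) < 0 for every n; in particular, for every N there is an N-dimensional subspace of finitely supported functions on which Q_V is negative definite. -/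
namespace InfNegAux

/-- tent profile: 0 outside (3·2^m, 9·2^m), 1 on [4·2^m, 8·2^m], linear ramps of slope 1/2^m. -/
noncomputable def prof (m : ℕ) (x : ℤ) : ℝ :=
  max 0 (min 1 (min (((x : ℝ) - 3 * 2 ^ m) / 2 ^ m) ((9 * 2 ^ m - (x : ℝ)) / 2 ^ m)))

lemma prof_nonneg (m : ℕ) (x : ℤ) : 0 ≤ prof m x := le_max_left _ _

lemma prof_le_one (m : ℕ) (x : ℤ) : prof m x ≤ 1 :=
  max_le zero_le_one (min_le_left _ _)

lemma prof_eq_zero_left (m : ℕ) (x : ℤ) (h : (x : ℝ) ≤ 3 * 2 ^ m) : prof m x = 0 := by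
  have hL : (0:ℝ) < 2 ^ m := by positivity
  apply max_eq_left
  refine le_trans (min_le_right _ _) (le_trans (min_le_left _ _) ?_)
  apply div_nonpos_of_nonpos_of_nonneg (by linarith) hL.le

lemma prof_eq_zero_right (m : ℕ) (x : ℤ) (h : (9 * 2 ^ m : ℝ) ≤ (x : ℝ)) : prof m x = 0 := by
  have hL : (0:ℝ) < 2 ^ m := by positivity
  apply max_eq_left
  refine le_trans (min_le_right _ _) (le_trans (min_le_right _ _) ?_)
  apply div_nonpos_of_nonpos_of_nonneg (by linarith) hL.le

lemma prof_eq_one (m : ℕ) (x : ℤ) (h1 : (4 * 2 ^ m : ℝ) ≤ (x : ℝ))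
    (h2 : (x : ℝ) ≤ 8 * 2 ^ m) : prof m x = 1 := by
  have hL : (0:ℝ) < 2 ^ m := by positivity
  have e1 : (1:ℝ) ≤ ((x : ℝ) - 3 * 2 ^ m) / 2 ^ m := by
    rw [le_div_iff₀ hL]; linarith
  have e2 : (1:ℝ) ≤ (9 * 2 ^ m - (x : ℝ)) / 2 ^ m := by
    rw [le_div_iff₀ hL]; linarith
  unfold prof
  rw [min_eq_left (le_min e1 e2), max_eq_right zero_le_one]

lemma prof_lip (m : ℕ) (x : ℤ) : |prof m (x + 1) - prof m x| ≤ 1 / 2 ^ m := by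
  have hL : (0:ℝ) < 2 ^ m := by positivity
  have hpos : (0:ℝ) ≤ 1 / 2 ^ m := by positivity
  unfold prof
  have hc : ((x + 1 : ℤ) : ℝ) = (x : ℝ) + 1 := by push_cast; ring
  rw [hc]
  set a₁ := ((x:ℝ) + 1 - 3 * 2 ^ m) / 2 ^ m with ha₁
  set a₂ := (9 * 2 ^ m - ((x:ℝ) + 1)) / 2 ^ m with ha₂
  set b₁ := ((x:ℝ) - 3 * 2 ^ m) / 2 ^ m with hb₁
  set b₂ := (9 * 2 ^ m - (x:ℝ)) / 2 ^ m with hb₂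
  have h1 : |a₁ - b₁| ≤ 1 / 2 ^ m := by
    have : a₁ - b₁ = 1 / 2 ^ m := by rw [ha₁, hb₁]; field_simp; ring
    rw [this, abs_of_nonneg hpos]
  have h2 : |a₂ - b₂| ≤ 1 / 2 ^ m := by
    have : a₂ - b₂ = -(1 / 2 ^ m) := by rw [ha₂, hb₂]; field_simp; ring
    rw [this, abs_neg, abs_of_nonneg hpos]
  have k1 : |min a₁ a₂ - min b₁ b₂| ≤ 1 / 2 ^ m :=
    (abs_min_sub_min_le_max _ _ _ _).trans (max_le h1 h2)
  have k2 : |min 1 (min a₁ a₂) - min 1 (min b₁ b₂)| ≤ 1 / 2 ^ m :=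
    (abs_min_sub_min_le_max _ _ _ _).trans (max_le (by simp [hpos]) k1)
  exact (abs_max_sub_max_le_max _ _ _ _).trans (max_le (by simp [hpos]) k2)

/-- the complex-valued test function -/
noncomputable def tent (m : ℕ) (x : ℤ) : ℂ := ((prof m x : ℝ) : ℂ)

lemma tent_zero (m : ℕ) (x : ℤ) (h : x ≤ 3 * 2 ^ m ∨ 9 * 2 ^ m ≤ x) : tent m x = 0 := by
  unfold tent
  rcases h with h | h
  · rw [prof_eq_zero_left m x (by exact_mod_cast h)]; simp
  · rw [prof_eq_zero_right m x (by exact_mod_cast h)]; simp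

lemma tent_support (m : ℕ) :
    Function.support (tent m) ⊆ ↑(Finset.Ico (3 * 2 ^ m : ℤ) (9 * 2 ^ m)) := by
  intro x hx
  simp only [Finset.coe_Ico, Set.mem_Ico]
  by_contra hc
  push_neg at hc
  apply hx
  rcases le_or_gt x (3 * 2 ^ m) with h | h
  · exact tent_zero m x (Or.inl h)
  · exact tent_zero m x (Or.inr (hc h.le))

lemma tent_one (m : ℕ) : tent m (4 * 2 ^ m) = 1 := by
  unfold tent
  have hp : (0:ℝ) ≤ 2 ^ m := by positivity
  rw [prof_eq_one m (4 * 2 ^ m) (by push_cast; linarith) (by push_cast; linarith)]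
  simp

lemma form_neg (W : ℤ → ℝ) (hW0 : ∀ x, 0 ≤ W x) (m : ℕ)
    (hbig : (8 : ℝ) / 2 ^ m < ∑ x ∈ Finset.Ico (4 * 2 ^ m : ℤ) (8 * 2 ^ m), W x) :
    latticeForm1D W (tent m) < 0 := by
  have hL : (0:ℝ) < 2 ^ m := by positivity
  set s : Finset ℤ := Finset.Ico (3 * 2 ^ m : ℤ) (9 * 2 ^ m) with hs
  have hdiff_zero : ∀ x : ℤ, x ∉ s → ‖tent m (x + 1) - tent m x‖ ^ 2 = 0 := by
    intro x hx
    rw [hs, Finset.mem_Ico] at hx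
    push_neg at hx
    rcases lt_or_ge x (3 * 2 ^ m) with h | h
    · rw [tent_zero m x (Or.inl h.le), tent_zero m (x + 1) (Or.inl (by omega))]; simp
    · rw [tent_zero m x (Or.inr (hx h)), tent_zero m (x + 1) (Or.inr (by have := hx h; omega))]
      simp
  have hdiff_le : ∀ x ∈ s, ‖tent m (x + 1) - tent m x‖ ^ 2 ≤ (1 / 2 ^ m) ^ 2 := by
    intro x _
    have : ‖tent m (x + 1) - tent m x‖ = |prof m (x + 1) - prof m x| := by
      unfold tent
      rw [← Complex.ofReal_sub, Complex.norm_real, Real.norm_eq_abs]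
    rw [this]
    exact pow_le_pow_left₀ (abs_nonneg _) (prof_lip m x) 2
  have hcard : ((s.card : ℝ)) = 6 * 2 ^ m := by
    rw [hs, Int.card_Ico]
    have h1 : (9 * 2 ^ m - 3 * 2 ^ m : ℤ) = 6 * 2 ^ m := by ring
    rw [h1]
    have h2 : ((6 * 2 ^ m : ℤ)).toNat = 6 * 2 ^ m := by
      have h3 : (6 * 2 ^ m : ℤ) = ((6 * 2 ^ m : ℕ) : ℤ) := by push_cast; ring
      rw [h3, Int.toNat_natCast]
    rw [h2]; push_cast; ring
  have hkin : (∑' x : ℤ, ‖tent m (x + 1) - tent m x‖ ^ 2) ≤ 6 / 2 ^ m := by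
    rw [tsum_eq_sum hdiff_zero]
    calc ∑ x ∈ s, ‖tent m (x + 1) - tent m x‖ ^ 2 ≤ s.card • ((1 / 2 ^ m) ^ 2 : ℝ) :=
          Finset.sum_le_card_nsmul s _ _ hdiff_le
      _ = (s.card : ℝ) * (1 / 2 ^ m) ^ 2 := by rw [nsmul_eq_mul]
      _ = 6 / 2 ^ m := by rw [hcard]; field_simp
  have hpot_zero : ∀ x : ℤ, x ∉ s → W x * ‖tent m x‖ ^ 2 = 0 := by
    intro x hx
    rw [hs, Finset.mem_Ico] at hx
    push_neg at hx
    rcases lt_or_ge x (3 * 2 ^ m) with h | h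
    · rw [tent_zero m x (Or.inl h.le)]; simp
    · rw [tent_zero m x (Or.inr (hx h))]; simp
  have hsumm : Summable (fun x : ℤ => W x * ‖tent m x‖ ^ 2) :=
    summable_of_ne_finset_zero hpot_zero
  have hplateau : ∀ x ∈ Finset.Ico (4 * 2 ^ m : ℤ) (8 * 2 ^ m), W x * ‖tent m x‖ ^ 2 = W x := by
    intro x hx
    rw [Finset.mem_Ico] at hx
    have : prof m x = 1 := prof_eq_one m x (by exact_mod_cast hx.1) (by exact_mod_cast hx.2.le)
    unfold tent
    rw [this]
    simp
  have hpot : (8 : ℝ) / 2 ^ m < ∑' x : ℤ, W x * ‖tent m x‖ ^ 2 := by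
    calc (8:ℝ)/2^m < ∑ x ∈ Finset.Ico (4 * 2 ^ m : ℤ) (8 * 2 ^ m), W x := hbig
      _ = ∑ x ∈ Finset.Ico (4 * 2 ^ m : ℤ) (8 * 2 ^ m), W x * ‖tent m x‖ ^ 2 :=
          (Finset.sum_congr rfl hplateau).symm
      _ ≤ ∑' x : ℤ, W x * ‖tent m x‖ ^ 2 :=
          Summable.sum_le_tsum _ (fun x _ => mul_nonneg (hW0 x) (by positivity)) hsumm
  unfold latticeForm1D
  have : (6:ℝ)/2^m - 8/2^m < 0 := by
    rw [div_sub_div_same]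
    apply div_neg_of_neg_of_pos (by norm_num) hL
  linarith

lemma form_comp_neg (V : ℤ → ℝ) (Φ : ℤ → ℂ) :
    latticeForm1D V (fun x => Φ (-x)) = latticeForm1D (fun x => V (-x)) Φ := by
  unfold latticeForm1D
  congr 1
  · let e : ℤ ≃ ℤ := Function.Involutive.toPerm (fun x => -x - 1) (fun x => by dsimp only; ring)
    have key : (∑' x : ℤ, ‖Φ (e x + 1) - Φ (e x)‖ ^ 2) = ∑' y : ℤ, ‖Φ (y + 1) - Φ y‖ ^ 2 :=
      e.tsum_eq (fun y => ‖Φ (y + 1) - Φ y‖ ^ 2)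
    rw [← key]
    apply tsum_congr
    intro x
    have he : e x = -x - 1 := rfl
    simp only [he]
    rw [show (-x - 1 + 1 : ℤ) = -x from by ring, show (-(x + 1) : ℤ) = -x - 1 from by ring,
      norm_sub_rev]
  · have key : (∑' x : ℤ, V (-((Equiv.neg ℤ) x)) * ‖Φ ((Equiv.neg ℤ) x)‖ ^ 2)
        = ∑' y : ℤ, V (-y) * ‖Φ y‖ ^ 2 := (Equiv.neg ℤ).tsum_eq (fun y => V (-y) * ‖Φ y‖ ^ 2)
    rw [← key]
    apply tsum_congr
    intro x
    simp

lemma sum_Ico_cast (W : ℤ → ℝ) (a b : ℕ) :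
    ∑ i ∈ Finset.Ico a b, W (i : ℤ) = ∑ x ∈ Finset.Ico (a : ℤ) (b : ℤ), W x := by
  refine Finset.sum_nbij' (fun i => (i : ℤ)) (fun x => x.toNat) ?_ ?_ ?_ ?_ ?_ <;>
      intro t ht <;> simp only [Finset.mem_Ico] at * <;> omega

lemma range_split (g : ℕ → ℝ) (K : ℕ) :
    ∑ i ∈ Finset.range (4 * 2 ^ K), g i
      = ∑ i ∈ Finset.range 4, g i
        + ∑ m ∈ Finset.range K, ∑ i ∈ Finset.Ico (4 * 2 ^ m) (8 * 2 ^ m), g i := by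
  induction K with
  | zero => simp
  | succ K ih =>
      have hle : 4 * 2 ^ K ≤ 8 * 2 ^ K := Nat.mul_le_mul (by norm_num) (le_refl _)
      calc ∑ i ∈ Finset.range (4 * 2 ^ (K + 1)), g i
          = ∑ i ∈ Finset.Ico 0 (4 * 2 ^ K), g i
            + ∑ i ∈ Finset.Ico (4 * 2 ^ K) (8 * 2 ^ K), g i := by
            rw [Finset.sum_Ico_consecutive g (Nat.zero_le _) hle, ← Finset.range_eq_Ico,
              show 4 * 2 ^ (K + 1) = 8 * 2 ^ K from by ring]
        _ = ∑ i ∈ Finset.range 4, g i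
            + ∑ m ∈ Finset.range (K + 1), ∑ i ∈ Finset.Ico (4 * 2 ^ m) (8 * 2 ^ m), g i := by
            rw [← Finset.range_eq_Ico, ih, Finset.sum_range_succ _ K]
            ring

/-- Core summability: shells small ⇒ weighted series over ℕ summable. -/
lemma nat_side (W : ℤ → ℝ) (hW0 : ∀ x, 0 ≤ W x) (ε : ℝ) (hε : 0 < ε) (N : ℕ)
    (hsh : ∀ m, N ≤ m → ∑ x ∈ Finset.Ico (4 * 2 ^ m : ℤ) (8 * 2 ^ m), W x ≤ 8 / 2 ^ m) :
    Summable (fun n : ℕ => (n : ℝ) * W (n : ℤ) / Real.log (1 + (n : ℝ)) ^ (1 + ε)) := by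
  set g : ℕ → ℝ := fun n => (n : ℝ) * W (n : ℤ) / Real.log (1 + (n : ℝ)) ^ (1 + ε) with hg
  have hg0 : ∀ n, 0 ≤ g n := by
    intro n
    apply div_nonneg (mul_nonneg (by positivity) (hW0 _))
    apply Real.rpow_nonneg
    apply Real.log_nonneg
    have : (0:ℝ) ≤ (n:ℝ) := by positivity
    linarith
  have hlog2 : (0:ℝ) < Real.log 2 := Real.log_pos (by norm_num)
  set c : ℝ := Real.log 2 ^ (1 + ε) with hc
  have hcpos : (0:ℝ) < c := Real.rpow_pos_of_pos hlog2 _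
  set b : ℕ → ℝ := fun m => 64 / (((m : ℝ) + 1) ^ (1 + ε) * c) with hb
  have hbpos : ∀ m, 0 ≤ b m := by
    intro m
    apply div_nonneg (by norm_num)
    apply mul_nonneg (Real.rpow_nonneg (by positivity) _) hcpos.le
  have hblock : ∀ m, N ≤ m → ∑ i ∈ Finset.Ico (4 * 2 ^ m) (8 * 2 ^ m), g i ≤ b m := by
    intro m hm
    have hL : (0:ℝ) < 2 ^ m := by positivity
    have hD0 : (0:ℝ) < ((m : ℝ) + 1) ^ (1 + ε) * c :=
      mul_pos (Real.rpow_pos_of_pos (by positivity) _) hcpos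
    have hterm : ∀ i ∈ Finset.Ico (4 * 2 ^ m) (8 * 2 ^ m),
        g i ≤ (8 * 2 ^ m / (((m : ℝ) + 1) ^ (1 + ε) * c)) * W (i : ℤ) := by
      intro i hi
      rw [Finset.mem_Ico] at hi
      have hi1 : (4 * 2 ^ m : ℝ) ≤ (i : ℝ) := by exact_mod_cast hi.1
      have hi2 : (i : ℝ) ≤ 8 * 2 ^ m := by
        have := hi.2.le; exact_mod_cast this
      have hlog : ((m : ℝ) + 1) * Real.log 2 ≤ Real.log (1 + (i : ℝ)) := by
        have h2 : (2:ℝ) ^ (m + 1) ≤ 1 + (i : ℝ) := by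
          have : (2:ℝ) ^ (m + 1) = 2 * 2 ^ m := by ring
          nlinarith
        calc ((m : ℝ) + 1) * Real.log 2 = Real.log ((2:ℝ) ^ (m + 1)) := by
              rw [Real.log_pow]; push_cast; ring
          _ ≤ Real.log (1 + (i : ℝ)) := Real.log_le_log (by positivity) h2
      have hden : ((m : ℝ) + 1) ^ (1 + ε) * c ≤ Real.log (1 + (i : ℝ)) ^ (1 + ε) := by
        rw [hc, ← Real.mul_rpow (by positivity) hlog2.le]
        exact Real.rpow_le_rpow (by positivity) hlog (by linarith)
      have hstep : g i ≤ ((8:ℝ) * 2 ^ m * W (i : ℤ)) / (((m : ℝ) + 1) ^ (1 + ε) * c) := by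
        rw [hg]
        exact div_le_div₀ (mul_nonneg (by positivity) (hW0 _))
          (mul_le_mul_of_nonneg_right hi2 (hW0 _)) hD0 hden
      calc g i ≤ ((8:ℝ) * 2 ^ m * W (i : ℤ)) / (((m : ℝ) + 1) ^ (1 + ε) * c) := hstep
        _ = (8 * 2 ^ m / (((m : ℝ) + 1) ^ (1 + ε) * c)) * W (i : ℤ) := by ring
    calc ∑ i ∈ Finset.Ico (4 * 2 ^ m) (8 * 2 ^ m), g i
        ≤ ∑ i ∈ Finset.Ico (4 * 2 ^ m : ℕ) (8 * 2 ^ m),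
            (8 * 2 ^ m / (((m : ℝ) + 1) ^ (1 + ε) * c)) * W (i : ℤ) :=
          Finset.sum_le_sum hterm
      _ = (8 * 2 ^ m / (((m : ℝ) + 1) ^ (1 + ε) * c))
            * ∑ i ∈ Finset.Ico (4 * 2 ^ m : ℕ) (8 * 2 ^ m), W (i : ℤ) := by
          rw [Finset.mul_sum]
      _ ≤ (8 * 2 ^ m / (((m : ℝ) + 1) ^ (1 + ε) * c)) * (8 / 2 ^ m) := by
          apply mul_le_mul_of_nonneg_left _ (by positivity)
          rw [sum_Ico_cast W (4 * 2 ^ m) (8 * 2 ^ m)]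
          have := hsh m hm
          exact_mod_cast this
      _ = b m := by rw [hb]; field_simp; ring
  have hbsum : Summable b := by
    have h1 : Summable (fun n : ℕ => 1 / (n : ℝ) ^ (1 + ε)) :=
      Real.summable_one_div_nat_rpow.mpr (by linarith)
    have h2 : Summable (fun n : ℕ => 1 / ((n : ℝ) + 1) ^ (1 + ε)) := by
      have := (summable_nat_add_iff 1).mpr h1
      refine this.congr fun n => ?_
      push_cast
      ring_nf
    have h3 := h2.mul_left (64 / c)
    refine h3.congr fun n => ?_
    rw [hb, div_mul_div_comm, mul_one, mul_comm]
  set T : ℝ := ∑' m, b m with hT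
  set C : ℝ := (∑ i ∈ Finset.range 4, g i)
      + (∑ m ∈ Finset.range N, ∑ i ∈ Finset.Ico (4 * 2 ^ m) (8 * 2 ^ m), g i) + T with hC
  apply summable_of_sum_range_le hg0 (c := C)
  intro n
  have hstep1 : ∑ i ∈ Finset.range n, g i ≤ ∑ i ∈ Finset.range (4 * 2 ^ n), g i := by
    apply Finset.sum_le_sum_of_subset_of_nonneg
    · apply Finset.range_subset_range.mpr
      have := Nat.lt_two_pow_self (n := n)
      omega
    · intro i _ _; exact hg0 i
  rw [range_split g n] at hstep1
  set h : ℕ → ℝ := fun m => ∑ i ∈ Finset.Ico (4 * 2 ^ m) (8 * 2 ^ m), g i with hh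
  have hh0 : ∀ m, 0 ≤ h m := fun m => Finset.sum_nonneg fun i _ => hg0 i
  have hmid : ∑ m ∈ Finset.range n, h m
      ≤ (∑ m ∈ Finset.range N, h m) + ∑ m ∈ Finset.range n, b m := by
    rw [← Finset.sum_filter_add_sum_filter_not (Finset.range n) (fun m => m < N) h]
    apply add_le_add
    · apply Finset.sum_le_sum_of_subset_of_nonneg
      · intro m hm
        simp only [Finset.mem_filter, Finset.mem_range] at *
        exact hm.2
      · intro i _ _; exact hh0 i
    · calc ∑ m ∈ (Finset.range n).filter (fun m => ¬ m < N), h m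
          ≤ ∑ m ∈ (Finset.range n).filter (fun m => ¬ m < N), b m := by
            apply Finset.sum_le_sum
            intro m hm
            simp only [Finset.mem_filter, not_lt] at hm
            exact hblock m hm.2
        _ ≤ ∑ m ∈ Finset.range n, b m := by
            apply Finset.sum_le_sum_of_subset_of_nonneg (Finset.filter_subset _ _)
            intro i _ _; exact hbpos i
  have htail : ∑ m ∈ Finset.range n, b m ≤ T :=
    Summable.sum_le_tsum _ (fun i _ => hbpos i) hbsum
  rw [hC]
  linarith

lemma shell (V : ℤ → ℝ) (hV0 : ∀ x, 0 ≤ V x) (ε : ℝ) (hε : 0 < ε)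
    (hdiv : ¬ Summable fun x : {x : ℤ // 1 ≤ |x|} =>
      |(x.1 : ℝ)| * V x.1 / Real.log (1 + |(x.1 : ℝ)|) ^ (1 + ε)) :
    ∀ N : ℕ, ∃ m, N ≤ m ∧
      ((8:ℝ) / 2 ^ m < ∑ x ∈ Finset.Ico (4 * 2 ^ m : ℤ) (8 * 2 ^ m), V x ∨
       (8:ℝ) / 2 ^ m < ∑ x ∈ Finset.Ico (4 * 2 ^ m : ℤ) (8 * 2 ^ m), V (-x)) := by
  by_contra hcon
  push_neg at hcon
  obtain ⟨N, hN⟩ := hcon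
  apply hdiv
  set f : ℤ → ℝ := fun x => |(x : ℝ)| * V x / Real.log (1 + |(x : ℝ)|) ^ (1 + ε) with hf
  have hposside : Summable (fun n : ℕ => f (n : ℤ)) := by
    have h0 := nat_side V hV0 ε hε N (fun m hm => (hN m hm).1)
    refine h0.congr fun n => ?_
    rw [hf]
    simp only
    rw [show |((n : ℤ) : ℝ)| = (n : ℝ) by push_cast; exact abs_of_nonneg (by positivity)]
  have hnegside : Summable (fun n : ℕ => f (-((n : ℤ) + 1))) := by
    have h0 := nat_side (fun x => V (-x)) (fun x => hV0 _) ε hε N (fun m hm => (hN m hm).2)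
    have h1 := (summable_nat_add_iff 1).mpr h0
    refine h1.congr fun n => ?_
    simp only [hf]
    have h2 : (-((n : ℤ) + 1)) = (-(((n + 1 : ℕ) : ℤ))) := by push_cast; ring
    rw [h2]
    have h3 : |(((-(((n + 1 : ℕ) : ℤ))) : ℤ) : ℝ)| = ((n + 1 : ℕ) : ℝ) := by
      push_cast
      rw [abs_neg, abs_of_nonneg (by positivity)]
    rw [h3]
  have hsum : Summable f := Summable.of_nat_of_neg_add_one hposside hnegside
  exact hsum.subtype {x : ℤ | 1 ≤ |x|}

/-- annulus containing the support of the `m`-th test function -/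
def ann (m : ℕ) : Set ℤ := {x : ℤ | 3 * 2 ^ m ≤ |x| ∧ |x| < 9 * 2 ^ m}

lemma ann_disjoint (j k : ℕ) (h : j + 2 ≤ k) : Disjoint (ann j) (ann k) := by
  rw [Set.disjoint_left]
  rintro x ⟨_, hx2⟩ ⟨hx3, _⟩
  have h1 : (2:ℤ) ^ (j + 2) ≤ 2 ^ k := pow_le_pow_right₀ (by norm_num) h
  have h2 : (9:ℤ) * 2 ^ j < 3 * 2 ^ k := by
    have : (2:ℤ) ^ (j + 2) = 4 * 2 ^ j := by ring
    nlinarith [pow_pos (show (0:ℤ) < 2 by norm_num) j]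
  omega

/-- recursion producing the indices -/
noncomputable def iter (F : ℕ → ℕ) : ℕ → ℕ
  | 0 => 0
  | n + 1 => F (iter F n) + 2

end InfNegAux

/-- If `Σ_{|x|≥1} |x| V(x) / ln^{1+ε}(1+|x|) = ∞`, then the one-dimensional lattice
Schrödinger operator `-Δ - V` has infinitely many negative eigenvalues: there is a
sequence of nonzero finitely supported functions with pairwise disjoint supports on
which the quadratic form is negative. -/
theorem infinitely_many_negative_eigenvalues_lattice_1d
    (V : ℤ → ℝ) (hV0 : ∀ x, 0 ≤ V x) (ε : ℝ) (hε : 0 < ε)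
    (hdiv : ¬ Summable fun x : {x : ℤ // 1 ≤ |x|} =>
      |(x.1 : ℝ)| * V x.1 / Real.log (1 + |(x.1 : ℝ)|) ^ (1 + ε)) :
    ∃ ψ : ℕ → ℤ → ℂ,
      (∀ n, ψ n ≠ 0 ∧ (Function.support (ψ n)).Finite ∧ latticeForm1D V (ψ n) < 0) ∧
      ∀ m n, m ≠ n → Disjoint (Function.support (ψ m)) (Function.support (ψ n)) := by
  classical
  have hshell := InfNegAux.shell V hV0 ε hε hdiv
  -- per-index construction
  have hexists : ∀ m : ℕ,
      ((8:ℝ) / 2 ^ m < ∑ x ∈ Finset.Ico (4 * 2 ^ m : ℤ) (8 * 2 ^ m), V x ∨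
       (8:ℝ) / 2 ^ m < ∑ x ∈ Finset.Ico (4 * 2 ^ m : ℤ) (8 * 2 ^ m), V (-x)) →
      ∃ φ : ℤ → ℂ, φ ≠ 0 ∧ (Function.support φ).Finite ∧
        Function.support φ ⊆ InfNegAux.ann m ∧ latticeForm1D V φ < 0 := by
    intro m hm
    have hfin : (↑(Finset.Ico (3 * 2 ^ m : ℤ) (9 * 2 ^ m)) : Set ℤ).Finite :=
      (Finset.Ico (3 * 2 ^ m : ℤ) (9 * 2 ^ m)).finite_toSet
    rcases hm with hm | hm
    · refine ⟨InfNegAux.tent m, ?_, ?_, ?_, InfNegAux.form_neg V hV0 m hm⟩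
      · intro h
        have := congrFun h (4 * 2 ^ m)
        rw [InfNegAux.tent_one m] at this
        simp at this
      · exact hfin.subset (InfNegAux.tent_support m)
      · intro x hx
        have h := InfNegAux.tent_support m hx
        simp only [Finset.coe_Ico, Set.mem_Ico] at h
        have hp : (0:ℤ) < 2 ^ m := pow_pos (by norm_num) m
        have hx0 : (0:ℤ) ≤ x := by linarith [h.1]
        exact ⟨by rw [abs_of_nonneg hx0]; exact h.1, by rw [abs_of_nonneg hx0]; exact h.2⟩
    · refine ⟨fun x => InfNegAux.tent m (-x), ?_, ?_, ?_, ?_⟩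
      · intro h
        have := congrFun h (-(4 * 2 ^ m))
        simp only [neg_neg] at this
        rw [InfNegAux.tent_one m] at this
        simp at this
      · have : Function.support (fun x => InfNegAux.tent m (-x))
            = Neg.neg ⁻¹' (Function.support (InfNegAux.tent m)) := rfl
        rw [this]
        exact (hfin.subset (InfNegAux.tent_support m)).preimage
          (fun a _ b _ h => neg_injective h)
      · intro x hx
        have hx' : InfNegAux.tent m (-x) ≠ 0 := hx
        have h := InfNegAux.tent_support m hx'
        simp only [Finset.coe_Ico, Set.mem_Ico] at h
        have hp : (0:ℤ) < 2 ^ m := pow_pos (by norm_num) m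
        have hx0 : x ≤ 0 := by linarith [h.1]
        exact ⟨by rw [abs_of_nonpos hx0]; exact h.1, by rw [abs_of_nonpos hx0]; exact h.2⟩
      · rw [InfNegAux.form_comp_neg V (InfNegAux.tent m)]
        exact InfNegAux.form_neg (fun x => V (-x)) (fun x => hV0 _) m hm
  have hstep : ∀ N : ℕ, ∃ m, N ≤ m ∧ ∃ φ : ℤ → ℂ, φ ≠ 0 ∧ (Function.support φ).Finite ∧
      Function.support φ ⊆ InfNegAux.ann m ∧ latticeForm1D V φ < 0 := by
    intro N
    obtain ⟨m, hm1, hm2⟩ := hshell N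
    exact ⟨m, hm1, hexists m hm2⟩
  choose F hF1 φ hφ0 hφfin hφsupp hφneg using hstep
  set A : ℕ → ℕ := InfNegAux.iter F with hA
  have hAsucc : ∀ n, A (n + 1) = F (A n) + 2 := fun n => rfl
  have hFA : ∀ n, A n ≤ F (A n) := fun n => hF1 (A n)
  have hAmono : ∀ n, A n + 2 ≤ A (n + 1) := by
    intro n
    rw [hAsucc n]
    have := hFA n
    omega
  have hgap : ∀ a b : ℕ, a < b → F (A a) + 2 ≤ F (A b) := by
    intro a b hab
    have hmono : Monotone A := monotone_nat_of_le_succ (fun n => by have := hAmono n; omega)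
    have h1 : A (a + 1) ≤ A b := hmono hab
    have h2 : A b ≤ F (A b) := hFA b
    rw [hAsucc a] at h1
    omega
  refine ⟨fun n => φ (A n), fun n => ⟨hφ0 (A n), hφfin (A n), hφneg (A n)⟩, ?_⟩
  intro a b hab
  rcases Nat.lt_or_ge a b with h | h
  · exact Set.disjoint_of_subset (hφsupp (A a)) (hφsupp (A b))
      (InfNegAux.ann_disjoint (F (A a)) (F (A b)) (hgap a b h))
  · have h' : b < a := by omega
    exact (Set.disjoint_of_subset (hφsupp (A b)) (hφsupp (A a))
      (InfNegAux.ann_disjoint (F (A b)) (F (A a)) (hgap b a h'))).symm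
end

section
/- Let V : ℝ → [0,∞) be measurable and locally integrable, let ε > 0, and suppose that ∫_{{|x|≥1}} |x| V(x) / (ln(1+|x|))^{1+ε} dx = ∞. Then there exists a sequence (ψ_n)_{n≥1} of nonzero smooth compactly supported functions ℝ → ℂ with pairwise disjoint supports such that Q_V(ψ_n) < 0 for every n; in particular, for every N there is an N-dimensional subspace of C_c^∞(ℝ) on which Q_V is negative definite. -/
open MeasureTheory
open scoped ENNReal

open Real Set Function


namespace SchrodHelper

/-- Smooth plateau: 1 on [1,4], supported in (0,5). -/
noncomputable def Phi : ℝ → ℝ := fun u => Real.smoothTransition u * Real.smoothTransition (5 - u)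

lemma Phi_contDiff : ContDiff ℝ (⊤ : ℕ∞) Phi :=
  Real.smoothTransition.contDiff.mul
    (Real.smoothTransition.contDiff.comp (contDiff_const.sub contDiff_id))

lemma Phi_nonneg (u : ℝ) : 0 ≤ Phi u :=
  mul_nonneg (Real.smoothTransition.nonneg u) (Real.smoothTransition.nonneg _)

lemma Phi_le_one (u : ℝ) : Phi u ≤ 1 := by
  have := Real.smoothTransition.le_one u
  have := Real.smoothTransition.le_one (5 - u)
  have := Real.smoothTransition.nonneg u
  have := Real.smoothTransition.nonneg (5 - u)
  unfold Phi
  calc Real.smoothTransition u * Real.smoothTransition (5 - u)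
      ≤ 1 * 1 := by
        apply mul_le_mul (Real.smoothTransition.le_one u) (Real.smoothTransition.le_one _)
          (Real.smoothTransition.nonneg _) (by norm_num)
    _ = 1 := one_mul 1

lemma Phi_eq_one {u : ℝ} (h1 : 1 ≤ u) (h4 : u ≤ 4) : Phi u = 1 := by
  unfold Phi
  rw [Real.smoothTransition.one_of_one_le h1,
    Real.smoothTransition.one_of_one_le (by linarith : (1:ℝ) ≤ 5 - u), one_mul]

lemma Phi_eq_zero {u : ℝ} (h : u ≤ 0 ∨ 5 ≤ u) : Phi u = 0 := by
  unfold Phi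
  rcases h with h | h
  · rw [Real.smoothTransition.zero_of_nonpos h, zero_mul]
  · rw [Real.smoothTransition.zero_of_nonpos (by linarith : 5 - u ≤ 0), mul_zero]

lemma Phi_support : Function.support Phi ⊆ Set.Ioo 0 5 := by
  intro u hu
  by_contra h
  simp only [Set.mem_Ioo, not_and_or, not_lt] at h
  exact hu (Phi_eq_zero (by tauto))

lemma Phi_hcs : HasCompactSupport Phi := by
  apply HasCompactSupport.intro (isCompact_Icc (a := (0:ℝ)) (b := 5))
  intro u hu
  apply Phi_eq_zero
  simp only [Set.mem_Icc, not_and_or, not_le] at hu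
  rcases hu with h | h
  · exact Or.inl h.le
  · exact Or.inr h.le

lemma derivPhi_cont : Continuous (deriv Phi) :=
  Phi_contDiff.continuous_deriv (by exact_mod_cast le_top)

lemma derivPhi_bound : ∃ M : ℝ, 0 ≤ M ∧ ∀ u : ℝ, |deriv Phi u| ≤ M := by
  obtain ⟨C, hC⟩ := (isCompact_Icc (a := (0:ℝ)) (b := 5)).exists_bound_of_continuousOn
    derivPhi_cont.continuousOn
  refine ⟨max C 0, le_max_right _ _, fun u => ?_⟩
  by_cases hu : u ∈ Set.Icc (0:ℝ) 5
  · exact le_trans (hC u hu) (le_max_left _ _)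
  · have : deriv Phi u = 0 := by
      have hsub : Function.support (deriv Phi) ⊆ tsupport Phi := support_deriv_subset
      have hts : tsupport Phi ⊆ Set.Icc 0 5 :=
        closure_minimal (Phi_support.trans Set.Ioo_subset_Icc_self) isClosed_Icc
      by_contra h
      exact hu (hts (hsub h))
    rw [this]
    simp

end SchrodHelper

namespace SchrodHelper

/-- The real plateau function for sign `σ` and scale `n`. -/
noncomputable def psi (σ : ℝ) (n : ℕ) (x : ℝ) : ℝ := Phi (3 * σ * x / 2 ^ n - 2)

/-- The block on which `psi σ n = 1`. -/
def blk (σ : ℝ) (n : ℕ) : Set ℝ := {x : ℝ | σ * x ∈ Set.Icc ((2:ℝ) ^ n) (2 ^ (n + 1))}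

lemma blk_measurable (σ : ℝ) (n : ℕ) : MeasurableSet (blk σ n) :=
  (measurable_const_mul σ) measurableSet_Icc

lemma blk_pos_eq (n : ℕ) : blk 1 n = Set.Icc ((2:ℝ) ^ n) (2 ^ (n + 1)) := by
  ext x; simp [blk]

lemma blk_neg_eq (n : ℕ) : blk (-1) n = Set.Icc (-(2:ℝ) ^ (n + 1)) (-(2:ℝ) ^ n) := by
  ext x
  simp only [blk, Set.mem_Icc, Set.mem_setOf_eq, neg_one_mul]
  constructor <;> intro h <;> constructor <;> linarith [h.1, h.2]

lemma blk_compact {σ : ℝ} (hσ : σ = 1 ∨ σ = -1) (n : ℕ) : IsCompact (blk σ n) := by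
  rcases hσ with h | h <;> subst h
  · rw [blk_pos_eq]; exact isCompact_Icc
  · rw [blk_neg_eq]; exact isCompact_Icc

lemma abs_mem_of_mem_blk {σ : ℝ} (hσ : σ = 1 ∨ σ = -1) {n : ℕ} {x : ℝ} (hx : x ∈ blk σ n) :
    (2:ℝ) ^ n ≤ |x| ∧ |x| ≤ 2 ^ (n + 1) := by
  have h1 : σ * x ∈ Set.Icc ((2:ℝ) ^ n) (2 ^ (n + 1)) := hx
  have habs : |x| = σ * x := by
    rcases hσ with h | h <;> subst h
    · rw [one_mul]
      rw [one_mul] at h1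
      exact abs_of_nonneg (le_trans (by positivity) h1.1)
    · rw [neg_one_mul]
      have := h1.1
      have hx0 : x ≤ 0 := by nlinarith [pow_pos (by norm_num : (0:ℝ) < 2) n]
      rw [abs_of_nonpos hx0]
  exact ⟨habs ▸ h1.1, habs ▸ h1.2⟩

lemma psi_eq_one {σ : ℝ} {n : ℕ} {x : ℝ} (hx : x ∈ blk σ n) : psi σ n x = 1 := by
  have h1 : σ * x ∈ Set.Icc ((2:ℝ) ^ n) (2 ^ (n + 1)) := hx
  have hp : (0:ℝ) < 2 ^ n := by positivity
  apply Phi_eq_one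
  · rw [le_sub_iff_add_le, le_div_iff₀ hp]
    have := h1.1; nlinarith
  · rw [sub_le_iff_le_add, div_le_iff₀ hp]
    have := h1.2
    have : σ * x ≤ 2 * 2 ^ n := by rw [pow_succ] at this; linarith
    nlinarith

lemma psi_support {σ : ℝ} {n : ℕ} :
    Function.support (psi σ n) ⊆ {x : ℝ | (2:ℝ) ^ n * (2/3) < σ * x ∧ σ * x < 2 ^ n * (7/3)} := by
  intro x hx
  have hp : (0:ℝ) < 2 ^ n := by positivity
  have h := Phi_support hx
  simp only [Set.mem_Ioo] at h
  constructor
  · have := h.1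
    rw [lt_sub_iff_add_lt, lt_div_iff₀ hp] at this
    nlinarith [this]
  · have := h.2
    rw [sub_lt_iff_lt_add, div_lt_iff₀ hp] at this
    nlinarith [this]

lemma psi_zero_outside {σ : ℝ} {n : ℕ} {x : ℝ}
    (hx : ¬ ((2:ℝ) ^ n * (2/3) ≤ σ * x ∧ σ * x ≤ 2 ^ n * (7/3))) : psi σ n x = 0 := by
  by_contra h
  have := psi_support (n := n) (σ := σ) h
  exact hx ⟨this.1.le, this.2.le⟩

lemma psi_hasDerivAt (σ : ℝ) (n : ℕ) (x : ℝ) :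
    HasDerivAt (psi σ n) (deriv Phi (3 * σ * x / 2 ^ n - 2) * (3 * σ / 2 ^ n)) x := by
  have hinner : HasDerivAt (fun x : ℝ => 3 * σ * x / 2 ^ n - 2) (3 * σ / 2 ^ n) x := by
    have h1 : HasDerivAt (fun x : ℝ => 3 * σ * x) (3 * σ) x := by
      simpa using (hasDerivAt_id x).const_mul (3 * σ)
    simpa using (h1.div_const ((2:ℝ) ^ n)).sub_const 2
  have hPhi : HasDerivAt Phi (deriv Phi (3 * σ * x / 2 ^ n - 2)) (3 * σ * x / 2 ^ n - 2) :=
    ((Phi_contDiff.differentiable (by simp)) _).hasDerivAt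
  exact hPhi.comp x hinner

lemma psi_deriv (σ : ℝ) (n : ℕ) (x : ℝ) :
    deriv (psi σ n) x = deriv Phi (3 * σ * x / 2 ^ n - 2) * (3 * σ / 2 ^ n) :=
  (psi_hasDerivAt σ n x).deriv

/-- The complexified test function. -/
noncomputable def psiC (σ : ℝ) (n : ℕ) : ℝ → ℂ := fun x => (psi σ n x : ℂ)

lemma psiC_deriv (σ : ℝ) (n : ℕ) (x : ℝ) :
    deriv (psiC σ n) x = ((deriv (psi σ n) x : ℝ) : ℂ) := by
  have := ((psi_hasDerivAt σ n x).ofReal_comp (z := x)).deriv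
  rw [psi_deriv]
  exact this

lemma psiC_contDiff (σ : ℝ) (n : ℕ) : ContDiff ℝ (⊤ : ℕ∞) (psiC σ n) := by
  have h1 : ContDiff ℝ (⊤ : ℕ∞) (fun x : ℝ => 3 * σ * x / 2 ^ n - 2) := by
    apply ContDiff.sub _ contDiff_const
    exact (contDiff_const.mul contDiff_id).div_const _
  exact Complex.ofRealCLM.contDiff.comp (Phi_contDiff.comp h1)

lemma psiC_support (σ : ℝ) (n : ℕ) :
    Function.support (psiC σ n) = Function.support (psi σ n) := by
  ext x
  simp [psiC, Function.mem_support, Complex.ofReal_eq_zero]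

end SchrodHelper

namespace SchrodHelper

/-- Closed support set of `psi σ n`. -/
def sSet (σ : ℝ) (n : ℕ) : Set ℝ :=
  {x : ℝ | (2:ℝ) ^ n * (2/3) ≤ σ * x ∧ σ * x ≤ 2 ^ n * (7/3)}

lemma sSet_eq {σ : ℝ} (hσ : σ = 1 ∨ σ = -1) (n : ℕ) :
    sSet σ n = Set.Icc ((2:ℝ) ^ n * (2/3)) (2 ^ n * (7/3)) ∨
    sSet σ n = Set.Icc (-((2:ℝ) ^ n * (7/3))) (-((2:ℝ) ^ n * (2/3))) := by
  rcases hσ with h | h <;> subst h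
  · left; ext x; simp [sSet]
  · right; ext x
    simp only [sSet, Set.mem_setOf_eq, Set.mem_Icc, neg_one_mul]
    constructor <;> intro h <;> exact ⟨by linarith [h.1, h.2], by linarith [h.1, h.2]⟩

lemma sSet_compact {σ : ℝ} (hσ : σ = 1 ∨ σ = -1) (n : ℕ) : IsCompact (sSet σ n) := by
  rcases sSet_eq hσ n with h | h <;> rw [h] <;> exact isCompact_Icc

lemma sSet_measurable {σ : ℝ} (hσ : σ = 1 ∨ σ = -1) (n : ℕ) : MeasurableSet (sSet σ n) :=
  (sSet_compact hσ n).measurableSet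

lemma volume_sSet {σ : ℝ} (hσ : σ = 1 ∨ σ = -1) (n : ℕ) :
    volume (sSet σ n) = ENNReal.ofReal ((2:ℝ) ^ n * (5/3)) := by
  rcases sSet_eq hσ n with h | h <;> rw [h, Real.volume_Icc] <;> congr 1 <;> ring

lemma psi_zero_outside_sSet {σ : ℝ} {n : ℕ} {x : ℝ} (hx : x ∉ sSet σ n) : psi σ n x = 0 :=
  psi_zero_outside hx

lemma blk_subset_sSet {σ : ℝ} {n : ℕ} : blk σ n ⊆ sSet σ n := by
  intro x hx
  have h1 : σ * x ∈ Set.Icc ((2:ℝ) ^ n) (2 ^ (n + 1)) := hx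
  have hp : (0:ℝ) < 2 ^ n := by positivity
  constructor
  · nlinarith [h1.1]
  · have h2 := h1.2
    rw [pow_succ] at h2
    nlinarith

lemma deriv_psi_zero_outside {σ : ℝ} {n : ℕ} {x : ℝ} (hx : x ∉ sSet σ n) :
    deriv Phi (3 * σ * x / 2 ^ n - 2) = 0 := by
  by_contra h
  have hts : tsupport Phi ⊆ Set.Icc 0 5 :=
    closure_minimal (Phi_support.trans Set.Ioo_subset_Icc_self) isClosed_Icc
  have hmem := hts (support_deriv_subset h)
  have hp : (0:ℝ) < 2 ^ n := by positivity
  apply hx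
  constructor
  · have := hmem.1
    rw [le_sub_iff_add_le, le_div_iff₀ hp] at this
    nlinarith
  · have := hmem.2
    rw [sub_le_iff_le_add, div_le_iff₀ hp] at this
    nlinarith

lemma psiC_hasCompactSupport {σ : ℝ} (hσ : σ = 1 ∨ σ = -1) (n : ℕ) :
    HasCompactSupport (psiC σ n) := by
  apply HasCompactSupport.intro (sSet_compact hσ n)
  intro x hx
  simp only [psiC, Complex.ofReal_eq_zero]
  exact psi_zero_outside_sSet hx

lemma psiC_ne_zero {σ : ℝ} (hσ : σ = 1 ∨ σ = -1) (n : ℕ) : psiC σ n ≠ 0 := by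
  intro h
  have hx : σ * (σ * (2 ^ n * (3/2))) = 2 ^ n * (3/2) := by
    rcases hσ with h1 | h1 <;> subst h1 <;> ring
  have hmem : σ * (2 ^ n * (3/2)) ∈ blk σ n := by
    simp only [blk, Set.mem_setOf_eq, hx, Set.mem_Icc, pow_succ]
    have hp : (0:ℝ) < 2 ^ n := by positivity
    constructor <;> nlinarith
  have := congrFun h (σ * (2 ^ n * (3/2)))
  rw [psiC, psi_eq_one hmem] at this
  simp at this

set_option maxHeartbeats 1000000 in
lemma block_negform (V : ℝ → ℝ) (hV0 : ∀ x, 0 ≤ V x) (hVmeas : Measurable V)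
    (hVloc : LocallyIntegrable V volume) {σ : ℝ} (hσ : σ = 1 ∨ σ = -1) (n : ℕ)
    {M : ℝ} (hM0 : 0 ≤ M) (hM : ∀ u, |deriv Phi u| ≤ M)
    (hgood : 15 * M ^ 2 / 2 ^ n < ∫ x in blk σ n, V x) :
    schrodingerForm1D V (psiC σ n) < 0 := by
  have hp : (0:ℝ) < 2 ^ n := by positivity
  -- kinetic term
  set f1 : ℝ → ℝ := fun x => ‖deriv (psiC σ n) x‖ ^ 2 with hf1def
  have hf1eq : ∀ x, f1 x = (deriv Phi (3 * σ * x / 2 ^ n - 2) * (3 * σ / 2 ^ n)) ^ 2 := by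
    intro x
    show ‖deriv (psiC σ n) x‖ ^ 2 = _
    rw [psiC_deriv, psi_deriv, Complex.norm_real, Real.norm_eq_abs, sq_abs]
  have hf1cont : Continuous f1 := by
    have : f1 = fun x => (deriv Phi (3 * σ * x / 2 ^ n - 2) * (3 * σ / 2 ^ n)) ^ 2 :=
      funext hf1eq
    rw [this]
    apply Continuous.pow
    apply Continuous.mul _ continuous_const
    exact derivPhi_cont.comp (by continuity)
  have hf1zero : ∀ x, x ∉ sSet σ n → f1 x = 0 := by
    intro x hx
    rw [hf1eq, deriv_psi_zero_outside hx, zero_mul]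
    norm_num
  have hf1cs : HasCompactSupport f1 :=
    HasCompactSupport.intro (sSet_compact hσ n) hf1zero
  have hf1int : Integrable f1 := hf1cont.integrable_of_hasCompactSupport hf1cs
  have hσsq : σ ^ 2 = 1 := by rcases hσ with h | h <;> subst h <;> norm_num
  have hf1bound : ∀ x, f1 x ≤ 9 * M ^ 2 / (2 ^ n) ^ 2 := by
    intro x
    rw [hf1eq]
    have h1 : |deriv Phi (3 * σ * x / 2 ^ n - 2)| ≤ M := hM _
    have h2 : (deriv Phi (3 * σ * x / 2 ^ n - 2)) ^ 2 ≤ M ^ 2 := by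
      rw [← sq_abs]; exact pow_le_pow_left₀ (abs_nonneg _) h1 2
    have h3 : (0:ℝ) < (2 ^ n) ^ 2 := by positivity
    calc (deriv Phi (3 * σ * x / 2 ^ n - 2) * (3 * σ / 2 ^ n)) ^ 2
        = (deriv Phi (3 * σ * x / 2 ^ n - 2)) ^ 2 * (9 * σ ^ 2) / (2 ^ n) ^ 2 := by ring
      _ = (deriv Phi (3 * σ * x / 2 ^ n - 2)) ^ 2 * 9 / (2 ^ n) ^ 2 := by rw [hσsq]; ring
      _ ≤ 9 * M ^ 2 / (2 ^ n) ^ 2 := by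
          rw [div_le_div_iff₀ h3 h3]
          nlinarith [mul_le_mul_of_nonneg_right h2 h3.le]
  have hKE : ∫ x, f1 x ≤ 15 * M ^ 2 / 2 ^ n := by
    rw [← setIntegral_eq_integral_of_forall_compl_eq_zero hf1zero]
    have h1 : ∫ x in sSet σ n, f1 x ≤ ∫ _x in sSet σ n, (9 * M ^ 2 / (2 ^ n) ^ 2) := by
      apply setIntegral_mono_on hf1int.integrableOn (integrableOn_const ?_)
        (sSet_measurable hσ n) (fun x _ => hf1bound x)
      rw [volume_sSet hσ n]
      exact ENNReal.ofReal_ne_top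
    have h2 : ∫ _x in sSet σ n, (9 * M ^ 2 / (2 ^ n) ^ 2) =
        ((2:ℝ) ^ n * (5/3)) * (9 * M ^ 2 / (2 ^ n) ^ 2) := by
      rw [setIntegral_const, measureReal_def, volume_sSet hσ n, smul_eq_mul,
        ENNReal.toReal_ofReal (by positivity)]
    rw [h2] at h1
    calc ∫ x in sSet σ n, f1 x ≤ ((2:ℝ) ^ n * (5/3)) * (9 * M ^ 2 / (2 ^ n) ^ 2) := h1
      _ = 15 * M ^ 2 / 2 ^ n := by field_simp; ring
  -- potential term
  set f2 : ℝ → ℝ := fun x => V x * ‖psiC σ n x‖ ^ 2 with hf2def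
  have hf2eq : ∀ x, f2 x = V x * (psi σ n x) ^ 2 := by
    intro x
    show V x * ‖psiC σ n x‖ ^ 2 = _
    simp only [psiC, Complex.norm_real]
    rw [Real.norm_eq_abs, sq_abs]
  have hpsicont : Continuous (psi σ n) := by
    apply Phi_contDiff.continuous.comp
    continuity
  have hf2meas : AEStronglyMeasurable f2 volume := by
    have hc : Continuous fun x => ‖psiC σ n x‖ ^ 2 :=
      ((psiC_contDiff σ n).continuous.norm).pow 2
    exact (hVmeas.mul hc.measurable).aestronglyMeasurable
  have hindint : Integrable ((sSet σ n).indicator V) := by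
    rw [integrable_indicator_iff (sSet_measurable hσ n)]
    exact hVloc.integrableOn_isCompact (sSet_compact hσ n)
  have hf2int : Integrable f2 := by
    apply hindint.mono hf2meas
    filter_upwards with x
    rw [hf2eq]
    by_cases hx : x ∈ sSet σ n
    · rw [Set.indicator_of_mem hx]
      have h01 : 0 ≤ psi σ n x := Phi_nonneg _
      have h1 : psi σ n x ≤ 1 := Phi_le_one _
      have hsq : psi σ n x ^ 2 ≤ 1 := by nlinarith
      rw [Real.norm_eq_abs, Real.norm_eq_abs,
        abs_of_nonneg (mul_nonneg (hV0 x) (sq_nonneg _)), abs_of_nonneg (hV0 x)]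
      nlinarith [hV0 x]
    · rw [Set.indicator_of_notMem hx, psi_zero_outside_sSet hx]
      simp
  have hPE : ∫ x in blk σ n, V x ≤ ∫ x, f2 x := by
    have hblkint : Integrable ((blk σ n).indicator V) := by
      rw [integrable_indicator_iff (blk_measurable σ n)]
      exact hVloc.integrableOn_isCompact (blk_compact hσ n)
    rw [← integral_indicator (blk_measurable σ n)]
    apply integral_mono hblkint hf2int
    intro x
    rw [hf2eq]
    by_cases hx : x ∈ blk σ n
    · rw [Set.indicator_of_mem hx, psi_eq_one hx]
      norm_num
    · rw [Set.indicator_of_notMem hx]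
      have h01 : 0 ≤ psi σ n x := Phi_nonneg _
      nlinarith [hV0 x]
  -- combine
  have hform : schrodingerForm1D V (psiC σ n) = (∫ x, f1 x) - ∫ x, f2 x := by
    rw [schrodingerForm1D]
    exact integral_sub hf1int hf2int
  rw [hform]
  linarith
end SchrodHelper

namespace SchrodHelper

lemma exists_dyadic {y : ℝ} (hy : 1 ≤ y) : ∃ n : ℕ, (2:ℝ) ^ n ≤ y ∧ y ≤ 2 ^ (n + 1) := by
  classical
  obtain ⟨m, hm⟩ := pow_unbounded_of_one_lt y (one_lt_two (α := ℝ))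
  have hP : ∃ k : ℕ, y < 2 ^ k := ⟨m, hm⟩
  have hk : y < 2 ^ Nat.find hP := Nat.find_spec hP
  have hk0 : Nat.find hP ≠ 0 := by
    intro h0
    rw [h0, pow_zero] at hk
    linarith
  obtain ⟨j, hj⟩ := Nat.exists_eq_succ_of_ne_zero hk0
  have hjmin : ¬ (y < 2 ^ j) := Nat.find_min hP (by omega)
  rw [hj] at hk
  exact ⟨j, not_lt.1 hjmin, hk.le⟩

lemma cover : {x : ℝ | 1 ≤ |x|} ⊆ ⋃ p : Bool × ℕ, blk (if p.1 then 1 else -1) p.2 := by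
  intro x hx
  obtain ⟨n, h1, h2⟩ := exists_dyadic (hx : 1 ≤ |x|)
  rcases le_or_gt 0 x with h | h
  · refine Set.mem_iUnion.2 ⟨(true, n), ?_⟩
    show (if true then (1:ℝ) else -1) * x ∈ Set.Icc _ _
    rw [if_pos rfl, one_mul]
    rw [abs_of_nonneg h] at h1 h2
    exact ⟨h1, h2⟩
  · refine Set.mem_iUnion.2 ⟨(false, n), ?_⟩
    show (if false then (1:ℝ) else -1) * x ∈ Set.Icc _ _
    rw [if_neg (by simp), neg_one_mul]
    rw [abs_of_neg h] at h1 h2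
    exact ⟨h1, h2⟩

lemma log_ge (n : ℕ) : ((n:ℝ) + 1) / 2 * Real.log 2 ≤ Real.log (1 + 2 ^ n) := by
  have h2 : (0:ℝ) < 2 ^ n := by positivity
  have hmax : (2:ℝ) ^ max n 1 ≤ 1 + 2 ^ n := by
    rcases Nat.eq_zero_or_pos n with h | h
    · subst h; norm_num
    · rw [max_eq_left h]
      linarith
  have hlog := Real.log_le_log (by positivity) hmax
  rw [Real.log_pow] at hlog
  have hle : ((n:ℝ) + 1) / 2 ≤ (max n 1 : ℕ) := by
    rcases Nat.eq_zero_or_pos n with h | h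
    · subst h; norm_num
    · rw [max_eq_left h]
      have : (1:ℝ) ≤ n := by exact_mod_cast h
      linarith
  calc ((n:ℝ) + 1) / 2 * Real.log 2 ≤ ((max n 1 : ℕ) : ℝ) * Real.log 2 :=
        mul_le_mul_of_nonneg_right hle (Real.log_nonneg one_le_two)
    _ ≤ Real.log (1 + 2 ^ n) := hlog

lemma log_pos' (n : ℕ) : 0 < Real.log (1 + 2 ^ n) := by
  apply Real.log_pos
  have : (0:ℝ) < 2 ^ n := by positivity
  linarith

set_option maxHeartbeats 1000000 in
lemma summable_bound (M ε : ℝ) (hε : 0 < ε) :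
    Summable (fun n : ℕ => 30 * M ^ 2 / Real.log (1 + 2 ^ n) ^ (1 + ε)) := by
  have hlog2 : (0:ℝ) < Real.log 2 := Real.log_pos one_lt_two
  have hsum : Summable (fun n : ℕ => 1 / ((n:ℝ) + 1) ^ (1 + ε)) := by
    have h1 : Summable (fun n : ℕ => 1 / (n:ℝ) ^ (1 + ε)) :=
      Real.summable_one_div_nat_rpow.mpr (by linarith)
    have h2 := (_root_.summable_nat_add_iff (f := fun n : ℕ => 1 / (n:ℝ) ^ (1 + ε)) 1).2 h1
    refine h2.congr fun n => ?_
    push_cast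
    norm_num
  refine Summable.of_nonneg_of_le (fun n => by have := log_pos' n; positivity) (fun n => ?_)
    (hsum.mul_left (30 * M ^ 2 / (Real.log 2 / 2) ^ (1 + ε)))
  have hL := log_ge n
  have hLpos := log_pos' n
  have hnpos : (0:ℝ) < (n:ℝ) + 1 := by positivity
  have hbase : (0:ℝ) < ((n:ℝ) + 1) / 2 * Real.log 2 := by positivity
  have hrpow : (((n:ℝ) + 1) / 2 * Real.log 2) ^ (1 + ε) ≤ Real.log (1 + 2 ^ n) ^ (1 + ε) :=
    Real.rpow_le_rpow hbase.le hL (by linarith)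
  have heq : (((n:ℝ) + 1) / 2 * Real.log 2) ^ (1 + ε)
      = ((n:ℝ) + 1) ^ (1 + ε) * (Real.log 2 / 2) ^ (1 + ε) := by
    rw [← Real.mul_rpow (by positivity) (by positivity)]
    congr 1
    ring
  have hfinal : 30 * M ^ 2 / Real.log (1 + 2 ^ n) ^ (1 + ε)
      ≤ 30 * M ^ 2 / ((((n:ℝ) + 1) / 2 * Real.log 2) ^ (1 + ε)) :=
    div_le_div_of_nonneg_left (by positivity) (by positivity) hrpow
  calc 30 * M ^ 2 / Real.log (1 + 2 ^ n) ^ (1 + ε)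
      ≤ 30 * M ^ 2 / ((((n:ℝ) + 1) / 2 * Real.log 2) ^ (1 + ε)) := hfinal
    _ = (30 * M ^ 2 / (Real.log 2 / 2) ^ (1 + ε)) * (1 / ((n:ℝ) + 1) ^ (1 + ε)) := by
        rw [heq]
        have h1 : ((n:ℝ) + 1) ^ (1 + ε) ≠ 0 := by positivity
        have h2 : (Real.log 2 / 2) ^ (1 + ε) ≠ (0:ℝ) := by positivity
        field_simp

end SchrodHelper

namespace SchrodHelper

def sg : Bool → ℝ := fun b => if b then 1 else -1

@[simp] lemma sg_true : sg true = 1 := rfl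
@[simp] lemma sg_false : sg false = -1 := rfl

lemma sg_cases (b : Bool) : sg b = 1 ∨ sg b = -1 := by cases b <;> simp

lemma cover' : {x : ℝ | 1 ≤ |x|} ⊆ ⋃ p : Bool × ℕ, blk (sg p.1) p.2 := by
  intro x hx
  obtain ⟨n, h1, h2⟩ := exists_dyadic (hx : 1 ≤ |x|)
  rcases le_or_gt 0 x with h | h
  · refine Set.mem_iUnion.2 ⟨(true, n), ?_⟩
    show sg true * x ∈ Set.Icc _ _
    rw [sg_true, one_mul]
    rw [abs_of_nonneg h] at h1 h2
    exact ⟨h1, h2⟩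
  · refine Set.mem_iUnion.2 ⟨(false, n), ?_⟩
    show sg false * x ∈ Set.Icc _ _
    rw [sg_false, neg_one_mul]
    rw [abs_of_neg h] at h1 h2
    exact ⟨h1, h2⟩

set_option maxHeartbeats 2000000 in
lemma good_infinite (V : ℝ → ℝ) (hV0 : ∀ x, 0 ≤ V x) (hVmeas : Measurable V)
    (hVloc : LocallyIntegrable V volume) (ε : ℝ) (hε : 0 < ε)
    (hdiv : ∫⁻ x in {x : ℝ | 1 ≤ |x|},
      ENNReal.ofReal (|x| * V x / Real.log (1 + |x|) ^ (1 + ε)) = ∞)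
    (M : ℝ) :
    ∃ b : Bool, {n : ℕ | 15 * M ^ 2 / 2 ^ n < ∫ x in blk (sg b) n, V x}.Infinite := by
  by_contra hcon
  push_neg at hcon
  set Gset : Bool → Set ℕ :=
    fun b => {n : ℕ | 15 * M ^ 2 / 2 ^ n < ∫ x in blk (sg b) n, V x} with hGdef
  have hfin : ∀ b, (Gset b).Finite := hcon
  set F : ℝ → ℝ≥0∞ :=
    fun x => ENNReal.ofReal (|x| * V x / Real.log (1 + |x|) ^ (1 + ε)) with hFdef
  set I : Bool × ℕ → ℝ≥0∞ := fun p => ∫⁻ x in blk (sg p.1) p.2, F x with hIdef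
  set a : ℕ → ℝ := fun n => 30 * M ^ 2 / Real.log (1 + 2 ^ n) ^ (1 + ε) with hadef
  have ha0 : ∀ n, 0 ≤ a n := fun n => by
    have := log_pos' n; rw [hadef]; positivity
  -- upper bound for each block integral
  have hIbound : ∀ b n, I (b, n) ≤
      ENNReal.ofReal (2 ^ (n+1) / Real.log (1 + 2 ^ n) ^ (1 + ε) *
        ∫ x in blk (sg b) n, V x) := by
    intro b n
    have hVint : IntegrableOn V (blk (sg b) n) :=
      hVloc.integrableOn_isCompact (blk_compact (sg_cases b) n)
    have hL0 := log_pos' n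
    have hc : (0:ℝ) ≤ 2 ^ (n+1) / Real.log (1 + 2 ^ n) ^ (1 + ε) := by positivity
    have step1 : I (b, n) ≤ ∫⁻ x in blk (sg b) n,
        ENNReal.ofReal (2 ^ (n+1) / Real.log (1 + 2 ^ n) ^ (1 + ε) * V x) := by
      apply setLIntegral_mono ((measurable_const.mul hVmeas).ennreal_ofReal)
      intro x hx
      apply ENNReal.ofReal_le_ofReal
      obtain ⟨habs1, habs2⟩ := abs_mem_of_mem_blk (sg_cases b) hx
      have hLx : Real.log (1 + 2 ^ n) ≤ Real.log (1 + |x|) :=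
        Real.log_le_log (by positivity) (by linarith)
      have hLrpow : Real.log (1 + 2 ^ n) ^ (1 + ε) ≤ Real.log (1 + |x|) ^ (1 + ε) :=
        Real.rpow_le_rpow hL0.le hLx (by linarith)
      have hLrpos : (0:ℝ) < Real.log (1 + 2 ^ n) ^ (1 + ε) := by positivity
      show |x| * V x / _ ≤ 2 ^ (n+1) / Real.log (1 + 2 ^ n) ^ (1 + ε) * V x
      rw [div_mul_eq_mul_div]
      exact div_le_div₀ (mul_nonneg (by positivity) (hV0 x))
        (mul_le_mul_of_nonneg_right habs2 (hV0 x)) hLrpos hLrpow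
    have step2 : (∫⁻ x in blk (sg b) n,
        ENNReal.ofReal (2 ^ (n+1) / Real.log (1 + 2 ^ n) ^ (1 + ε) * V x)) =
        ENNReal.ofReal (∫ x in blk (sg b) n,
          2 ^ (n+1) / Real.log (1 + 2 ^ n) ^ (1 + ε) * V x) :=
      (ofReal_integral_eq_lintegral_ofReal (hVint.const_mul _)
        (Filter.Eventually.of_forall (fun x => mul_nonneg hc (hV0 x)))).symm
    calc I (b, n) ≤ _ := step1
      _ = _ := step2
      _ = ENNReal.ofReal (2 ^ (n+1) / Real.log (1 + 2 ^ n) ^ (1 + ε) *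
            ∫ x in blk (sg b) n, V x) := by rw [integral_const_mul]
  have hIlt : ∀ p : Bool × ℕ, I p < ∞ :=
    fun p => lt_of_le_of_lt (hIbound p.1 p.2) ENNReal.ofReal_lt_top
  -- bad blocks
  have hbad : ∀ b n, n ∉ Gset b → I (b, n) ≤ ENNReal.ofReal (a n) := by
    intro b n hn
    have hnotgood : ∫ x in blk (sg b) n, V x ≤ 15 * M ^ 2 / 2 ^ n := not_lt.1 hn
    have hL0 := log_pos' n
    have hc : (0:ℝ) ≤ 2 ^ (n+1) / Real.log (1 + 2 ^ n) ^ (1 + ε) := by positivity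
    refine le_trans (hIbound b n) (ENNReal.ofReal_le_ofReal ?_)
    calc 2 ^ (n+1) / Real.log (1 + 2 ^ n) ^ (1 + ε) * ∫ x in blk (sg b) n, V x
        ≤ 2 ^ (n+1) / Real.log (1 + 2 ^ n) ^ (1 + ε) * (15 * M ^ 2 / 2 ^ n) :=
          mul_le_mul_of_nonneg_left hnotgood hc
      _ = a n := by
          rw [hadef]
          have h1 : (2:ℝ) ^ n ≠ 0 := by positivity
          have h2 : Real.log (1 + 2 ^ n) ^ (1 + ε) ≠ 0 := by positivity
          rw [pow_succ]
          field_simp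
          ring
  -- total sum is finite
  set GG : Set (Bool × ℕ) := {p | p.2 ∈ Gset p.1} with hGGdef
  have hGGfin : GG.Finite := by
    apply Set.Finite.subset
      (((Set.finite_singleton true).prod (hfin true)).union
        ((Set.finite_singleton false).prod (hfin false)))
    rintro ⟨b, n⟩ hp
    cases b
    · exact Or.inr ⟨rfl, hp⟩
    · exact Or.inl ⟨rfl, hp⟩
  have hsumfin : ∑' p : Bool × ℕ, I p < ∞ := by
    have hle : ∀ p : Bool × ℕ, I p ≤ GG.indicator I p + ENNReal.ofReal (a p.2) := by
      rintro ⟨b, n⟩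
      by_cases hp : (b, n) ∈ GG
      · rw [Set.indicator_of_mem hp]
        exact le_self_add
      · rw [Set.indicator_of_notMem hp, zero_add]
        exact hbad b n hp
    calc ∑' p : Bool × ℕ, I p
        ≤ ∑' p : Bool × ℕ, (GG.indicator I p + ENNReal.ofReal (a p.2)) :=
          ENNReal.tsum_le_tsum hle
      _ = (∑' p : Bool × ℕ, GG.indicator I p) +
            ∑' p : Bool × ℕ, ENNReal.ofReal (a p.2) := ENNReal.tsum_add
      _ < ∞ := by
          apply ENNReal.add_lt_top.2
          constructor
          · rw [tsum_eq_sum (s := hGGfin.toFinset)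
              (fun p hp => Set.indicator_of_notMem (by simpa using hp) I)]
            apply ENNReal.sum_lt_top.2
            intro p _
            exact lt_of_le_of_lt (Set.indicator_le_self GG I p) (hIlt p)
          · have hS : ∑' n : ℕ, ENNReal.ofReal (a n) < ∞ := by
              rw [← ENNReal.ofReal_tsum_of_nonneg ha0 (summable_bound M ε hε)]
              exact ENNReal.ofReal_lt_top
            calc ∑' p : Bool × ℕ, ENNReal.ofReal (a p.2)
                = ∑' (b : Bool) (n : ℕ), ENNReal.ofReal (a n) := ENNReal.tsum_prod'
              _ = ∑ b : Bool, ∑' n : ℕ, ENNReal.ofReal (a n) := tsum_fintype _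
              _ < ∞ := by
                  apply ENNReal.sum_lt_top.2
                  intro b _
                  exact hS
  -- contradiction with divergence
  have htot : (⊤ : ℝ≥0∞) ≤ ∑' p : Bool × ℕ, I p := by
    rw [← hdiv]
    calc ∫⁻ x in {x : ℝ | 1 ≤ |x|}, F x
        ≤ ∫⁻ x in ⋃ p : Bool × ℕ, blk (sg p.1) p.2, F x := lintegral_mono_set cover'
      _ ≤ ∑' p : Bool × ℕ, I p := lintegral_iUnion_le _ _
  exact hsumfin.ne (top_le_iff.mp htot)

end SchrodHelper

namespace SchrodHelper

lemma support_disjoint {σ : ℝ} {a b : ℕ} (hab : a + 2 ≤ b) :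
    Disjoint (Function.support (psiC σ a)) (Function.support (psiC σ b)) := by
  rw [Set.disjoint_left]
  intro x hxa hxb
  rw [psiC_support] at hxa hxb
  have ha := (psi_support hxa).2
  have hb := (psi_support hxb).1
  have h2 : (2:ℝ) ^ (a + 2) ≤ 2 ^ b := pow_le_pow_right₀ (by norm_num) hab
  rw [pow_add] at h2
  norm_num at h2
  nlinarith [pow_pos (show (0:ℝ) < 2 by norm_num) a]

end SchrodHelper


/-- If `∫_{|x|≥1} |x| V(x) / ln^{1+ε}(1+|x|) dx = ∞`, then the one-dimensional
Schrödinger operator `-d²/dx² - V` has infinitely many negative eigenvalues: there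
is a sequence of nonzero smooth compactly supported functions with pairwise disjoint
supports on which the quadratic form is negative. -/
theorem infinitely_many_negative_eigenvalues_1d
    (V : ℝ → ℝ) (hV0 : ∀ x, 0 ≤ V x) (hVmeas : Measurable V)
    (hVloc : LocallyIntegrable V volume) (ε : ℝ) (hε : 0 < ε)
    (hdiv : ∫⁻ x in {x : ℝ | 1 ≤ |x|},
      ENNReal.ofReal (|x| * V x / Real.log (1 + |x|) ^ (1 + ε)) = ∞) :
    ∃ ψ : ℕ → ℝ → ℂ,
      (∀ n, ψ n ≠ 0 ∧ ContDiff ℝ (⊤ : ℕ∞) (ψ n) ∧ HasCompactSupport (ψ n) ∧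
        schrodingerForm1D V (ψ n) < 0) ∧
      ∀ m n, m ≠ n → Disjoint (Function.support (ψ m)) (Function.support (ψ n)) := by
  obtain ⟨M, hM0, hM⟩ := SchrodHelper.derivPhi_bound
  obtain ⟨b, hGinf⟩ := SchrodHelper.good_infinite V hV0 hVmeas hVloc ε hε hdiv M
  set σ := SchrodHelper.sg b with hσdef
  have hσ : σ = 1 ∨ σ = -1 := SchrodHelper.sg_cases b
  set G : Set ℕ := {n | 15 * M ^ 2 / 2 ^ n < ∫ x in SchrodHelper.blk σ n, V x} with hGdef
  have hpar : ∃ r : ℕ, {n | n ∈ G ∧ n % 2 = r}.Infinite := by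
    by_contra h
    push_neg at h
    apply hGinf
    apply Set.Finite.subset ((h 0).union (h 1))
    intro n hn
    rcases Nat.mod_two_eq_zero_or_one n with h0 | h0
    · exact Or.inl ⟨hn, h0⟩
    · exact Or.inr ⟨hn, h0⟩
  obtain ⟨r, hFinf⟩ := hpar
  set Fs : Set ℕ := {n | n ∈ G ∧ n % 2 = r} with hFsdef
  let e : ℕ ↪ Fs := Set.Infinite.natEmbedding _ hFinf
  refine ⟨fun k => SchrodHelper.psiC σ (e k : ℕ), ?_, ?_⟩
  · intro k
    have hk : (e k : ℕ) ∈ Fs := (e k).2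
    refine ⟨SchrodHelper.psiC_ne_zero hσ _, SchrodHelper.psiC_contDiff σ _,
      SchrodHelper.psiC_hasCompactSupport hσ _, ?_⟩
    exact SchrodHelper.block_negform V hV0 hVmeas hVloc hσ _ hM0 hM hk.1
  · intro m k hmk
    have hne : (e m : ℕ) ≠ (e k : ℕ) := by
      intro h
      exact hmk (e.injective (Subtype.ext h))
    have hpm : (e m : ℕ) % 2 = r := (e m).2.2
    have hpk : (e k : ℕ) % 2 = r := (e k).2.2
    rcases lt_or_gt_of_ne hne with h | h
    · exact SchrodHelper.support_disjoint (by omega)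
    · exact (SchrodHelper.support_disjoint (σ := σ) (by omega)).symm
end
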